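/- arXiv:1401.4363 — 8 statements merged into one kernel-verified Lean document; each statement's English description precedes it below -/
import Mathlib

section
/- Let k ≥ 1 and let G be a simple graph of order n containing no path on k+2 vertices. Then the number of edges of G satisfies e(G) ≤ kn/2, with equality if and only if G is a disjoint union of copies of the complete graph K_{k+1}. -/
open Finset

def Snk (n k : ℕ) : SimpleGraph (Fin n) where
  Adj i j := i ≠ j ∧ (i.val < k ∨ j.val < k)
  symm := ⟨fun i j h => ⟨h.1.symm, h.2.symm⟩⟩
  loopless := ⟨fun i h => h.1 rfl⟩

instance SnkDec (n k : ℕ) : DecidableRel (Snk n k).Adj :=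
  fun i j => inferInstanceAs (Decidable (i ≠ j ∧ (i.val < k ∨ j.val < k)))

def signlessLaplacian {n : ℕ} (G : SimpleGraph (Fin n)) [DecidableRel G.Adj] :
    Matrix (Fin n) (Fin n) ℝ :=
  Matrix.diagonal (fun i => (G.degree i : ℝ)) + G.adjMatrix ℝ

noncomputable def qIndex {n : ℕ} (G : SimpleGraph (Fin n)) [DecidableRel G.Adj] : ℝ :=
  sSup (spectrum ℝ (signlessLaplacian G))

def HasPathOn {V : Type*} (G : SimpleGraph V) (m : ℕ) : Prop :=
  ∃ f : Fin m → V, Function.Injective f ∧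
    ∀ (i : ℕ) (h : i + 1 < m), G.Adj (f ⟨i, by omega⟩) (f ⟨i + 1, h⟩)

def HasCycleOn {V : Type*} (G : SimpleGraph V) (m : ℕ) : Prop :=
  ∃ f : ZMod m → V, Function.Injective f ∧ ∀ i, G.Adj (f i) (f (i + 1))

set_option linter.unusedSectionVars false
section Aux
variable {V : Type*} [Fintype V] [DecidableEq V] {G : SimpleGraph V} [DecidableRel G.Adj]

lemma hasPathOn_of_list {l : List V} (hnd : l.Nodup) (hch : l.Chain' G.Adj) :
    HasPathOn G l.length := by
  refine ⟨l.get, List.nodup_iff_injective_get.mp hnd, ?_⟩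
  intro i h
  exact List.isChain_iff_getElem.mp hch i (by omega)

lemma hasPathOn_of_F {m : ℕ} (F : ℕ → V) (hinj : ∀ a < m, ∀ b < m, F a = F b → a = b)
    (hadj : ∀ i, i + 1 < m → G.Adj (F i) (F (i + 1))) : HasPathOn G m :=
  ⟨fun r => F r.val, fun a b h => Fin.ext (hinj _ a.isLt _ b.isLt h), fun i h => hadj i h⟩

lemma F_of_hasPathOn {m : ℕ} (hm : 0 < m) (h : HasPathOn G m) :
    ∃ F : ℕ → V, (∀ a < m, ∀ b < m, F a = F b → a = b) ∧
      ∀ i, i + 1 < m → G.Adj (F i) (F (i + 1)) := by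
  obtain ⟨f, hinj, hadj⟩ := h
  refine ⟨fun t => f ⟨t % m, Nat.mod_lt _ hm⟩, ?_, ?_⟩
  · intro a ha b hb hfe
    have h2 : (⟨a % m, Nat.mod_lt _ hm⟩ : Fin m) = ⟨b % m, Nat.mod_lt _ hm⟩ := hinj hfe
    have h3 := congrArg Fin.val h2
    simpa [Nat.mod_eq_of_lt ha, Nat.mod_eq_of_lt hb] using h3
  · intro i h
    have h1 : (⟨i % m, Nat.mod_lt _ hm⟩ : Fin m) = ⟨i, by omega⟩ := by
      simp [Fin.mk.injEq, Nat.mod_eq_of_lt (by omega : i < m)]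
    have h2 : (⟨(i+1) % m, Nat.mod_lt _ hm⟩ : Fin m) = ⟨i+1, h⟩ := by
      simp [Fin.mk.injEq, Nat.mod_eq_of_lt h]
    show G.Adj (f ⟨i % m, _⟩) (f ⟨(i+1) % m, _⟩)
    rw [h1, h2]; exact hadj i h

lemma hasPathOn_mono {a b : ℕ} (h : b ≤ a) (ha : HasPathOn G a) : HasPathOn G b := by
  obtain ⟨f, hinj, hadj⟩ := ha
  exact ⟨f ∘ Fin.castLE h, hinj.comp (Fin.castLE_injective h),
    fun i hi => hadj i (by omega)⟩

lemma hasPathOn_map {W : Type*} {G' : SimpleGraph W} (ι : W → V) (hι : Function.Injective ι)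
    (hadj : ∀ a b, G'.Adj a b → G.Adj (ι a) (ι b)) {m : ℕ} (h : HasPathOn G' m) :
    HasPathOn G m := by
  obtain ⟨f, hinj, hfadj⟩ := h
  exact ⟨ι ∘ f, hι.comp hinj, fun i hi => hadj _ _ (hfadj i hi)⟩

lemma hasPathOn_le_card {m : ℕ} (h : HasPathOn G m) : m ≤ Fintype.card V := by
  obtain ⟨f, hinj, _⟩ := h
  simpa using Fintype.card_le_of_injective f hinj

end Aux

section Aux2
variable {V : Type*} [Fintype V] [DecidableEq V] (G : SimpleGraph V) [DecidableRel G.Adj]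

instance instDecCom (s : Finset V) : DecidableRel (G.comap (Subtype.val : {x // x ∈ s} → V)).Adj :=
  fun a b => inferInstanceAs (Decidable (G.Adj a.1 b.1))

lemma partition_degree (k : ℕ) (f : V → ℕ)
    (hf : ∀ u v, G.Adj u v ↔ u ≠ v ∧ f u = f v)
    (hc : ∀ u, (univ.filter fun v => f v = f u).card = k + 1) (u : V) :
    G.degree u = k := by
  have h1 : G.neighborFinset u = (univ.filter fun v => f v = f u).erase u := by
    ext w
    simp only [SimpleGraph.mem_neighborFinset, mem_erase, mem_filter, mem_univ, true_and]
    rw [hf]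
    constructor
    · rintro ⟨h, h2⟩; exact ⟨fun e => h e.symm, h2.symm⟩
    · rintro ⟨h, h2⟩; exact ⟨fun e => h e.symm, h2.symm⟩
  rw [SimpleGraph.degree, h1, card_erase_of_mem (by simp), hc u]
  omega

lemma partition_count (k : ℕ) (f : V → ℕ)
    (hf : ∀ u v, G.Adj u v ↔ u ≠ v ∧ f u = f v)
    (hc : ∀ u, (univ.filter fun v => f v = f u).card = k + 1) :
    2 * G.edgeFinset.card = k * Fintype.card V := by
  have := G.sum_degrees_eq_twice_card_edges
  rw [← this]
  rw [Finset.sum_congr rfl (fun u _ => partition_degree G k f hf hc u)]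
  simp [mul_comm, Finset.card_univ]

lemma induced_degree (s : Finset V) (hcl : ∀ a b, G.Adj a b → (a ∈ s ↔ b ∈ s))
    (u : {x // x ∈ s}) :
    (G.comap (Subtype.val : {x // x ∈ s} → V)).degree u = G.degree u.1 := by
  unfold SimpleGraph.degree
  apply Finset.card_bij (fun w _ => w.1)
  · intro w hw
    simp only [SimpleGraph.mem_neighborFinset] at hw ⊢
    exact hw
  · intro a _ b _ h; exact Subtype.ext h
  · intro w hw
    simp only [SimpleGraph.mem_neighborFinset] at hw
    exact ⟨⟨w, (hcl u.1 w hw).mp u.2⟩, by simpa [SimpleGraph.mem_neighborFinset] using hw, rfl⟩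

lemma induced_handshake (s : Finset V) (hcl : ∀ a b, G.Adj a b → (a ∈ s ↔ b ∈ s)) :
    2 * (G.comap (Subtype.val : {x // x ∈ s} → V)).edgeFinset.card
      = ∑ v ∈ s, G.degree v := by
  rw [← SimpleGraph.sum_degrees_eq_twice_card_edges]
  rw [Finset.sum_congr rfl (fun u _ => induced_degree G s hcl u)]
  rw [← Finset.sum_attach s (fun v => G.degree v)]
  rfl

lemma deleted_degree (v : V) (u : {x // x ∈ univ.erase v}) :
    (G.comap (Subtype.val : {x // x ∈ univ.erase v} → V)).degree u
      + (if G.Adj u.1 v then 1 else 0) = G.degree u.1 := by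
  have h1 : (G.comap (Subtype.val : {x // x ∈ univ.erase v} → V)).degree u
      = ((G.neighborFinset u.1).erase v).card := by
    unfold SimpleGraph.degree
    apply Finset.card_bij (fun w _ => w.1)
    · intro w hw
      simp only [SimpleGraph.mem_neighborFinset] at hw
      have hne : w.1 ≠ v := by
        have := w.2
        simp only [mem_erase, mem_univ, and_true] at this
        exact this
      simp only [mem_erase, SimpleGraph.mem_neighborFinset]
      exact ⟨hne, hw⟩
    · intro a _ b _ h; exact Subtype.ext h
    · intro w hw
      simp only [mem_erase, SimpleGraph.mem_neighborFinset] at hw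
      exact ⟨⟨w, by simp [mem_erase, hw.1]⟩, by simpa [SimpleGraph.mem_neighborFinset] using hw.2, rfl⟩
  rw [h1]
  unfold SimpleGraph.degree
  by_cases h : G.Adj u.1 v
  · have hm : v ∈ G.neighborFinset u.1 := by simp [SimpleGraph.mem_neighborFinset, h]
    rw [if_pos h, card_erase_of_mem hm]
    have hpos : 0 < (G.neighborFinset u.1).card := card_pos.mpr ⟨v, hm⟩
    omega
  · rw [if_neg h, Finset.erase_eq_of_notMem (by simp [SimpleGraph.mem_neighborFinset, h])]
    omega

lemma deleted_handshake (v : V) :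
    2 * G.edgeFinset.card =
      2 * (G.comap (Subtype.val : {x // x ∈ univ.erase v} → V)).edgeFinset.card
        + 2 * G.degree v := by
  have hs : ∑ u ∈ univ.erase v, G.degree u + G.degree v = ∑ u : V, G.degree u :=
    Finset.sum_erase_add _ _ (mem_univ v)
  have h2 : ∑ u ∈ univ.erase v, G.degree u
      = 2 * (G.comap (Subtype.val : {x // x ∈ univ.erase v} → V)).edgeFinset.card
        + G.degree v := by
    rw [← Finset.sum_attach (univ.erase v) (fun u => G.degree u)]
    have hd : ∀ u : {x // x ∈ univ.erase v}, G.degree u.1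
        = (G.comap (Subtype.val : {x // x ∈ univ.erase v} → V)).degree u
          + (if G.Adj u.1 v then 1 else 0) := fun u => (deleted_degree G v u).symm
    rw [Finset.sum_congr rfl (fun u _ => hd u), Finset.sum_add_distrib]
    congr 1
    · rw [← SimpleGraph.sum_degrees_eq_twice_card_edges]; rfl
    · rw [Finset.sum_attach (univ.erase v) (fun u => if G.Adj u v then 1 else 0)]
      rw [Finset.sum_erase _ (by simp)]
      have hfil : (univ.filter fun x => G.Adj x v) = G.neighborFinset v := by
        ext x; simp [SimpleGraph.mem_neighborFinset, G.adj_comm]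
      rw [← Finset.card_filter, hfil]
      rfl
  rw [← G.sum_degrees_eq_twice_card_edges, ← hs, h2]
  ring
end Aux2

lemma mod_cancel_aux {m s x y : ℕ} (hx : x < m) (hy : y < m)
    (h : (s + x) % m = (s + y) % m) : x = y := by
  have h1 : Nat.ModEq m (s + x) (s + y) := h
  have h2 : Nat.ModEq m x y := Nat.ModEq.add_left_cancel' s h1
  rwa [Nat.ModEq, Nat.mod_eq_of_lt hx, Nat.mod_eq_of_lt hy] at h2

theorem auxEG (k : ℕ) (hk : 1 ≤ k) :
    ∀ n : ℕ, ∀ (V : Type) (_ : Fintype V) (_ : DecidableEq V) (G : SimpleGraph V)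
      (_ : DecidableRel G.Adj),
      Fintype.card V = n → ¬ HasPathOn G (k+2) →
      2 * G.edgeFinset.card ≤ k * n ∧
      (2 * G.edgeFinset.card = k * n →
        ∃ f : V → ℕ, (∀ u v, G.Adj u v ↔ u ≠ v ∧ f u = f v) ∧
          ∀ u, (univ.filter fun v => f v = f u).card = k + 1) := by
  intro n
  induction n using Nat.strong_induction_on with
  | _ n IH =>
  intro V instF instD G instDR hcard hP
  rcases Nat.eq_zero_or_pos n with hn0 | hn0
  · subst hn0
    have hVempty : IsEmpty V := Fintype.card_eq_zero_iff.mp hcard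
    have he : G.edgeFinset.card = 0 := by
      have : G.edgeFinset = ∅ := Finset.eq_empty_of_isEmpty _
      simp [this]
    constructor
    · omega
    · intro _
      exact ⟨fun _ => 0, fun u => (hVempty.elim u), fun u => (hVempty.elim u)⟩
  by_cases hA : ∃ v, 2 * G.degree v ≤ k
  · -- Case A: a vertex of small degree
    obtain ⟨v, hv⟩ := hA
    set s : Finset V := univ.erase v with hs
    set G' := G.comap (Subtype.val : {x // x ∈ s} → V) with hG'
    have hcard' : Fintype.card {x // x ∈ s} = n - 1 := by
      rw [Fintype.card_coe, hs, card_erase_of_mem (mem_univ v), Finset.card_univ, hcard]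
    have hP' : ¬ HasPathOn G' (k+2) := fun h =>
      hP (hasPathOn_map Subtype.val Subtype.val_injective (fun a b h => h) h)
    obtain ⟨ih1, ih2⟩ := IH (n-1) (by omega) {x // x ∈ s} inferInstance inferInstance G' (instDecCom G s) hcard' hP'
    have hhs : 2 * G.edgeFinset.card = 2 * G'.edgeFinset.card + 2 * G.degree v :=
      deleted_handshake G v
    have hkn : k * (n-1) + k = k * n := by
      obtain ⟨n', rfl⟩ : ∃ n', n = n' + 1 := ⟨n - 1, by omega⟩
      simp [Nat.mul_succ]
    constructor
    · omega
    · intro heq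
      exfalso
      have hdeg : 2 * G.degree v = k := by omega
      have he' : 2 * G'.edgeFinset.card = k * (n-1) := by omega
      obtain ⟨f', hf', hc'⟩ := ih2 he'
      -- v has a neighbor u
      have hdpos : 0 < G.degree v := by omega
      obtain ⟨u, hu⟩ := Finset.card_pos.mp
        (by rw [G.card_neighborFinset_eq_degree]; exact hdpos)
      rw [SimpleGraph.mem_neighborFinset] at hu
      have hune : u ≠ v := (G.ne_of_adj hu).symm
      have hus : u ∈ s := by simp [hs, hune]
      set u₀ : {x // x ∈ s} := ⟨u, hus⟩ with hu₀
      set C : Finset {x // x ∈ s} := univ.filter (fun x => f' x = f' u₀) with hC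
      have hCcard : C.card = k + 1 := hc' u₀
      have hu₀C : u₀ ∈ C := by simp [hC]
      have hclique : ∀ x ∈ C, ∀ y ∈ C, x ≠ y → G'.Adj x y := by
        intro x hx y hy hxy
        rw [hf']
        simp only [hC, mem_filter] at hx hy
        exact ⟨hxy, hx.2.trans hy.2.symm⟩
      set l₀ : List {x // x ∈ s} := (C.erase u₀).toList with hl₀
      have hl₀len : l₀.length = k := by
        rw [hl₀, Finset.length_toList, card_erase_of_mem hu₀C, hCcard]
        omega
      have hl₀mem : ∀ x ∈ l₀, x ∈ C.erase u₀ := fun x hx => Finset.mem_toList.mp hx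
      set L : List V := v :: u :: (l₀.map Subtype.val) with hL
      have hLlen : L.length = k + 2 := by
        simp [hL, hl₀len]
      have htailnd : (u₀ :: l₀).Nodup := by
        refine List.Nodup.cons ?_ (Finset.nodup_toList _)
        intro hmem
        exact (Finset.notMem_erase u₀ C) (hl₀mem _ hmem)
      have htailmem : ∀ x ∈ u₀ :: l₀, x ∈ C := by
        intro x hx
        rcases List.mem_cons.mp hx with h | h
        · rw [h]; exact hu₀C
        · exact Finset.mem_of_mem_erase (hl₀mem _ h)
      have htailchain : List.Chain' G.Adj (u :: (l₀.map Subtype.val)) := by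
        have h1 : (u :: (l₀.map Subtype.val)) = (u₀ :: l₀).map Subtype.val := rfl
        rw [h1]
        apply List.Pairwise.isChain
        rw [List.pairwise_map]
        refine List.Pairwise.imp_of_mem ?_ htailnd
        intro a b ha hb hne
        exact hclique a (htailmem a ha) b (htailmem b hb) hne
      have hchain : L.Chain' G.Adj := by
        rw [hL]
        refine List.isChain_cons_cons.mpr ⟨hu, htailchain⟩
      have hnd : L.Nodup := by
        rw [hL]
        refine List.Nodup.cons ?_ ?_
        · intro hmem
          rcases List.mem_cons.mp hmem with h | h
          · exact hune h.symm
          · obtain ⟨x, hx, hxv⟩ := List.mem_map.mp h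
            have : x.1 ∈ s := x.2
            rw [hxv] at this
            simp [hs] at this
        · have : (u :: (l₀.map Subtype.val)) = (u₀ :: l₀).map Subtype.val := rfl
          rw [this]
          exact htailnd.map Subtype.val_injective
      exact hP (hLlen ▸ hasPathOn_of_list hnd hchain)
  · -- Case B
    push_neg at hA
    have hdegall : ∀ v, k + 1 ≤ 2 * G.degree v := fun v => hA v
    classical
    obtain ⟨v⟩ : Nonempty V := Fintype.card_pos_iff.mp (by omega)
    have hdv : 0 < G.degree v := by have := hdegall v; omega
    obtain ⟨u, hu⟩ := Finset.card_pos.mp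
      (by rw [G.card_neighborFinset_eq_degree]; exact hdv)
    rw [SimpleGraph.mem_neighborFinset] at hu
    have hvu : v ≠ u := G.ne_of_adj hu
    have hP2 : HasPathOn G 2 := by
      refine hasPathOn_of_F (fun t => if t = 0 then v else u) ?_ ?_
      · intro a ha b hb he
        by_cases ha0 : a = 0 <;> by_cases hb0 : b = 0
        · omega
        · rw [if_pos ha0, if_neg hb0] at he
          exact absurd he hvu
        · rw [if_neg ha0, if_pos hb0] at he
          exact absurd he.symm hvu
        · omega
      · intro i hi
        have hi' : i = 0 := by omega
        subst hi'
        simpa using hu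
    set m := Nat.findGreatest (HasPathOn G) (k+1) with hmdef
    have hm2 : 2 ≤ m := Nat.le_findGreatest (by omega) hP2
    have hm0 : 0 < m := by omega
    have hPm : HasPathOn G m := Nat.findGreatest_spec (by omega : 2 ≤ k + 1) hP2
    have hmk : m ≤ k + 1 := Nat.findGreatest_le (k+1)
    have hnotm : ¬ HasPathOn G (m+1) := by
      rcases eq_or_lt_of_le hmk with h | h
      · rw [h]; exact hP
      · exact Nat.findGreatest_is_greatest (n := k+1) (by omega) (by omega)
    obtain ⟨F, hFinj, hFadj⟩ := F_of_hasPathOn hm0 hPm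
    set R : Finset V := (range m).image F with hR
    have hcardR : R.card = m := by
      rw [hR, Finset.card_image_of_injOn, card_range]
      intro a ha b hb he
      exact hFinj a (mem_range.mp ha) b (mem_range.mp hb) he
    have hmemR : ∀ {x}, x ∈ R ↔ ∃ j, j < m ∧ F j = x := by
      intro x
      rw [hR, mem_image]
      constructor
      · rintro ⟨a, ha, rfl⟩; exact ⟨a, mem_range.mp ha, rfl⟩
      · rintro ⟨j, hj, rfl⟩; exact ⟨j, mem_range.mpr hj, rfl⟩
    -- neighbors of endpoints lie on the path
    have hend0 : ∀ u, G.Adj (F 0) u → u ∈ R := by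
      intro w hadj
      by_contra hw
      apply hnotm
      refine hasPathOn_of_F (fun t => if t = 0 then w else F (t-1)) ?_ ?_
      · intro a ha b hb he
        by_cases ha0 : a = 0 <;> by_cases hb0 : b = 0
        · omega
        · rw [if_pos ha0, if_neg hb0] at he
          exact absurd (hmemR.mpr ⟨b-1, by omega, he.symm⟩) hw
        · rw [if_neg ha0, if_pos hb0] at he
          exact absurd (hmemR.mpr ⟨a-1, by omega, he⟩) hw
        · rw [if_neg ha0, if_neg hb0] at he
          have := hFinj (a-1) (by omega) (b-1) (by omega) he
          omega
      · intro i hi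
        show G.Adj (if i = 0 then w else F (i-1)) (if i+1 = 0 then w else F (i+1-1))
        by_cases hi0 : i = 0
        · subst hi0
          simpa using hadj.symm
        · rw [if_neg hi0, if_neg (by omega : ¬ i+1 = 0)]
          have h9 := hFadj (i-1) (by omega)
          rw [show i - 1 + 1 = i by omega] at h9
          rw [show i + 1 - 1 = i by omega]
          exact h9
    have hend1 : ∀ u, G.Adj (F (m-1)) u → u ∈ R := by
      intro w hadj
      by_contra hw
      apply hnotm
      refine hasPathOn_of_F (fun t => if t < m then F t else w) ?_ ?_
      · intro a ha b hb he
        by_cases ha0 : a < m <;> by_cases hb0 : b < m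
        · rw [if_pos ha0, if_pos hb0] at he
          exact hFinj a ha0 b hb0 he
        · rw [if_pos ha0, if_neg hb0] at he
          exact absurd (hmemR.mpr ⟨a, ha0, he⟩) hw
        · rw [if_neg ha0, if_pos hb0] at he
          exact absurd (hmemR.mpr ⟨b, hb0, he.symm⟩) hw
        · omega
      · intro i hi
        show G.Adj (if i < m then F i else w) (if i+1 < m then F (i+1) else w)
        by_cases h : i + 1 < m
        · rw [if_pos (by omega), if_pos h]
          exact hFadj i h
        · rw [if_pos (by omega), if_neg h]
          rw [show i = m - 1 by omega]
          exact hadj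
    -- crossing chords
    set S := (range (m-1)).filter (fun i => G.Adj (F 0) (F (i+1))) with hS
    set T := (range (m-1)).filter (fun i => G.Adj (F (m-1)) (F i)) with hT
    have hScard : S.card = G.degree (F 0) := by
      rw [← G.card_neighborFinset_eq_degree]
      apply Finset.card_bij (fun i _ => F (i+1))
      · intro i hi
        rw [SimpleGraph.mem_neighborFinset]
        exact (mem_filter.mp hi).2
      · intro a ha b hb he
        have ha' := mem_range.mp (mem_filter.mp ha).1
        have hb' := mem_range.mp (mem_filter.mp hb).1
        have := hFinj (a+1) (by omega) (b+1) (by omega) he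
        omega
      · intro w hw
        rw [SimpleGraph.mem_neighborFinset] at hw
        obtain ⟨j, hj, hFj⟩ := hmemR.mp (hend0 w hw)
        have hj0 : j ≠ 0 := by
          intro h
          rw [h] at hFj
          exact G.ne_of_adj hw hFj
        refine ⟨j - 1, ?_, ?_⟩
        · rw [hS, mem_filter, mem_range]
          refine ⟨by omega, ?_⟩
          rw [show j - 1 + 1 = j by omega, hFj]
          exact hw
        · rw [show j - 1 + 1 = j by omega, hFj]
    have hTcard : T.card = G.degree (F (m-1)) := by
      rw [← G.card_neighborFinset_eq_degree]
      apply Finset.card_bij (fun i _ => F i)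
      · intro i hi
        rw [SimpleGraph.mem_neighborFinset]
        exact (mem_filter.mp hi).2
      · intro a ha b hb he
        have ha' := mem_range.mp (mem_filter.mp ha).1
        have hb' := mem_range.mp (mem_filter.mp hb).1
        exact hFinj a (by omega) b (by omega) he
      · intro w hw
        rw [SimpleGraph.mem_neighborFinset] at hw
        obtain ⟨j, hj, hFj⟩ := hmemR.mp (hend1 w hw)
        have hj0 : j ≠ m - 1 := by
          intro h
          rw [h] at hFj
          exact G.ne_of_adj hw hFj
        refine ⟨j, ?_, hFj⟩
        rw [hT, mem_filter, mem_range]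
        refine ⟨by omega, ?_⟩
        rw [hFj]
        exact hw
    have hST : (S ∩ T).Nonempty := by
      rw [← Finset.card_pos]
      have h1 := Finset.card_union_add_card_inter S T
      have h2 : (S ∪ T).card ≤ m - 1 := by
        refine le_trans (Finset.card_le_card ?_) (le_of_eq (card_range (m-1)))
        exact Finset.union_subset (filter_subset _ _) (filter_subset _ _)
      have h3 := hdegall (F 0)
      have h4 := hdegall (F (m-1))
      omega
    obtain ⟨i, hiST⟩ := hST
    rw [mem_inter, hS, hT, mem_filter, mem_filter, mem_range] at hiST
    obtain ⟨⟨him, hA2⟩, _, hB2⟩ := hiST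
    -- the cycle
    set σ : ℕ → ℕ := fun t => if t ≤ i then t else m + i - t with hσ
    have hσlt : ∀ t, t < m → σ t < m := by
      intro t ht
      simp only [hσ]
      split <;> omega
    have hσinv : ∀ t, t < m → σ (σ t) = t := by
      intro t ht
      simp only [hσ]
      split_ifs <;> omega
    set c : ℕ → V := fun t => F (σ (t % m)) with hc
    have hcmod : ∀ t, c t = c (t % m) := by
      intro t
      simp only [hc, Nat.mod_mod_of_dvd t (dvd_refl m)]
    have hcR : ∀ t, c t ∈ R := fun t =>
      hmemR.mpr ⟨σ (t % m), hσlt _ (Nat.mod_lt _ hm0), rfl⟩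
    have hcinj : ∀ a, a < m → ∀ b, b < m → c a = c b → a = b := by
      intro a ha b hb he
      simp only [hc] at he
      rw [Nat.mod_eq_of_lt ha, Nat.mod_eq_of_lt hb] at he
      have h1 := hFinj _ (hσlt a ha) _ (hσlt b hb) he
      have h2 := congrArg σ h1
      rwa [hσinv a ha, hσinv b hb] at h2
    have hcadj : ∀ t, G.Adj (c t) (c (t+1)) := by
      intro t
      simp only [hc]
      have hrm : t % m < m := Nat.mod_lt _ hm0
      have hmod1 : (t+1) % m = (t % m + 1) % m := by
        rw [Nat.add_mod, Nat.mod_eq_of_lt (show 1 < m by omega)]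
      by_cases hr1 : t % m = m - 1
      · have h7 : (t+1) % m = 0 := by
          rw [hmod1, hr1, show m - 1 + 1 = m by omega, Nat.mod_self]
        rw [h7, hr1]
        have e1 : σ (m-1) = i + 1 := by simp only [hσ]; split <;> omega
        have e2 : σ 0 = 0 := by simp only [hσ]; split <;> omega
        rw [e1, e2]
        exact hA2.symm
      · have h7 : (t+1) % m = t % m + 1 := by
          rw [hmod1, Nat.mod_eq_of_lt (by omega)]
        rw [h7]
        by_cases hri : t % m < i
        · have e1 : σ (t % m) = t % m := by simp only [hσ]; split <;> omega
          have e2 : σ (t % m + 1) = t % m + 1 := by simp only [hσ]; split <;> omega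
          rw [e1, e2]
          exact hFadj _ (by omega)
        · by_cases hri2 : t % m = i
          · have e1 : σ (t % m) = i := by simp only [hσ]; split <;> omega
            have e2 : σ (t % m + 1) = m - 1 := by simp only [hσ]; split <;> omega
            rw [e1, e2]
            exact hB2.symm
          · have e1 : σ (t % m) = m + i - t % m := by simp only [hσ]; split <;> omega
            have e2 : σ (t % m + 1) = m + i - t % m - 1 := by simp only [hσ]; split <;> omega
            rw [e1, e2]
            have h9 := hFadj (m + i - t % m - 1) (by omega)
            rw [show m + i - t % m - 1 + 1 = m + i - t % m by omega] at h9
            exact h9.symm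
    -- R is closed under adjacency
    have hclosed1 : ∀ u b, G.Adj u b → b ∈ R → u ∈ R := by
      intro w b hadj hbR
      by_contra hw
      obtain ⟨j, hjm, hFj⟩ := hmemR.mp hbR
      have hs0m : σ j < m := hσlt j hjm
      have hcs0 : c (σ j) = b := by
        simp only [hc]
        rw [Nat.mod_eq_of_lt hs0m, hσinv j hjm, hFj]
      apply hnotm
      refine hasPathOn_of_F (fun t => if t = 0 then w else c (σ j + (t-1))) ?_ ?_
      · intro a ha b' hb' he
        by_cases ha0 : a = 0 <;> by_cases hb0 : b' = 0
        · omega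
        · rw [if_pos ha0, if_neg hb0] at he
          exact absurd (he ▸ hcR (σ j + (b'-1))) hw
        · rw [if_neg ha0, if_pos hb0] at he
          exact absurd (he ▸ hcR (σ j + (a-1))) hw
        · rw [if_neg ha0, if_neg hb0] at he
          rw [hcmod (σ j + (a-1)), hcmod (σ j + (b'-1))] at he
          have h1 := hcinj _ (Nat.mod_lt _ hm0) _ (Nat.mod_lt _ hm0) he
          have h2 := mod_cancel_aux (show a - 1 < m by omega) (show b' - 1 < m by omega) h1
          omega
      · intro i0 hi0
        show G.Adj (if i0 = 0 then w else c (σ j + (i0-1)))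
          (if i0+1 = 0 then w else c (σ j + (i0+1-1)))
        by_cases h0 : i0 = 0
        · subst h0
          simp only [if_pos rfl, if_neg (by omega : ¬ (0:ℕ)+1 = 0)]
          rw [show σ j + (0+1-1) = σ j by omega, hcs0]
          exact hadj
        · rw [if_neg h0, if_neg (by omega : ¬ i0+1 = 0)]
          rw [show σ j + (i0+1-1) = (σ j + (i0-1)) + 1 by omega]
          exact hcadj _
    have hclosed : ∀ a b, G.Adj a b → (a ∈ R ↔ b ∈ R) := fun a b hab =>
      ⟨fun ha => hclosed1 b a hab.symm ha, fun hb => hclosed1 a b hab hb⟩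
    have hnbsub : ∀ x ∈ R, G.neighborFinset x ⊆ R.erase x := by
      intro x hx w hw
      rw [SimpleGraph.mem_neighborFinset] at hw
      rw [mem_erase]
      exact ⟨(G.ne_of_adj hw).symm, hclosed1 w x hw.symm hx⟩
    have hdegR : ∀ x ∈ R, G.degree x ≤ m - 1 := by
      intro x hx
      rw [← G.card_neighborFinset_eq_degree]
      calc (G.neighborFinset x).card ≤ (R.erase x).card := card_le_card (hnbsub x hx)
        _ = m - 1 := by rw [card_erase_of_mem hx, hcardR]
    -- the rest of the graph
    have hclt : ∀ a b, G.Adj a b → (a ∈ Rᶜ ↔ b ∈ Rᶜ) := by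
      intro a b hab
      rw [Finset.mem_compl, Finset.mem_compl]
      exact not_congr (hclosed a b hab)
    set G₂ := G.comap (Subtype.val : {x // x ∈ Rᶜ} → V) with hG₂
    have hcard₂ : Fintype.card {x // x ∈ Rᶜ} = n - m := by
      rw [Fintype.card_coe, Finset.card_compl, hcardR, hcard]
    have hP₂ : ¬ HasPathOn G₂ (k+2) := fun h =>
      hP (hasPathOn_map Subtype.val Subtype.val_injective (fun a b h => h) h)
    have hmn : m ≤ n := by
      rw [← hcard]
      exact hasPathOn_le_card hPm
    obtain ⟨ih1, ih2⟩ := IH (n - m) (by omega) _ inferInstance inferInstance G₂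
      (instDecCom G Rᶜ) hcard₂ hP₂
    have hsplit : ∑ x ∈ R, G.degree x + ∑ x ∈ Rᶜ, G.degree x = ∑ x, G.degree x :=
      Finset.sum_add_sum_compl R _
    have hhsR : 2 * G.edgeFinset.card = ∑ x ∈ R, G.degree x + 2 * G₂.edgeFinset.card := by
      rw [← G.sum_degrees_eq_twice_card_edges, ← hsplit, induced_handshake G Rᶜ hclt]
    have hRsum : ∑ x ∈ R, G.degree x ≤ m * (m-1) := by
      calc ∑ x ∈ R, G.degree x ≤ R.card • (m-1) := Finset.sum_le_card_nsmul _ _ _ hdegR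
        _ = m * (m-1) := by rw [hcardR, smul_eq_mul]
    have hmul1 : m * (m-1) ≤ k * m := by
      calc m * (m-1) ≤ m * k := Nat.mul_le_mul_left m (by omega)
        _ = k * m := Nat.mul_comm m k
    have hfin : k * m + k * (n - m) = k * n := by
      rw [← Nat.mul_add, Nat.add_sub_cancel' hmn]
    constructor
    · omega
    · intro heq
      have hSS1 : ∑ x ∈ R, G.degree x = m * (m-1) := by omega
      have hSS2 : 2 * G₂.edgeFinset.card = k * (n - m) := by omega
      have hmb : m * (m-1) = k * m := by omega
      have hm1 : m = k + 1 := by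
        have h1 : m * (m-1) = m * k := by rw [hmb, Nat.mul_comm]
        have := Nat.eq_of_mul_eq_mul_left hm0 h1
        omega
      have hdeg_eq : ∀ x ∈ R, G.degree x = m - 1 := by
        intro x hx
        by_contra hne
        have hlt : G.degree x < m - 1 := lt_of_le_of_ne (hdegR x hx) hne
        have h2 : ∑ x ∈ R, G.degree x < ∑ _x ∈ R, (m-1) :=
          Finset.sum_lt_sum (fun y hy => hdegR y hy) ⟨x, hx, hlt⟩
        rw [Finset.sum_const, hcardR, smul_eq_mul] at h2
        omega
      have hcomp : ∀ x ∈ R, ∀ y ∈ R, x ≠ y → G.Adj x y := by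
        intro x hx y hy hxy
        have hcc : (R.erase x).card ≤ (G.neighborFinset x).card := by
          rw [G.card_neighborFinset_eq_degree, hdeg_eq x hx, card_erase_of_mem hx, hcardR]
        have hEq := Finset.eq_of_subset_of_card_le (hnbsub x hx) hcc
        have hy' : y ∈ G.neighborFinset x := by
          rw [hEq]
          exact mem_erase.mpr ⟨hxy.symm, hy⟩
        rwa [SimpleGraph.mem_neighborFinset] at hy'
      obtain ⟨f₂, hf₂, hc₂⟩ := ih2 hSS2
      refine ⟨fun x => if hx : x ∈ R then 0 else f₂ ⟨x, Finset.mem_compl.mpr hx⟩ + 1, ?_, ?_⟩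
      · intro a b
        by_cases haR : a ∈ R <;> by_cases hbR : b ∈ R
        · simp only [dif_pos haR, dif_pos hbR]
          constructor
          · intro h
            exact ⟨G.ne_of_adj h, trivial⟩
          · rintro ⟨hne, _⟩
            exact hcomp a haR b hbR hne
        · simp only [dif_pos haR, dif_neg hbR]
          constructor
          · intro h
            exact absurd ((hclosed a b h).mp haR) hbR
          · rintro ⟨hne, he⟩
            omega
        · simp only [dif_neg haR, dif_pos hbR]
          constructor
          · intro h
            exact absurd ((hclosed a b h).mpr hbR) haR
          · rintro ⟨hne, he⟩
            omega
        · simp only [dif_neg haR, dif_neg hbR]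
          constructor
          · intro h
            have h2 : G₂.Adj ⟨a, Finset.mem_compl.mpr haR⟩ ⟨b, Finset.mem_compl.mpr hbR⟩ := h
            rw [hf₂] at h2
            refine ⟨fun he => h2.1 (Subtype.ext he), by omega⟩
          · rintro ⟨hne, he⟩
            have h2 : f₂ ⟨a, Finset.mem_compl.mpr haR⟩ = f₂ ⟨b, Finset.mem_compl.mpr hbR⟩ := by
              omega
            exact (hf₂ _ _).mpr ⟨fun hc => hne (congrArg Subtype.val hc), h2⟩
      · intro x
        by_cases hxR : x ∈ R
        · have hfe : (univ.filter fun y =>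
              (if hy : y ∈ R then 0 else f₂ ⟨y, Finset.mem_compl.mpr hy⟩ + 1)
              = (if hx : x ∈ R then 0 else f₂ ⟨x, Finset.mem_compl.mpr hx⟩ + 1)) = R := by
            ext y
            simp only [mem_filter, mem_univ, true_and]
            rw [dif_pos hxR]
            by_cases hyR : y ∈ R
            · rw [dif_pos hyR]
              simp [hyR]
            · rw [dif_neg hyR]
              simp [hyR]
          rw [hfe, hcardR, hm1]
        · have hbij : (univ.filter fun y : {z // z ∈ Rᶜ} =>
              f₂ y = f₂ ⟨x, Finset.mem_compl.mpr hxR⟩).card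
              = (univ.filter fun y =>
              (if hy : y ∈ R then 0 else f₂ ⟨y, Finset.mem_compl.mpr hy⟩ + 1)
              = (if hx : x ∈ R then 0 else f₂ ⟨x, Finset.mem_compl.mpr hx⟩ + 1)).card := by
            apply Finset.card_bij (fun y _ => y.1)
            · intro y hy
              rw [mem_filter] at hy
              rw [mem_filter]
              refine ⟨mem_univ _, ?_⟩
              have hyR : y.1 ∉ R := Finset.mem_compl.mp y.2
              rw [dif_neg hyR, dif_neg hxR]
              have : (⟨y.1, Finset.mem_compl.mpr hyR⟩ : {z // z ∈ Rᶜ}) = y := Subtype.ext rfl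
              rw [this, hy.2]
            · intro a _ b _ h
              exact Subtype.ext h
            · intro z hz
              rw [mem_filter, dif_neg hxR] at hz
              have hzR : z ∉ R := by
                intro hzR
                rw [dif_pos hzR] at hz
                omega
              rw [dif_neg hzR] at hz
              refine ⟨⟨z, Finset.mem_compl.mpr hzR⟩, ?_, rfl⟩
              rw [mem_filter]
              exact ⟨mem_univ _, by omega⟩
          rw [← hbij, hc₂]


theorem stmt0 {n k : ℕ} (hk : 1 ≤ k) (G : SimpleGraph (Fin n)) [DecidableRel G.Adj]
    (hP : ¬ HasPathOn G (k + 2)) :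
    (G.edgeFinset.card : ℝ) ≤ k * n / 2 ∧
      ((G.edgeFinset.card : ℝ) = k * n / 2 ↔
        ∃ f : Fin n → ℕ, (∀ u v, G.Adj u v ↔ u ≠ v ∧ f u = f v) ∧
          ∀ u, (Finset.univ.filter fun v => f v = f u).card = k + 1) := by
  obtain ⟨h1, h2⟩ := auxEG k hk n (Fin n) inferInstance inferInstance G inferInstance
    (Fintype.card_fin n) hP
  constructor
  · rw [le_div_iff₀ (by norm_num : (0:ℝ) < 2)]
    calc (G.edgeFinset.card : ℝ) * 2 = ((2 * G.edgeFinset.card : ℕ) : ℝ) := by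
          push_cast; ring
      _ ≤ ((k * n : ℕ) : ℝ) := by exact_mod_cast h1
      _ = (k : ℝ) * n := by push_cast; ring
  · constructor
    · intro he
      apply h2
      have : (G.edgeFinset.card : ℝ) * 2 = (k : ℝ) * n := by
        rw [he]; ring
      exact_mod_cast (by push_cast at this ⊢; linarith : ((2 * G.edgeFinset.card : ℕ) : ℝ) = ((k * n : ℕ) : ℝ))
    · rintro ⟨f, hf, hc⟩
      have := partition_count G k f hf hc
      rw [Fintype.card_fin] at this
      have h3 : ((2 * G.edgeFinset.card : ℕ) : ℝ) = ((k * n : ℕ) : ℝ) := by rw [this]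
      push_cast at h3
      linarith
end

section
/- For every simple graph G, the largest eigenvalue q(G) of the signless Laplacian Q(G) satisfies q(G) ≤ max over vertices u of [ d(u) + (1/d(u)) · Σ_{v ∈ Γ(u)} d(v) ], where the maximum is over vertices u of positive degree (and q(G) = 0 if G has no edges). -/
open Finset

lemma exists_eigvec {n : ℕ} (A : Matrix (Fin n) (Fin n) ℝ) {μ : ℝ}
    (h : μ ∈ spectrum ℝ A) : ∃ x : Fin n → ℝ, x ≠ 0 ∧ A.mulVec x = μ • x := by
  rw [← AlgEquiv.spectrum_eq (Matrix.toLinAlgEquiv (Pi.basisFun ℝ (Fin n)))] at h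
  obtain ⟨x, hx⟩ := (Module.End.hasEigenvalue_iff_mem_spectrum.mpr h).exists_hasEigenvector
  refine ⟨x, hx.2, ?_⟩
  have := hx.1
  rw [Module.End.mem_eigenspace_iff] at this
  funext i
  have := congrFun this i
  simpa [Matrix.toLinAlgEquiv_apply, Pi.basisFun_apply, Pi.basisFun_repr, Pi.single_apply, mul_comm,
    show ⇑((Pi.basisFun ℝ (Fin n)).repr x) = x from funext fun j => by simp] using this

lemma sl_herm {n : ℕ} (G : SimpleGraph (Fin n)) [DecidableRel G.Adj] :
    (signlessLaplacian G).IsHermitian := by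
  ext i j
  simp [signlessLaplacian, Matrix.conjTranspose_apply, Matrix.diagonal_apply,
    SimpleGraph.adjMatrix_apply, G.adj_comm]
  by_cases h : i = j <;> simp [h, eq_comm]
  subst h; rfl

lemma sl_mulVec {n : ℕ} (G : SimpleGraph (Fin n)) [DecidableRel G.Adj] (x : Fin n → ℝ) (u : Fin n) :
    (signlessLaplacian G).mulVec x u
      = (G.degree u : ℝ) * x u + ∑ v ∈ G.neighborFinset u, x v := by
  simp [signlessLaplacian, Matrix.add_mulVec, Matrix.mulVec_diagonal,
    SimpleGraph.adjMatrix_mulVec_apply, Pi.add_apply]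

lemma qIndex_mem {n : ℕ} (hn : 0 < n) (G : SimpleGraph (Fin n)) [DecidableRel G.Adj] :
    qIndex G ∈ spectrum ℝ (signlessLaplacian G) := by
  have herm := sl_herm G
  have hne : (spectrum ℝ (signlessLaplacian G)).Nonempty :=
    ⟨_, herm.eigenvalues_mem_spectrum_real ⟨0, hn⟩⟩
  exact Set.Nonempty.csSup_mem hne (Matrix.finite_spectrum _)

theorem stmt3 {n : ℕ} (G : SimpleGraph (Fin n)) [DecidableRel G.Adj] :
    (G.edgeFinset.Nonempty →
      ∃ u, 0 < G.degree u ∧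
        qIndex G ≤ (G.degree u : ℝ) +
          (1 / (G.degree u : ℝ)) * ∑ v ∈ G.neighborFinset u, (G.degree v : ℝ)) ∧
    (G.edgeFinset = ∅ → qIndex G = 0) := by
  constructor
  · intro hne
    obtain ⟨e, he⟩ := hne
    rw [SimpleGraph.mem_edgeFinset] at he
    obtain ⟨a, b, hab⟩ : ∃ a b, G.Adj a b := by
      induction e using Sym2.ind with
      | _ a b => exact ⟨a, b, he⟩
    have ha : 0 < G.degree a := by
      rw [← SimpleGraph.card_neighborFinset_eq_degree, Finset.card_pos]
      exact ⟨b, (SimpleGraph.mem_neighborFinset G a b).mpr hab⟩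
    set q := qIndex G with hqdef
    obtain ⟨x, hx0, hxe⟩ := exists_eigvec _ (qIndex_mem a.pos G)
    have key : ∀ u, (G.degree u : ℝ) * x u + ∑ v ∈ G.neighborFinset u, x v = q * x u := by
      intro u
      have := congrFun hxe u
      rw [sl_mulVec] at this
      simpa [Pi.smul_apply, smul_eq_mul] using this
    set d' : Fin n → ℝ := fun u => max (G.degree u : ℝ) 1 with hd'def
    have hd'pos : ∀ u, 0 < d' u := fun u => lt_of_lt_of_le one_pos (le_max_right _ _)
    set y : Fin n → ℝ := fun u => x u / d' u with hydef
    have hxy : ∀ u, x u = d' u * y u := fun u => by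
      simp only [hydef]
      field_simp [(hd'pos u).ne']
    obtain ⟨u, -, hu⟩ := Finset.exists_max_image Finset.univ (fun u => |y u|) ⟨a, mem_univ a⟩
    have hyu : 0 < |y u| := by
      obtain ⟨w, hw⟩ := Function.ne_iff.mp hx0
      have : y w ≠ 0 := by
        simp only [hydef]
        exact div_ne_zero hw (ne_of_gt (hd'pos w))
      exact lt_of_lt_of_le (abs_pos.mpr this) (hu w (mem_univ w))
    rcases le_or_gt q 0 with hq0 | hq0
    · refine ⟨a, ha, le_trans hq0 ?_⟩
      positivity
    -- main case
    have hkey : q * d' u * y u = (G.degree u : ℝ) * (d' u * y u)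
        + ∑ v ∈ G.neighborFinset u, d' v * y v := by
      have := key u
      rw [hxy u] at this
      calc q * d' u * y u = q * (d' u * y u) := by ring
        _ = (G.degree u : ℝ) * (d' u * y u) + ∑ v ∈ G.neighborFinset u, x v := this.symm
        _ = _ := by rw [Finset.sum_congr rfl (fun v _ => hxy v)]
    have hbound : q * d' u ≤ (G.degree u : ℝ) * d' u + ∑ v ∈ G.neighborFinset u, d' v := by
      have h1 : q * d' u * |y u| ≤ ((G.degree u : ℝ) * d' u + ∑ v ∈ G.neighborFinset u, d' v) * |y u| := by
        calc q * d' u * |y u| = |q * d' u * y u| := by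
              rw [abs_mul, abs_of_pos (mul_pos hq0 (hd'pos u))]
          _ ≤ (G.degree u : ℝ) * d' u * |y u| + ∑ v ∈ G.neighborFinset u, d' v * |y v| := by
              rw [hkey]
              refine le_trans (abs_add_le _ _) (add_le_add ?_ ?_)
              · exact le_of_eq (by
                  rw [abs_mul, abs_mul, abs_of_nonneg
                    (by positivity : (0:ℝ) ≤ (G.degree u : ℝ)), abs_of_pos (hd'pos u)]
                  ring)
              · refine le_trans (Finset.abs_sum_le_sum_abs _ _) ?_
                refine Finset.sum_le_sum fun v _ => ?_
                rw [abs_mul, abs_of_pos (hd'pos v)]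
          _ ≤ (G.degree u : ℝ) * d' u * |y u| + ∑ v ∈ G.neighborFinset u, d' v * |y u| := by
              refine add_le_add_right (Finset.sum_le_sum fun v _ => ?_) _
              exact mul_le_mul_of_nonneg_left (hu v (mem_univ v)) (le_of_lt (hd'pos v))
          _ = ((G.degree u : ℝ) * d' u + ∑ v ∈ G.neighborFinset u, d' v) * |y u| := by
              rw [add_mul, Finset.sum_mul]
      exact le_of_mul_le_mul_right h1 hyu
    have hdu : 0 < G.degree u := by
      by_contra hdu
      have hdu0 : G.degree u = 0 := Nat.eq_zero_of_not_pos hdu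
      have hΓ : G.neighborFinset u = ∅ := by
        rw [← Finset.card_eq_zero, SimpleGraph.card_neighborFinset_eq_degree]; exact hdu0
      rw [hdu0, hΓ] at hbound
      simp at hbound
      have : d' u = 1 := by simp [hd'def, hdu0]
      rw [this] at hbound
      linarith
    refine ⟨u, hdu, ?_⟩
    have hd'u : d' u = (G.degree u : ℝ) := by
      simp [hd'def]
      exact_mod_cast hdu
    have hsum : ∑ v ∈ G.neighborFinset u, d' v = ∑ v ∈ G.neighborFinset u, (G.degree v : ℝ) := by
      refine Finset.sum_congr rfl fun v hv => ?_
      have : 0 < G.degree v := by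
        rw [← SimpleGraph.card_neighborFinset_eq_degree, Finset.card_pos]
        exact ⟨u, (SimpleGraph.mem_neighborFinset G v u).mpr
          (G.symm.symm _ _ ((SimpleGraph.mem_neighborFinset G u v).mp hv))⟩
      simp [hd'def]
      exact_mod_cast this
    rw [hd'u, hsum] at hbound
    have hdpos : (0:ℝ) < (G.degree u : ℝ) := by exact_mod_cast hdu
    rw [← mul_le_mul_iff_of_pos_right hdpos]
    calc q * (G.degree u : ℝ) ≤ (G.degree u : ℝ) * (G.degree u : ℝ)
          + ∑ v ∈ G.neighborFinset u, (G.degree v : ℝ) := hbound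
      _ = ((G.degree u : ℝ) + 1 / (G.degree u : ℝ) * ∑ v ∈ G.neighborFinset u, (G.degree v : ℝ))
          * (G.degree u : ℝ) := by field_simp
  · intro h
    have hadj : ∀ u v, ¬ G.Adj u v := by
      intro u v huv
      have : s(u, v) ∈ G.edgeFinset := by
        rw [SimpleGraph.mem_edgeFinset]; exact huv
      simp [h] at this
    have hdeg : ∀ u, G.degree u = 0 := by
      intro u
      rw [← SimpleGraph.card_neighborFinset_eq_degree, Finset.card_eq_zero,
        Finset.eq_empty_iff_forall_notMem]
      intro v hv
      exact hadj u v ((SimpleGraph.mem_neighborFinset G u v).mp hv)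
    have hQ : signlessLaplacian G = 0 := by
      ext i j
      simp [signlessLaplacian, Matrix.diagonal_apply, hdeg, hadj i j]
    rw [qIndex, hQ]
    rcases Nat.eq_zero_or_pos n with h0 | h0
    · subst h0
      have : spectrum ℝ (0 : Matrix (Fin 0) (Fin 0) ℝ) = ∅ := by
        ext μ; simp [spectrum.mem_iff, isUnit_of_subsingleton]
      rw [this, Real.sSup_empty]
    · haveI : Nonempty (Fin n) := ⟨⟨0, h0⟩⟩
      rw [spectrum.zero_eq, csSup_singleton]
end

section
/- If G is a simple graph with n ≥ 2 vertices and m edges, then the largest signless Laplacian eigenvalue satisfies q(G) ≤ 2m/(n−1) + n − 2. -/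
open Finset

private theorem arith4 (n t S m : ℤ) (h1 : 1 ≤ t) (h2 : t + 1 ≤ n) (h3 : S ≤ t*(n-1))
    (h4 : S + t ≤ 2*m) (h5 : 2*S + t ≤ 2*m + t^2) :
    (n-1)*(t^2 + S) ≤ t*(2*m + (n-2)*(n-1)) := by
  have key : (t-(n-1))*(t-(n-2)) ≥ 0 := by
    rcases eq_or_lt_of_le h2 with h | h
    · nlinarith
    · nlinarith
  rcases le_or_gt S (t^2) with hS | hS
  · nlinarith [mul_nonneg (by linarith : (0:ℤ) ≤ t) key,
      mul_nonneg (by linarith : (0:ℤ) ≤ n-1-t) (by linarith : (0:ℤ) ≤ t^2 - S)]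
  · rcases le_or_gt (2*t) (n-1) with ht | ht
    · nlinarith [mul_nonneg (mul_nonneg (by linarith : (0:ℤ) ≤ t) (by linarith : (0:ℤ) ≤ t-1)) (by linarith : (0:ℤ) ≤ n-1-t),
        mul_nonneg (by linarith : (0:ℤ) ≤ n-1-2*t) (by linarith : (0:ℤ) ≤ t*(n-1) - S)]
    · nlinarith [mul_nonneg (by linarith : (0:ℤ) ≤ t) key,
        mul_nonneg (by linarith : (0:ℤ) ≤ 2*t-n+1) (by linarith : (0:ℤ) ≤ S - t^2)]

/-- counting: 2*S ≤ 2*m + t*(t-1) -/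
private theorem count4 {n : ℕ} (G : SimpleGraph (Fin n)) [DecidableRel G.Adj] (u : Fin n) :
    2 * (∑ v ∈ G.neighborFinset u, G.degree v) ≤
      2 * G.edgeFinset.card + G.degree u * (G.degree u - 1) := by
  classical
  set N := G.neighborFinset u with hN
  have split : ∀ v, G.degree v = #(N.filter (G.Adj v)) + #(Nᶜ.filter (G.Adj v)) := by
    intro v
    rw [← SimpleGraph.card_neighborFinset_eq_degree, SimpleGraph.neighborFinset_eq_filter]
    rw [← Finset.union_compl N, Finset.filter_union, Finset.card_union_of_disjoint]
    exact Finset.disjoint_filter_filter disjoint_compl_right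
  have hX : ∑ v ∈ N, #(N.filter (G.Adj v)) ≤ #N * (#N - 1) := by
    calc ∑ v ∈ N, #(N.filter (G.Adj v)) ≤ ∑ v ∈ N, (#N - 1) := by
          apply Finset.sum_le_sum
          intro v hv
          have hsub : N.filter (G.Adj v) ⊆ N.erase v := by
            intro w hw
            simp only [Finset.mem_filter] at hw
            refine Finset.mem_erase.2 ⟨?_, hw.1⟩
            rintro rfl; exact G.irrefl hw.2
          calc #(N.filter (G.Adj v)) ≤ #(N.erase v) := Finset.card_le_card hsub
            _ = #N - 1 := Finset.card_erase_of_mem hv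
      _ = #N * (#N - 1) := by rw [Finset.sum_const, smul_eq_mul]
  have hY : ∑ v ∈ N, #(Nᶜ.filter (G.Adj v)) = ∑ w ∈ Nᶜ, #(N.filter (G.Adj w)) := by
    simp_rw [Finset.card_filter]
    rw [Finset.sum_comm]
    congr 1; ext w; congr 1; ext v
    simp [G.adj_comm]
  have hYB : ∑ v ∈ N, #(Nᶜ.filter (G.Adj v)) ≤ ∑ w ∈ Nᶜ, G.degree w := by
    rw [hY]
    refine Finset.sum_le_sum fun w _ => ?_
    rw [← SimpleGraph.card_neighborFinset_eq_degree, SimpleGraph.neighborFinset_eq_filter]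
    exact Finset.card_le_card (Finset.filter_subset_filter _ (Finset.subset_univ N))
  have htot : ∑ v ∈ N, G.degree v + ∑ w ∈ Nᶜ, G.degree w = 2 * G.edgeFinset.card := by
    rw [Finset.sum_add_sum_compl, SimpleGraph.sum_degrees_eq_twice_card_edges]
  have hS : ∑ v ∈ N, G.degree v
      = ∑ v ∈ N, #(N.filter (G.Adj v)) + ∑ v ∈ N, #(Nᶜ.filter (G.Adj v)) := by
    rw [← Finset.sum_add_distrib]
    exact Finset.sum_congr rfl fun v _ => split v
  have hdeg : G.degree u = #N := (SimpleGraph.card_neighborFinset_eq_degree G u).symm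
  rw [hdeg]
  omega

private theorem deCaen4 {n : ℕ} (hn : 2 ≤ n) (G : SimpleGraph (Fin n)) [DecidableRel G.Adj]
    (u : Fin n) :
    ((G.degree u : ℝ)^2 + ∑ v ∈ G.neighborFinset u, (G.degree v : ℝ)) ≤
      (2 * (G.edgeFinset.card : ℝ) / ((n : ℝ) - 1) + (n : ℝ) - 2) * (G.degree u) := by
  classical
  set t := G.degree u with ht
  set S := ∑ v ∈ G.neighborFinset u, G.degree v with hSdef
  set m := G.edgeFinset.card with hm
  have hcast : ∑ v ∈ G.neighborFinset u, (G.degree v : ℝ) = (S : ℝ) := by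
    rw [hSdef]; push_cast; ring
  rw [hcast]
  have hnpos : (0:ℝ) < (n:ℝ) - 1 := by
    have : (2:ℝ) ≤ (n:ℝ) := by exact_mod_cast hn
    linarith
  rcases Nat.eq_zero_or_pos t with ht0 | htpos
  · have hNe : G.neighborFinset u = ∅ := by
      apply Finset.card_eq_zero.mp
      rw [SimpleGraph.card_neighborFinset_eq_degree]; exact ht0
    have hS0 : S = 0 := by rw [hSdef, hNe, Finset.sum_empty]
    rw [hS0, ht0]
    norm_num
  · -- integer inequality
    have hlt : t < n := by
      have := G.degree_lt_card_verts u
      simpa [Fintype.card_fin] using this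
    have hS1 : S ≤ t * (n - 1) := by
      refine le_trans (Finset.sum_le_card_nsmul _ _ (n-1) fun v _ => ?_) ?_
      · have := G.degree_lt_card_verts v
        simp [Fintype.card_fin] at this
        omega
      · rw [SimpleGraph.card_neighborFinset_eq_degree, smul_eq_mul]
    have hS2 : S + t ≤ 2 * m := by
      have hsub : insert u (G.neighborFinset u) ⊆ Finset.univ := Finset.subset_univ _
      have hnotmem : u ∉ G.neighborFinset u := by
        simp [SimpleGraph.mem_neighborFinset]
      calc S + t = ∑ v ∈ insert u (G.neighborFinset u), G.degree v := by
            rw [Finset.sum_insert hnotmem]; omega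
        _ ≤ ∑ v, G.degree v := Finset.sum_le_sum_of_subset hsub
        _ = 2 * m := G.sum_degrees_eq_twice_card_edges
    have hS3 := count4 G u
    rw [← hSdef, ← hm, ← ht] at hS3
    have hint := arith4 (n : ℤ) (t : ℤ) (S : ℤ) (m : ℤ)
      (by exact_mod_cast htpos) (by exact_mod_cast hlt)
      (by push_cast; have : ((n:ℤ)) - 1 = ((n - 1 : ℕ) : ℤ) := by omega
          rw [this]; exact_mod_cast hS1)
      (by exact_mod_cast hS2)
      (by have e : t * (t - 1) + t = t^2 := by zify [htpos]; ring
          have h5 : 2 * S + t ≤ 2 * m + t^2 := by omega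
          exact_mod_cast h5)
    have hreal : ((n:ℝ)-1) * ((t:ℝ)^2 + (S:ℝ)) ≤ (t:ℝ) * (2*(m:ℝ) + ((n:ℝ)-2)*((n:ℝ)-1)) := by
      exact_mod_cast hint
    rw [← mul_le_mul_iff_right₀ hnpos]
    calc ((n:ℝ)-1) * ((t:ℝ)^2 + (S:ℝ)) ≤ (t:ℝ) * (2*(m:ℝ) + ((n:ℝ)-2)*((n:ℝ)-1)) := hreal
      _ = ((n:ℝ)-1) * ((2 * (m:ℝ) / ((n:ℝ)-1) + (n:ℝ) - 2) * (t:ℝ)) := by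
          field_simp
          ring

theorem stmt4 {n : ℕ} (hn : 2 ≤ n) (G : SimpleGraph (Fin n)) [DecidableRel G.Adj] :
    qIndex G ≤ 2 * (G.edgeFinset.card : ℝ) / ((n : ℝ) - 1) + (n : ℝ) - 2 := by
  classical
  set K : ℝ := 2 * (G.edgeFinset.card : ℝ) / ((n : ℝ) - 1) + (n : ℝ) - 2 with hK
  have hn2 : (2:ℝ) ≤ (n:ℝ) := by exact_mod_cast hn
  have hnpos : (0:ℝ) < (n:ℝ) - 1 := by linarith
  have hK0 : 0 ≤ K := by
    rw [hK]
    have : 0 ≤ 2 * (G.edgeFinset.card : ℝ) / ((n : ℝ) - 1) := by positivity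
    linarith
  apply Real.sSup_le _ hK0
  intro μ hμ
  -- extract eigenvector
  rw [spectrum.mem_iff, Matrix.isUnit_iff_isUnit_det, isUnit_iff_ne_zero, not_not] at hμ
  obtain ⟨v, hv0, hv⟩ := (Matrix.exists_mulVec_eq_zero_iff).2 hμ
  rw [Matrix.sub_mulVec] at hv
  have h2 : (algebraMap ℝ (Matrix (Fin n) (Fin n) ℝ) μ).mulVec v = μ • v := by
    rw [Matrix.algebraMap_eq_diagonal]
    ext i
    simp [Matrix.mulVec_diagonal]
  rw [h2] at hv
  have hev : (signlessLaplacian G).mulVec v = μ • v := (sub_eq_zero.mp hv).symm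
  set M := signlessLaplacian G with hMdef
  set y : Fin n → ℝ := fun i => |v i| with hy
  have hMapp : ∀ i j, M i j = (if i = j then (G.degree i : ℝ) else 0)
      + (if G.Adj i j then 1 else 0) := by
    intro i j
    rw [hMdef]
    simp [signlessLaplacian, Matrix.diagonal_apply, SimpleGraph.adjMatrix_apply]
  have hMnn : ∀ i j, 0 ≤ M i j := by
    intro i j
    rw [hMapp]
    split_ifs <;> positivity
  have hmv : ∀ (x : Fin n → ℝ) i, M.mulVec x i = ∑ j, M i j * x j := by
    intro x i
    simp [Matrix.mulVec, dotProduct]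
  have h1 : ∀ i, |μ| * y i ≤ M.mulVec y i := by
    intro i
    have hvi : M.mulVec v i = μ * v i := by rw [hev]; rfl
    calc |μ| * y i = |μ * v i| := by rw [hy, abs_mul]
      _ = |∑ j, M i j * v j| := by rw [← hmv, hvi]
      _ ≤ ∑ j, |M i j * v j| := Finset.abs_sum_le_sum_abs _ _
      _ = ∑ j, M i j * y j := by
          refine Finset.sum_congr rfl fun j _ => ?_
          rw [abs_mul, abs_of_nonneg (hMnn i j)]
      _ = M.mulVec y i := (hmv y i).symm
  -- column sums weighted by degrees
  have hcol : ∀ j, ∑ i, (G.degree i : ℝ) * M i j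
      = (G.degree j : ℝ)^2 + ∑ i ∈ G.neighborFinset j, (G.degree i : ℝ) := by
    intro j
    have : ∀ i, (G.degree i : ℝ) * M i j
        = (if i = j then (G.degree i : ℝ) * (G.degree i : ℝ) else 0)
          + (if G.Adj i j then (G.degree i : ℝ) else 0) := by
      intro i
      rw [hMapp]
      split_ifs <;> ring
    rw [Finset.sum_congr rfl fun i _ => this i, Finset.sum_add_distrib]
    congr 1
    · rw [Finset.sum_ite_eq' Finset.univ j (fun i => (G.degree i : ℝ) * (G.degree i : ℝ))]
      simp [sq]
    · rw [← Finset.sum_filter]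
      congr 1
      rw [SimpleGraph.neighborFinset_eq_filter]
      ext i
      simp [G.adj_comm]
  set T : ℝ := ∑ j, (G.degree j : ℝ) * y j with hT
  have hynn : ∀ j, 0 ≤ y j := fun j => abs_nonneg _
  have hTnn : 0 ≤ T := Finset.sum_nonneg fun j _ =>
    mul_nonneg (Nat.cast_nonneg _) (hynn j)
  have chain : |μ| * T ≤ K * T := by
    calc |μ| * T = ∑ i, (G.degree i : ℝ) * (|μ| * y i) := by
          rw [hT, Finset.mul_sum]; refine Finset.sum_congr rfl fun i _ => by ring
      _ ≤ ∑ i, (G.degree i : ℝ) * M.mulVec y i :=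
          Finset.sum_le_sum fun i _ =>
            mul_le_mul_of_nonneg_left (h1 i) (Nat.cast_nonneg _)
      _ = ∑ j, ((G.degree j : ℝ)^2 + ∑ i ∈ G.neighborFinset j, (G.degree i : ℝ)) * y j := by
          simp_rw [hmv, Finset.mul_sum]
          rw [Finset.sum_comm]
          refine Finset.sum_congr rfl fun j _ => ?_
          rw [← hcol j, Finset.sum_mul]
          exact Finset.sum_congr rfl fun i _ => by ring
      _ ≤ ∑ j, (K * (G.degree j : ℝ)) * y j :=
          Finset.sum_le_sum fun j _ =>
            mul_le_mul_of_nonneg_right (by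
              have := deCaen4 hn G j
              rw [← hK] at this
              exact this) (hynn j)
      _ = K * T := by
          rw [hT, Finset.mul_sum]
          exact Finset.sum_congr rfl fun j _ => by ring
  rcases hTnn.eq_or_lt with hT0 | hTpos
  · -- T = 0 : all degrees vanish on support of v, so μ = 0
    have hz : ∀ j ∈ Finset.univ, (G.degree j : ℝ) * y j = 0 :=
      (Finset.sum_eq_zero_iff_of_nonneg fun j _ =>
        mul_nonneg (Nat.cast_nonneg _) (hynn j)).mp hT0.symm
    obtain ⟨i, hvi⟩ := Function.ne_iff.mp hv0
    have hμ0 : μ * v i = 0 := by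
      have hvi2 : μ * v i = M.mulVec v i := by rw [hev]; rfl
      rw [hvi2, hmv]
      apply Finset.sum_eq_zero
      intro j _
      by_cases hvj : v j = 0
      · rw [hvj, mul_zero]
      · have hyj : 0 < y j := abs_pos.mpr hvj
        have hdj : (G.degree j : ℝ) = 0 := by
          have := hz j (Finset.mem_univ j)
          rcases mul_eq_zero.mp this with h | h
          · exact h
          · exact absurd h (ne_of_gt hyj)
        have hdj' : G.degree j = 0 := by exact_mod_cast hdj
        have hMij : M i j = 0 := by
          rw [hMapp]
          have hadj : ¬ G.Adj i j := by
            intro hadj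
            have : 0 < G.degree j := by
              rw [SimpleGraph.degree_pos_iff_exists_adj]
              exact ⟨i, hadj.symm⟩
            omega
          rcases eq_or_ne i j with rfl | hne
          · simp [hdj']
          · simp [hne, hadj]
        rw [hMij, zero_mul]
    rcases mul_eq_zero.mp hμ0 with h | h
    · rw [h]; exact hK0
    · exact absurd h hvi
  · have habs : |μ| ≤ K := le_of_mul_le_mul_right chain hTpos
    calc μ ≤ |μ| := le_abs_self μ
      _ ≤ K := habs
end

section
/- Let k ≥ 2 and n > 5k². Then the largest signless Laplacian eigenvalue of S_{n,k} satisfies q(S_{n,k}) > n + 2k − 2 − 2k(k−1)/(n+2k−3); in particular q(S_{n,k}) > n + 2k − 3. -/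
open Finset

lemma mem_spectrum_of_mulVec {n : ℕ} (M : Matrix (Fin n) (Fin n) ℝ) {μ : ℝ} {v : Fin n → ℝ}
    (hv : v ≠ 0) (h : M.mulVec v = μ • v) : μ ∈ spectrum ℝ M := by
  rw [spectrum.mem_iff]
  intro hu
  rw [Matrix.isUnit_iff_isUnit_det] at hu
  have hdet : (algebraMap ℝ (Matrix (Fin n) (Fin n) ℝ) μ - M).det = 0 := by
    rw [← Matrix.exists_mulVec_eq_zero_iff]
    refine ⟨v, hv, ?_⟩
    rw [Matrix.sub_mulVec, h, Algebra.algebraMap_eq_smul_one, Matrix.smul_mulVec,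
      Matrix.one_mulVec, sub_self]
  rw [hdet] at hu
  exact hu.ne_zero rfl

lemma card_filter_lt_k {n k : ℕ} (hkn : k ≤ n) :
    (univ.filter (fun j : Fin n => j.val < k)).card = k := by
  have : univ.filter (fun j : Fin n => j.val < k) = Finset.map (Fin.castLEEmb hkn) univ := by
    ext j
    simp only [mem_filter, mem_univ, true_and, Finset.mem_map, Fin.castLEEmb]
    constructor
    · intro hj; exact ⟨⟨j.val, hj⟩, by simp [Fin.castLE]⟩
    · rintro ⟨a, rfl⟩; exact a.isLt
  rw [this, Finset.card_map, card_univ, Fintype.card_fin]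

lemma Snk_nbr_lo {n k : ℕ} {i : Fin n} (hi : i.val < k) :
    (Snk n k).neighborFinset i = univ.erase i := by
  ext j
  simp only [SimpleGraph.mem_neighborFinset, Finset.mem_erase, mem_univ, and_true]
  simp only [Snk]
  constructor
  · intro ⟨h1, _⟩; exact h1.symm
  · intro h; exact ⟨h.symm, Or.inl hi⟩

lemma Snk_nbr_hi {n k : ℕ} {i : Fin n} (hi : k ≤ i.val) :
    (Snk n k).neighborFinset i = univ.filter (fun j : Fin n => j.val < k) := by
  ext j
  simp only [SimpleGraph.mem_neighborFinset, mem_filter, mem_univ, true_and]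
  simp only [Snk]
  constructor
  · rintro ⟨h1, h2 | h2⟩; · omega
    exact h2
  · intro h
    refine ⟨fun he => ?_, Or.inr h⟩
    rw [he] at hi; omega

lemma Snk_degree_lo {n k : ℕ} {i : Fin n} (hi : i.val < k) :
    (Snk n k).degree i = n - 1 := by
  rw [SimpleGraph.degree, Snk_nbr_lo hi, Finset.card_erase_of_mem (mem_univ i), card_univ,
    Fintype.card_fin]

lemma Snk_degree_hi {n k : ℕ} {i : Fin n} (hkn : k ≤ n) (hi : k ≤ i.val) :
    (Snk n k).degree i = k := by
  rw [SimpleGraph.degree, Snk_nbr_hi hi, card_filter_lt_k hkn]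

theorem stmt5 {n k : ℕ} (hk : 2 ≤ k) (hn : 5 * k ^ 2 < n) :
    (n : ℝ) + 2 * k - 2 - 2 * k * ((k : ℝ) - 1) / ((n : ℝ) + 2 * k - 3) < qIndex (Snk n k) ∧
      (n : ℝ) + 2 * k - 3 < qIndex (Snk n k) := by
  have hkn : k ≤ n := by nlinarith
  have h1n : 1 ≤ n := by omega
  have hkR : (2 : ℝ) ≤ (k : ℝ) := by exact_mod_cast hk
  have hnR : 5 * (k : ℝ) ^ 2 < (n : ℝ) := by exact_mod_cast hn
  have hknR : (k : ℝ) ≤ (n : ℝ) := by exact_mod_cast hkn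
  have hD : (0 : ℝ) ≤ ((n : ℝ) + 2 * k - 2) ^ 2 - 8 * k * ((k : ℝ) - 1) := by nlinarith
  set s : ℝ := Real.sqrt (((n : ℝ) + 2 * k - 2) ^ 2 - 8 * k * ((k : ℝ) - 1)) with hsdef
  have hs2 : s ^ 2 = ((n : ℝ) + 2 * k - 2) ^ 2 - 8 * k * ((k : ℝ) - 1) := Real.sq_sqrt hD
  set μ : ℝ := (((n : ℝ) + 2 * k - 2) + s) / 2 with hμdef
  have hquad : μ ^ 2 - ((n : ℝ) + 2 * k - 2) * μ + 2 * k * ((k : ℝ) - 1) = 0 := by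
    rw [hμdef]; linear_combination hs2 / 4
  have hsgt : (n : ℝ) + 2 * k - 4 < s := by
    rw [hsdef]
    apply Real.lt_sqrt_of_sq_lt
    nlinarith
  have hμgt : (n : ℝ) + 2 * k - 3 < μ := by rw [hμdef]; linarith
  have hc1 : (0 : ℝ) < (n : ℝ) + 2 * k - 3 := by nlinarith
  have hμpos : (0 : ℝ) < μ := lt_trans hc1 hμgt
  -- the eigenvector
  set a : ℝ := (n : ℝ) - k with hadef
  set b : ℝ := μ - ((n : ℝ) + k - 2) with hbdef
  set v : Fin n → ℝ := fun i => if i.val < k then a else b with hvdef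
  have hapos : 0 < a := by rw [hadef]; nlinarith
  have hv : v ≠ 0 := by
    intro h0
    have := congrFun h0 ⟨0, h1n⟩
    rw [hvdef] at this
    simp only [Pi.zero_apply] at this
    rw [if_pos (by simpa using by omega : (0 : ℕ) < k)] at this
    exact absurd this (ne_of_gt hapos)
  have hcardlt : (univ.filter (fun j : Fin n => j.val < k)).card = k := card_filter_lt_k hkn
  have hcardge : (univ.filter (fun j : Fin n => ¬ j.val < k)).card = n - k := by
    have h := Finset.card_filter_add_card_filter_not (s := univ)
      (p := fun j : Fin n => j.val < k)
    rw [hcardlt, card_univ, Fintype.card_fin] at h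
    omega
  have hsum : ∑ j, v j = k * a + ((n : ℝ) - k) * b := by
    rw [hvdef]
    rw [Finset.sum_ite, Finset.sum_const, Finset.sum_const, hcardlt, hcardge,
      nsmul_eq_mul, nsmul_eq_mul, Nat.cast_sub hkn]
  have hmv : (signlessLaplacian (Snk n k)).mulVec v = μ • v := by
    funext i
    rw [signlessLaplacian, Matrix.add_mulVec, Pi.add_apply, Matrix.mulVec_diagonal,
      SimpleGraph.adjMatrix_mulVec_apply, Pi.smul_apply, smul_eq_mul]
    by_cases hi : i.val < k
    · rw [Snk_nbr_lo hi, Finset.sum_erase_eq_sub (mem_univ i), hsum, Snk_degree_lo hi]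
      have hdc : ((n - 1 : ℕ) : ℝ) = (n : ℝ) - 1 := by
        rw [Nat.cast_sub h1n]; simp
      rw [hdc, hvdef]
      simp only [if_pos hi]
      rw [hadef, hbdef]; ring
    · rw [Snk_nbr_hi (le_of_not_gt hi), Snk_degree_hi hkn (le_of_not_gt hi)]
      have hsum2 : ∑ j ∈ univ.filter (fun j : Fin n => j.val < k), v j = k * a := by
        rw [Finset.sum_congr rfl (fun j hj => ?_), Finset.sum_const, hcardlt, nsmul_eq_mul]
        rw [hvdef]
        exact if_pos (Finset.mem_filter.mp hj).2
      rw [hsum2, hvdef]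
      simp only [if_neg hi]
      rw [hbdef, hadef]
      linear_combination -hquad
  have hmem : μ ∈ spectrum ℝ (signlessLaplacian (Snk n k)) :=
    mem_spectrum_of_mulVec _ hv hmv
  have hle : μ ≤ qIndex (Snk n k) :=
    le_csSup (Matrix.finite_spectrum _).bddAbove hmem
  have hfrac : (n : ℝ) + 2 * k - 2 - μ = 2 * k * ((k : ℝ) - 1) / μ := by
    rw [eq_div_iff (ne_of_gt hμpos)]
    linear_combination -hquad
  have hkk : (0 : ℝ) < 2 * k * ((k : ℝ) - 1) := by nlinarith
  have hdiv : 2 * k * ((k : ℝ) - 1) / μ < 2 * k * ((k : ℝ) - 1) / ((n : ℝ) + 2 * k - 3) :=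
    div_lt_div_of_pos_left hkk hc1 hμgt
  constructor
  · have : (n : ℝ) + 2 * k - 2 - 2 * k * ((k : ℝ) - 1) / ((n : ℝ) + 2 * k - 3) < μ := by
      linarith [hfrac, hdiv]
    linarith
  · linarith
end

section
/- Let k ≥ 2, n > 5k², and let G be a graph of order n with q(G) ≥ q(S_{n,k}). Then the number of edges of G satisfies e(G) ≥ kn − k² + 1. -/
open Finset

lemma algmap_mulVec {N : ℕ} (μ : ℝ) (v : Fin N → ℝ) :
    (algebraMap ℝ (Matrix (Fin N) (Fin N) ℝ) μ).mulVec v = μ • v := by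
  funext i
  simp [Matrix.algebraMap_eq_diagonal, Matrix.mulVec_diagonal, Pi.algebraMap_apply,
    Algebra.algebraMap_self_apply]

lemma eig_of_mem {N : ℕ} {M : Matrix (Fin N) (Fin N) ℝ} {μ : ℝ}
    (h : μ ∈ spectrum ℝ M) : ∃ v : Fin N → ℝ, v ≠ 0 ∧ M.mulVec v = μ • v := by
  rw [spectrum.mem_iff] at h
  rw [Matrix.isUnit_iff_isUnit_det, isUnit_iff_ne_zero, not_not] at h
  obtain ⟨v, hv0, hv⟩ := Matrix.exists_mulVec_eq_zero_iff.mpr h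
  refine ⟨v, hv0, ?_⟩
  rw [Matrix.sub_mulVec, algmap_mulVec, sub_eq_zero] at hv
  exact hv.symm

lemma mem_of_eig {N : ℕ} {M : Matrix (Fin N) (Fin N) ℝ} {μ : ℝ} {v : Fin N → ℝ}
    (hv0 : v ≠ 0) (h : M.mulVec v = μ • v) : μ ∈ spectrum ℝ M := by
  rw [spectrum.mem_iff, Matrix.isUnit_iff_isUnit_det, isUnit_iff_ne_zero, not_not]
  rw [← Matrix.exists_mulVec_eq_zero_iff]
  exact ⟨v, hv0, by rw [Matrix.sub_mulVec, h, algmap_mulVec, sub_self]⟩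

lemma sL_mulVec {N : ℕ} (G : SimpleGraph (Fin N)) [DecidableRel G.Adj] (x : Fin N → ℝ) (u : Fin N) :
    (Matrix.diagonal (fun i => (G.degree i : ℝ)) + G.adjMatrix ℝ).mulVec x u
      = (G.degree u : ℝ) * x u + ∑ v ∈ G.neighborFinset u, x v := by
  rw [Matrix.add_mulVec, Pi.add_apply, Matrix.mulVec_diagonal,
    SimpleGraph.adjMatrix_mulVec_apply]

lemma key_extract {N : ℕ} (G : SimpleGraph (Fin N)) [DecidableRel G.Adj] {μ : ℝ}
    (hμ : 0 < μ) (hmem : μ ∈ spectrum ℝ (Matrix.diagonal (fun i => (G.degree i : ℝ)) + G.adjMatrix ℝ)) :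
    ∃ u : Fin N, 0 < G.degree u ∧
      μ * (G.degree u : ℝ) ≤ (G.degree u : ℝ)^2 + ∑ v ∈ G.neighborFinset u, (G.degree v : ℝ) := by
  obtain ⟨x, hx0, heig⟩ := eig_of_mem hmem
  set y : Fin N → ℝ := fun v => |x v| with hy
  have hpt : ∀ u, μ * y u ≤ (G.degree u : ℝ) * y u + ∑ v ∈ G.neighborFinset u, y v := by
    intro u
    have h1 : μ * x u = (G.degree u : ℝ) * x u + ∑ v ∈ G.neighborFinset u, x v := by
      have := congrFun heig u
      rw [sL_mulVec] at this
      simpa using this.symm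
    calc μ * y u = |μ * x u| := by rw [abs_mul, abs_of_pos hμ]
    _ = |(G.degree u : ℝ) * x u + ∑ v ∈ G.neighborFinset u, x v| := by rw [h1]
    _ ≤ |(G.degree u : ℝ) * x u| + |∑ v ∈ G.neighborFinset u, x v| := abs_add_le _ _
    _ ≤ (G.degree u : ℝ) * y u + ∑ v ∈ G.neighborFinset u, y v := by
        gcongr
        · rw [abs_mul, abs_of_nonneg (by positivity : (0:ℝ) ≤ (G.degree u : ℝ))]
        · exact Finset.abs_sum_le_sum_abs _ _
  have hS : ∀ v, 0 < y v → 0 < G.degree v := by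
    intro v hv
    by_contra hd
    push_neg at hd
    have hd0 : G.degree v = 0 := Nat.le_zero.mp hd
    have hempty : G.neighborFinset v = ∅ := by
      rwa [← Finset.card_eq_zero, SimpleGraph.card_neighborFinset_eq_degree]
    have := hpt v
    rw [hd0, hempty] at this
    simp at this
    nlinarith [this, hv, hμ]
  -- nonempty support
  obtain ⟨i, hi⟩ : ∃ i, y i > 0 := by
    by_contra hall
    push_neg at hall
    apply hx0
    funext j
    have := hall j
    have : y j = 0 := le_antisymm this (abs_nonneg _)
    simpa [hy, abs_eq_zero] using this
  set S : Finset (Fin N) := Finset.univ.filter (fun v => 0 < y v) with hSdef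
  have hSne : S.Nonempty := ⟨i, by simp [hSdef, hi]⟩
  obtain ⟨u, huS, hmax⟩ := S.exists_max_image (fun v => y v / (G.degree v : ℝ)) hSne
  have huy : 0 < y u := by simpa [hSdef] using huS
  have hud : 0 < G.degree u := hS u huy
  have hud' : (0:ℝ) < (G.degree u : ℝ) := by exact_mod_cast hud
  refine ⟨u, hud, ?_⟩
  have hnb : ∀ v ∈ G.neighborFinset u, y v * (G.degree u : ℝ) ≤ y u * (G.degree v : ℝ) := by
    intro v hv
    rcases eq_or_lt_of_le (abs_nonneg (x v)) with h0 | h0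
    · have hyv : y v = 0 := by simp [hy, ← h0]
      rw [hyv, zero_mul]; positivity
    · have hvS : v ∈ S := by simp only [hSdef, Finset.mem_filter, Finset.mem_univ, true_and]; exact h0
      have hvd : (0:ℝ) < (G.degree v : ℝ) := by exact_mod_cast hS v h0
      have := hmax v hvS
      rw [div_le_div_iff₀ hvd hud'] at this
      linarith
  have hchain : μ * y u * (G.degree u : ℝ) ≤
      ((G.degree u : ℝ)^2 + ∑ v ∈ G.neighborFinset u, (G.degree v : ℝ)) * y u := by
    have h2 := mul_le_mul_of_nonneg_right (hpt u) (le_of_lt hud')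
    calc μ * y u * (G.degree u : ℝ)
        ≤ ((G.degree u : ℝ) * y u + ∑ v ∈ G.neighborFinset u, y v) * (G.degree u : ℝ) := h2
    _ = (G.degree u : ℝ)^2 * y u + ∑ v ∈ G.neighborFinset u, y v * (G.degree u : ℝ) := by
        rw [add_mul, Finset.sum_mul, sq]; ring_nf
    _ ≤ (G.degree u : ℝ)^2 * y u + ∑ v ∈ G.neighborFinset u, y u * (G.degree v : ℝ) :=
        add_le_add le_rfl (Finset.sum_le_sum hnb)
    _ = ((G.degree u : ℝ)^2 + ∑ v ∈ G.neighborFinset u, (G.degree v : ℝ)) * y u := by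
        rw [← Finset.mul_sum, add_mul]; ring
  have hfin : μ * (G.degree u : ℝ) * y u ≤ ((G.degree u : ℝ)^2 + ∑ v ∈ G.neighborFinset u, (G.degree v : ℝ)) * y u := by
    calc μ * (G.degree u : ℝ) * y u = μ * y u * (G.degree u : ℝ) := by ring
    _ ≤ _ := hchain
  exact le_of_mul_le_mul_right hfin huy

lemma counting {N : ℕ} (G : SimpleGraph (Fin N)) [DecidableRel G.Adj] (u : Fin N) :
    G.degree u + (∑ v ∈ G.neighborFinset u, G.degree v)
      + (∑ w ∈ Finset.univ \ insert u (G.neighborFinset u), G.degree w)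
      = 2 * G.edgeFinset.card
    ∧ (∑ v ∈ G.neighborFinset u, G.degree v) ≤ G.degree u * G.degree u
        + (∑ w ∈ Finset.univ \ insert u (G.neighborFinset u), G.degree w)
    ∧ (∑ v ∈ G.neighborFinset u, G.degree v) ≤ G.degree u * (N - 1) := by
  classical
  set A : Finset (Fin N) := insert u (G.neighborFinset u) with hA
  have hunotin : u ∉ G.neighborFinset u := by simp
  have hcardA : A.card = G.degree u + 1 := by
    rw [hA, Finset.card_insert_of_notMem hunotin, SimpleGraph.card_neighborFinset_eq_degree]
  refine ⟨?_, ?_, ?_⟩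
  · have hsub : A ⊆ Finset.univ := Finset.subset_univ _
    have hsd : (∑ w ∈ Finset.univ \ A, G.degree w) + ∑ v ∈ A, G.degree v = ∑ v, G.degree v :=
      Finset.sum_sdiff (f := fun v => G.degree v) hsub
    have hsumA : ∑ v ∈ A, G.degree v = G.degree u + ∑ v ∈ G.neighborFinset u, G.degree v := by
      rw [hA, Finset.sum_insert hunotin]
    have htot : ∑ v, G.degree v = 2 * G.edgeFinset.card :=
      SimpleGraph.sum_degrees_eq_twice_card_edges G
    omega
  · -- T ≤ d*d + R
    set X : Finset (Fin N) := Finset.univ \ A with hX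
    have hdeg : ∀ v ∈ G.neighborFinset u,
        G.degree v ≤ G.degree u + (X.filter (fun w => G.Adj v w)).card := by
      intro v hv
      have hsplit : G.neighborFinset v = (G.neighborFinset v ∩ A) ∪ (G.neighborFinset v ∩ X) := by
        rw [← Finset.inter_union_distrib_left]
        rw [hX, Finset.union_sdiff_of_subset (Finset.subset_univ _)]
        simp
      have h1 : (G.neighborFinset v ∩ A).card ≤ G.degree u := by
        have hsub2 : G.neighborFinset v ∩ A ⊆ A.erase v := by
          intro w hw
          rw [Finset.mem_erase]
          refine ⟨?_, (Finset.mem_inter.mp hw).2⟩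
          rintro rfl
          have := (Finset.mem_inter.mp hw).1
          rw [SimpleGraph.mem_neighborFinset] at this
          exact G.irrefl this
        calc (G.neighborFinset v ∩ A).card ≤ (A.erase v).card := Finset.card_le_card hsub2
        _ = A.card - 1 := Finset.card_erase_of_mem (by rw [hA]; exact Finset.mem_insert_of_mem hv)
        _ = G.degree u := by omega
      have h2 : G.neighborFinset v ∩ X = X.filter (fun w => G.Adj v w) := by
        ext w
        simp [Finset.mem_inter, Finset.mem_filter, and_comm]
      calc G.degree v = (G.neighborFinset v).card := (SimpleGraph.card_neighborFinset_eq_degree G v).symm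
      _ ≤ (G.neighborFinset v ∩ A).card + (G.neighborFinset v ∩ X).card := by
          conv_lhs => rw [hsplit]
          exact Finset.card_union_le _ _
      _ ≤ G.degree u + (X.filter (fun w => G.Adj v w)).card := by rw [h2]; omega
    have hdc : ∑ v ∈ G.neighborFinset u, (X.filter (fun w => G.Adj v w)).card
        ≤ ∑ w ∈ X, G.degree w := by
      have hswap : ∑ v ∈ G.neighborFinset u, (X.filter (fun w => G.Adj v w)).card
          = ∑ w ∈ X, ((G.neighborFinset u).filter (fun v => G.Adj v w)).card := by
        simp only [Finset.card_filter]
        exact Finset.sum_comm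
      rw [hswap]
      apply Finset.sum_le_sum
      intro w _
      have : (G.neighborFinset u).filter (fun v => G.Adj v w) ⊆ G.neighborFinset w := by
        intro v hv
        rw [SimpleGraph.mem_neighborFinset]
        exact ((Finset.mem_filter.mp hv).2).symm
      calc ((G.neighborFinset u).filter (fun v => G.Adj v w)).card
          ≤ (G.neighborFinset w).card := Finset.card_le_card this
      _ = G.degree w := SimpleGraph.card_neighborFinset_eq_degree G w
    calc ∑ v ∈ G.neighborFinset u, G.degree v
        ≤ ∑ v ∈ G.neighborFinset u, (G.degree u + (X.filter (fun w => G.Adj v w)).card) :=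
          Finset.sum_le_sum hdeg
    _ = (G.neighborFinset u).card * G.degree u
          + ∑ v ∈ G.neighborFinset u, (X.filter (fun w => G.Adj v w)).card := by
        rw [Finset.sum_add_distrib, Finset.sum_const, smul_eq_mul]
    _ ≤ G.degree u * G.degree u + ∑ w ∈ X, G.degree w := by
        rw [SimpleGraph.card_neighborFinset_eq_degree]
        omega
  · have : ∀ v ∈ G.neighborFinset u, G.degree v ≤ N - 1 := by
      intro v _
      have := G.degree_lt_card_verts v
      simp only [Fintype.card_fin] at this
      omega
    calc ∑ v ∈ G.neighborFinset u, G.degree v ≤ (G.neighborFinset u).card * (N-1) := by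
          apply Finset.sum_le_card_nsmul _ _ _ this
    _ = G.degree u * (N-1) := by rw [SimpleGraph.card_neighborFinset_eq_degree]


lemma coreA (n k D T μ : ℝ) (hkey : μ*D ≤ D^2+T) (hT : T ≤ D*(n-1)) (hD : 0 < D)
    (hDa : D ≤ 2*k-2) (h5 : n+2*k-3 < μ) : False := by
  nlinarith [mul_lt_mul_of_pos_right h5 hD]

lemma coreB (n k D E μ : ℝ) (hk : 2 ≤ k) (hn : 5*k^2 < n)
    (h1 : μ * D ≤ D^2 + 2*E - D) (h2 : 2*E ≤ 2*k*n - 2*k^2) (h3 : D ≤ n-1)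
    (hBR : 2*E ≤ D^2+D-1) (hDa : 2*k-1 ≤ D)
    (h5 : n+2*k-3 < μ)
    (h5mul : (n+2*k-2)*(n-1) - 2*k*(k-1) < μ*(n-1)) : False := by
  have hD : 0 < D := by nlinarith
  have hn1 : (0:ℝ) < n - 1 := by nlinarith
  have h4 : n+2*k-3 < 2*D := by
    have e2 := mul_lt_mul_of_pos_right h5 hD
    have : (n+2*k-3)*D < (2*D)*D := by nlinarith
    exact lt_of_mul_lt_mul_right this (le_of_lt hD)
  have g1 : (0:ℝ) ≤ 2*D - (n+2*k-3) := by linarith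
  have g2 : (0:ℝ) ≤ n - 1 - D := by linarith
  have hnk : (0:ℝ) ≤ n - 2*k - 3 := by nlinarith
  have e1 := mul_le_mul_of_nonneg_right h1 (le_of_lt hn1)
  have e2 := mul_lt_mul_of_pos_right h5mul hD
  have t1 : (0:ℝ) ≤ (n-1) * ((2*D-(n+2*k-3))*(n-1-D)) :=
    mul_nonneg (le_of_lt hn1) (mul_nonneg g1 g2)
  have t2 : (0:ℝ) ≤ (n-1) * (2*k*n-2*k^2-2*E) := mul_nonneg (le_of_lt hn1) (by linarith)
  have t3 : (0:ℝ) ≤ (n-1) * ((n-2*k-3) * (n-1-D)) :=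
    mul_nonneg (le_of_lt hn1) (mul_nonneg hnk g2)
  have t4 : (0:ℝ) ≤ (k*(k-1)) * (n-1-D) :=
    mul_nonneg (mul_nonneg (by linarith) (by linarith)) g2
  nlinarith [e1, e2, t1, t2, t3, t4]

lemma coreC (n k D E μ : ℝ) (hk : 2 ≤ k) (hn : 5*k^2 < n)
    (h1 : 2*(μ * D) ≤ 3*D^2 + 2*E - D) (h2 : 2*E ≤ 2*k*n - 2*k^2)
    (ha : 2*k - 1 ≤ D) (hb : D^2 + D ≤ 2*E)
    (h5 : n+2*k-3 < μ) : False := by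
  have hk0 : (0:ℝ) ≤ k := by linarith
  have hD : 0 < D := by nlinarith
  have hn0 : (0:ℝ) ≤ n := by nlinarith
  have hn5 : (0:ℝ) ≤ n - 5*k^2 := by nlinarith
  have hub : 2*D ≤ n := by
    nlinarith [sq_nonneg (n - 2*D), sq_nonneg (n + 2*D),
      mul_nonneg (mul_nonneg hk0 hk0) hn0, mul_nonneg hn5 hn0]
  have e2 := mul_lt_mul_of_pos_right h5 hD
  have w1 : (0:ℝ) ≤ D - (2*k-1) := by linarith
  have w2 : (0:ℝ) ≤ n - 2*D := by linarith
  have w3 : (0:ℝ) ≤ k - 1 := by linarith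
  have w4 : (0:ℝ) ≤ k - 2 := by linarith
  nlinarith [e2, mul_nonneg w1 w2, mul_nonneg w3 hn5, mul_nonneg w4 hn5]

lemma h5mulOf (n k μ : ℝ) (hn1 : 0 < n-1) (hgt : n+2*k-2-2*k*(k-1)/(n-1) < μ) :
    (n+2*k-2)*(n-1) - 2*k*(k-1) < μ*(n-1) := by
  have h := mul_lt_mul_of_pos_right hgt hn1
  have hfm : (2*k*(k-1)/(n-1)) * (n-1) = 2*k*(k-1) := div_mul_cancel₀ _ (ne_of_gt hn1)
  nlinarith [h, hfm]

set_option maxHeartbeats 800000 in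
lemma upper {n k : ℕ} (hk : 2 ≤ k) (hn : 5*k^2 < n)
    (G : SimpleGraph (Fin n)) [DecidableRel G.Adj]
    (he : (G.edgeFinset.card : ℝ) ≤ k*n - k^2) {μ : ℝ}
    (hmem : μ ∈ spectrum ℝ (Matrix.diagonal (fun i => (G.degree i : ℝ)) + G.adjMatrix ℝ)) :
    μ ≤ (n:ℝ) + 2*k - 2 - 2*k*(k-1)/((n:ℝ)-1) := by
  by_contra hgt
  push_neg at hgt
  have hkR : (2:ℝ) ≤ (k:ℝ) := by exact_mod_cast hk
  have hnR5 : 5*(k:ℝ)^2 < (n:ℝ) := by exact_mod_cast hn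
  have hnR : (20:ℝ) < (n:ℝ) := by nlinarith [sq_nonneg ((k:ℝ)-2)]
  have hn1 : (0:ℝ) < (n:ℝ)-1 := by linarith
  have hfrac : 2*(k:ℝ)*((k:ℝ)-1)/((n:ℝ)-1) ≤ 1 := by
    rw [div_le_one hn1]; nlinarith
  have h5 : (n:ℝ)+2*(k:ℝ)-3 < μ := by linarith
  have hμpos : 0 < μ := by linarith
  obtain ⟨u, hdpos, hkey⟩ := key_extract G hμpos hmem
  obtain ⟨hc1, hc2, hc3⟩ := counting G u
  have hkeyR : μ * (G.degree u : ℝ) ≤ (G.degree u : ℝ)^2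
      + ((∑ v ∈ G.neighborFinset u, G.degree v : ℕ) : ℝ) := by
    rw [Nat.cast_sum]; exact hkey
  have hdlt : G.degree u < n := by
    have := G.degree_lt_card_verts u
    simpa using this
  have h1n : 1 ≤ n := by omega
  have h1R : (G.degree u : ℝ) + ((∑ v ∈ G.neighborFinset u, G.degree v : ℕ) : ℝ)
      + ((∑ w ∈ Finset.univ \ insert u (G.neighborFinset u), G.degree w : ℕ) : ℝ)
      = 2*(G.edgeFinset.card : ℝ) := by exact_mod_cast hc1
  have h2R : ((∑ v ∈ G.neighborFinset u, G.degree v : ℕ) : ℝ)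
      ≤ (G.degree u : ℝ)*(G.degree u : ℝ)
        + ((∑ w ∈ Finset.univ \ insert u (G.neighborFinset u), G.degree w : ℕ) : ℝ) := by
    exact_mod_cast hc2
  have h3R : ((∑ v ∈ G.neighborFinset u, G.degree v : ℕ) : ℝ)
      ≤ (G.degree u : ℝ)*((n:ℝ)-1) := by
    calc ((∑ v ∈ G.neighborFinset u, G.degree v : ℕ) : ℝ)
        ≤ ((G.degree u * (n-1) : ℕ) : ℝ) := by exact_mod_cast hc3
    _ = (G.degree u : ℝ)*((n:ℝ)-1) := by push_cast [h1n]; ring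
  have hD1 : (0:ℝ) < (G.degree u : ℝ) := by exact_mod_cast hdpos
  have hDn : (G.degree u : ℝ) ≤ (n:ℝ)-1 := by
    have h : G.degree u ≤ n - 1 := by omega
    calc (G.degree u : ℝ) ≤ ((n-1:ℕ):ℝ) := by exact_mod_cast h
    _ = (n:ℝ)-1 := by push_cast [h1n]; ring
  have hRnn : (0:ℝ) ≤ ((∑ w ∈ Finset.univ \ insert u (G.neighborFinset u), G.degree w : ℕ) : ℝ) := by
    positivity
  have heR : 2*(G.edgeFinset.card : ℝ) ≤ 2*(k:ℝ)*(n:ℝ) - 2*(k:ℝ)^2 := by nlinarith [he]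
  rcases le_or_gt (G.degree u) (2*k-2) with hA | hAc
  · have hAR : (G.degree u : ℝ) ≤ 2*(k:ℝ)-2 := by
      calc (G.degree u : ℝ) ≤ ((2*k-2:ℕ):ℝ) := by exact_mod_cast hA
      _ = 2*(k:ℝ)-2 := by push_cast [show 2 ≤ 2*k by omega]; ring
    exact coreA (n:ℝ) (k:ℝ) _ _ μ hkeyR h3R hD1 hAR h5
  · have hDa : 2*(k:ℝ)-1 ≤ (G.degree u : ℝ) := by
      have h3 : 2*k-1 ≤ G.degree u := by omega
      calc (2*(k:ℝ)-1) = ((2*k-1 : ℕ):ℝ) := by push_cast [show 1 ≤ 2*k by omega]; ring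
      _ ≤ (G.degree u : ℝ) := by exact_mod_cast h3
    rcases Nat.lt_or_ge (2*G.edgeFinset.card)
        (G.degree u * G.degree u + G.degree u) with hB | hC
    · have hBR : 2*(G.edgeFinset.card:ℝ) ≤ (G.degree u:ℝ)^2+(G.degree u:ℝ)-1 := by
        have h : (2*G.edgeFinset.card + 1 : ℕ) ≤ G.degree u * G.degree u + G.degree u := by omega
        have h2 := (Nat.cast_le (α := ℝ)).mpr h
        push_cast at h2
        nlinarith [h2]
      have hkey2 : μ*(G.degree u:ℝ) ≤ (G.degree u:ℝ)^2 + 2*(G.edgeFinset.card:ℝ) - (G.degree u:ℝ) := by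
        linarith
      exact coreB (n:ℝ) (k:ℝ) _ _ μ hkR hnR5 hkey2 heR hDn hBR hDa h5
        (h5mulOf (n:ℝ) (k:ℝ) μ hn1 hgt)
    · have hCR : (G.degree u:ℝ)^2 + (G.degree u:ℝ) ≤ 2*(G.edgeFinset.card:ℝ) := by
        have h2 := (Nat.cast_le (α := ℝ)).mpr hC
        push_cast at h2
        nlinarith [h2]
      have hkey3 : 2*(μ*(G.degree u:ℝ)) ≤ 3*(G.degree u:ℝ)^2 + 2*(G.edgeFinset.card:ℝ) - (G.degree u:ℝ) := by
        nlinarith [hkeyR, h1R, h2R]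
      exact coreC (n:ℝ) (k:ℝ) _ _ μ hkR hnR5 hkey3 heR hDa hCR h5
lemma Snk_neighborFinset_hub {n k : ℕ} (i : Fin n) (h : i.val < k) :
    (Snk n k).neighborFinset i = Finset.univ.erase i := by
  ext j
  simp only [SimpleGraph.mem_neighborFinset, Finset.mem_erase, Finset.mem_univ, and_true]
  constructor
  · rintro ⟨hne, -⟩; exact fun hj => hne hj.symm
  · intro hj; exact ⟨fun he => hj he.symm, Or.inl h⟩

lemma Snk_neighborFinset_leaf {n k : ℕ} (hkn : k < n) (i : Fin n) (h : ¬ i.val < k) :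
    (Snk n k).neighborFinset i = Finset.Iio (⟨k, hkn⟩ : Fin n) := by
  ext j
  simp only [SimpleGraph.mem_neighborFinset, Finset.mem_Iio]
  rw [Fin.lt_def]
  constructor
  · rintro ⟨hne, hor⟩
    rcases hor with h1 | h1
    · omega
    · exact h1
  · intro hj
    refine ⟨?_, Or.inr hj⟩
    intro he
    rw [he] at h
    exact h hj

lemma Snk_degree {n k : ℕ} (hkn : k < n) (i : Fin n) :
    (Snk n k).degree i = if i.val < k then n-1 else k := by
  rw [← SimpleGraph.card_neighborFinset_eq_degree]
  by_cases h : i.val < k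
  · rw [if_pos h, Snk_neighborFinset_hub i h,
      Finset.card_erase_of_mem (Finset.mem_univ i), Finset.card_univ, Fintype.card_fin]
  · rw [if_neg h, Snk_neighborFinset_leaf hkn i h, Fin.card_Iio]

lemma Snk_eigen {n k : ℕ} (hk : 2 ≤ k) (hkn : k < n) {lam : ℝ}
    (hquad : lam^2 - ((n:ℝ)+2*k-2)*lam + 2*k*((k:ℝ)-1) = 0) :
    (Matrix.diagonal (fun i => ((Snk n k).degree i : ℝ)) + (Snk n k).adjMatrix ℝ).mulVec
      (fun i => if i.val < k then lam - (k:ℝ) else (k:ℝ))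
      = lam • (fun i => if i.val < k then lam - (k:ℝ) else (k:ℝ)) := by
  set x : Fin n → ℝ := fun i => if i.val < k then lam - (k:ℝ) else (k:ℝ) with hx
  have hsum_univ : ∑ j, x j = k*(lam - (k:ℝ)) + ((n:ℝ)-k)*k := by
    rw [hx]
    rw [Finset.sum_ite]
    have h1 : Finset.univ.filter (fun j : Fin n => j.val < k) = Finset.Iio (⟨k, hkn⟩ : Fin n) := by
      ext j; simp [Fin.lt_def]
    have h2 : (Finset.univ.filter (fun j : Fin n => ¬ j.val < k)).card = n - k := by
      have : Finset.univ.filter (fun j : Fin n => ¬ j.val < k)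
          = (Finset.Iio (⟨k, hkn⟩ : Fin n))ᶜ := by
        ext j; simp [Fin.lt_def]
      rw [this, Finset.card_compl, Fin.card_Iio, Fintype.card_fin]
    rw [Finset.sum_const, Finset.sum_const, h1, Fin.card_Iio, h2]
    have hkn' : k ≤ n := le_of_lt hkn
    simp only [Fin.val_mk, nsmul_eq_mul]
    push_cast [hkn']
    ring
  have hsum_Iio : ∑ j ∈ Finset.Iio (⟨k, hkn⟩ : Fin n), x j = k*(lam - (k:ℝ)) := by
    have : ∀ j ∈ Finset.Iio (⟨k, hkn⟩ : Fin n), x j = lam - (k:ℝ) := by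
      intro j hj
      rw [Finset.mem_Iio, Fin.lt_def] at hj
      simp [hx, hj]
    rw [Finset.sum_congr rfl this, Finset.sum_const, Fin.card_Iio]
    simp only [Fin.val_mk, nsmul_eq_mul]
  funext i
  rw [sL_mulVec, Pi.smul_apply, smul_eq_mul]
  by_cases h : i.val < k
  · -- hub
    rw [Snk_neighborFinset_hub i h, Snk_degree hkn i, if_pos h]
    have hxi : x i = lam - (k:ℝ) := by simp [hx, h]
    rw [Finset.sum_erase_eq_sub (Finset.mem_univ i), hsum_univ, hxi]
    have hn1 : ((n-1:ℕ):ℝ) = (n:ℝ)-1 := by push_cast [show 1 ≤ n by omega]; ring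
    rw [hn1]
    nlinarith [hquad]
  · -- leaf
    rw [Snk_neighborFinset_leaf hkn i h, Snk_degree hkn i, if_neg h, hsum_Iio]
    have hxi : x i = (k:ℝ) := by simp [hx, h]
    rw [hxi]
    ring

lemma spec_bddAbove {N : ℕ} (G : SimpleGraph (Fin N)) [DecidableRel G.Adj] :
    BddAbove (spectrum ℝ (Matrix.diagonal (fun i => (G.degree i : ℝ)) + G.adjMatrix ℝ)) := by
  refine ⟨2*(N:ℝ), fun μ hμ => ?_⟩
  rcases le_or_gt μ 0 with h | h
  · have : (0:ℝ) ≤ 2*(N:ℝ) := by positivity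
    linarith
  · obtain ⟨u, hdpos, hkey⟩ := key_extract G h hμ
    obtain ⟨-, -, hc3⟩ := counting G u
    have hNpos : 0 < N := u.pos
    have h1n : 1 ≤ N := hNpos
    have hdlt : G.degree u < N := by simpa using G.degree_lt_card_verts u
    have hD1 : (0:ℝ) < (G.degree u : ℝ) := by exact_mod_cast hdpos
    have h3R : ((∑ v ∈ G.neighborFinset u, G.degree v : ℕ) : ℝ)
        ≤ (G.degree u : ℝ)*((N:ℝ)-1) := by
      calc ((∑ v ∈ G.neighborFinset u, G.degree v : ℕ) : ℝ)
          ≤ ((G.degree u * (N-1) : ℕ) : ℝ) := by exact_mod_cast hc3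
      _ = (G.degree u : ℝ)*((N:ℝ)-1) := by push_cast [h1n]; ring
    have hkeyR : μ * (G.degree u : ℝ) ≤ (G.degree u : ℝ)^2
        + ((∑ v ∈ G.neighborFinset u, G.degree v : ℕ) : ℝ) := by
      rw [Nat.cast_sum]; exact hkey
    have hDn : (G.degree u : ℝ) ≤ (N:ℝ)-1 := by
      have hh : G.degree u ≤ N - 1 := by omega
      calc (G.degree u : ℝ) ≤ ((N-1:ℕ):ℝ) := by exact_mod_cast hh
      _ = (N:ℝ)-1 := by push_cast [h1n]; ring
    have : μ * (G.degree u : ℝ) ≤ (2*(N:ℝ)) * (G.degree u : ℝ) := by nlinarith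
    exact le_of_mul_le_mul_right this hD1

set_option maxHeartbeats 1600000 in
theorem stmt6 {n k : ℕ} (hk : 2 ≤ k) (hn : 5 * k ^ 2 < n) (G : SimpleGraph (Fin n))
    [DecidableRel G.Adj] (hq : qIndex (Snk n k) ≤ qIndex G) :
    (k : ℝ) * n - (k : ℝ) ^ 2 + 1 ≤ (G.edgeFinset.card : ℝ) := by
  by_contra hlt
  push_neg at hlt
  have hkR : (2:ℝ) ≤ (k:ℝ) := by exact_mod_cast hk
  have hnR5 : 5*(k:ℝ)^2 < (n:ℝ) := by exact_mod_cast hn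
  have hnR : (20:ℝ) < (n:ℝ) := by nlinarith [sq_nonneg ((k:ℝ)-2)]
  have hn1 : (0:ℝ) < (n:ℝ)-1 := by linarith
  have hkk : k * k = k^2 := (sq k).symm
  have hkn : k < n := by nlinarith
  have hk2n : k^2 ≤ k*n := by
    rw [← hkk]
    exact Nat.mul_le_mul_left k (le_of_lt hkn)
  have he : (G.edgeFinset.card : ℝ) ≤ (k:ℝ)*(n:ℝ) - (k:ℝ)^2 := by
    have h1 : G.edgeFinset.card < k*n - k^2 + 1 := by
      have : (G.edgeFinset.card : ℝ) < ((k*n - k^2 + 1 : ℕ) : ℝ) := by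
        push_cast [hk2n]
        linarith
      exact_mod_cast this
    have h2 : G.edgeFinset.card ≤ k*n - k^2 := by omega
    calc (G.edgeFinset.card : ℝ) ≤ ((k*n - k^2 : ℕ) : ℝ) := by exact_mod_cast h2
    _ = (k:ℝ)*(n:ℝ) - (k:ℝ)^2 := by push_cast [hk2n]; ring
  have hfrac : 2*(k:ℝ)*((k:ℝ)-1)/((n:ℝ)-1) ≤ 1 := by
    rw [div_le_one hn1]; nlinarith
  -- the eigenvalue of Snk
  set s : ℝ := Real.sqrt (((n:ℝ)+2*k-2)^2 - 8*k*((k:ℝ)-1)) with hs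
  have hD0 : (0:ℝ) ≤ ((n:ℝ)+2*k-2)^2 - 8*k*((k:ℝ)-1) := by nlinarith
  have hs2 : s^2 = ((n:ℝ)+2*k-2)^2 - 8*k*((k:ℝ)-1) := Real.sq_sqrt hD0
  have hsnn : (0:ℝ) ≤ s := Real.sqrt_nonneg _
  set lam : ℝ := (((n:ℝ)+2*k-2) + s)/2 with hlam
  have hquad : lam^2 - ((n:ℝ)+2*k-2)*lam + 2*k*((k:ℝ)-1) = 0 := by
    rw [hlam]; linear_combination hs2/4
  have hlam_half : ((n:ℝ)+2*k-2)/2 ≤ lam := by rw [hlam]; linarith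
  have hlampos : (0:ℝ) < lam := by linarith
  have hmlam : lam*(((n:ℝ)+2*k-2) - lam) = 2*k*((k:ℝ)-1) := by linear_combination -hquad
  have hlam_ge : (n:ℝ)+2*k-3 ≤ lam := by
    by_contra hc
    push_neg at hc
    have h1 : (0:ℝ) < ((n:ℝ)+2*k-2) - 1 - lam := by linarith
    nlinarith [hmlam, hlam_half, mul_pos h1 hlampos]
  have hlamgt : (n:ℝ)-1 < lam := by linarith
  have hfracpos : (0:ℝ) < 2*k*((k:ℝ)-1) := by nlinarith
  have hdiv : 2*k*((k:ℝ)-1)/lam < 2*k*((k:ℝ)-1)/((n:ℝ)-1) :=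
    div_lt_div_of_pos_left hfracpos hn1 hlamgt
  have hexp : ((n:ℝ)+2*k-2) - lam = 2*k*((k:ℝ)-1)/lam := by
    rw [eq_div_iff (ne_of_gt hlampos)]
    linear_combination hmlam
  have hClam : (n:ℝ) + 2*k - 2 - 2*k*((k:ℝ)-1)/((n:ℝ)-1) < lam := by linarith
  -- membership
  have hxne : (fun i : Fin n => if i.val < k then lam - (k:ℝ) else (k:ℝ)) ≠ 0 := by
    intro h0
    have := congrFun h0 ⟨k, hkn⟩
    norm_num at this
    linarith
  have hmem : lam ∈ spectrum ℝ
      (Matrix.diagonal (fun i => (((Snk n k).degree i : ℝ))) + (Snk n k).adjMatrix ℝ) :=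
    mem_of_eig hxne (Snk_eigen hk hkn hquad)
  unfold qIndex signlessLaplacian at hq
  have hlow : lam ≤ sSup (spectrum ℝ
      (Matrix.diagonal (fun i => (((Snk n k).degree i : ℝ))) + (Snk n k).adjMatrix ℝ)) :=
    le_csSup (spec_bddAbove _) hmem
  have hup : sSup (spectrum ℝ
      (Matrix.diagonal (fun i => ((G.degree i : ℝ))) + G.adjMatrix ℝ))
      ≤ (n:ℝ) + 2*k - 2 - 2*k*((k:ℝ)-1)/((n:ℝ)-1) := by
    apply Real.sSup_le
    · intro μ hμ
      exact upper hk hn G he hμ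
    · linarith
  linarith [hlow, hq, hup, hClam]
end

section
/- Let k ≥ 3 and let G be a graph of order n containing a vertex w such that G − w is a disjoint union of t ≥ 2 graphs each isomorphic to some S_{n_i, k−1} (with Σ n_i = n − 1, each n_i ≥ k − 1). Then q(G) < q(S_{n,k}). -/
open Finset

/-! ### Auxiliary spectral lemmas -/

namespace Stmt10Aux

open Matrix

variable {N : ℕ}

section SymSpec

variable {A : Matrix (Fin N) (Fin N) ℝ}

lemma spec_bddAbove (A : Matrix (Fin N) (Fin N) ℝ) : BddAbove (spectrum ℝ A) :=
  Set.Finite.bddAbove (Matrix.finite_real_spectrum (A := A))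

lemma sSup_spec_mem (hA : A.IsHermitian) (hN : 0 < N) :
    sSup (spectrum ℝ A) ∈ spectrum ℝ A := by
  have hne : (spectrum ℝ A).Nonempty := by
    rw [hA.spectrum_real_eq_range_eigenvalues]
    exact ⟨hA.eigenvalues ⟨0, hN⟩, ⟨_, rfl⟩⟩
  exact hne.csSup_mem (Matrix.finite_real_spectrum (A := A))

lemma algmap_mulVec (μ : ℝ) (v : Fin N → ℝ) :
    (algebraMap ℝ (Matrix (Fin N) (Fin N) ℝ)) μ *ᵥ v = μ • v := by
  rw [Algebra.algebraMap_eq_smul_one, Matrix.smul_mulVec, Matrix.one_mulVec]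

lemma eigvec_of_mem_spectrum {μ : ℝ} (h : μ ∈ spectrum ℝ A) :
    ∃ v : Fin N → ℝ, v ≠ 0 ∧ A *ᵥ v = μ • v := by
  rw [spectrum.mem_iff] at h
  rw [Matrix.isUnit_iff_isUnit_det, isUnit_iff_ne_zero, not_not] at h
  obtain ⟨v, hv0, hv⟩ := Matrix.exists_mulVec_eq_zero_iff.mpr h
  refine ⟨v, hv0, ?_⟩
  rw [Matrix.sub_mulVec, algmap_mulVec] at hv
  exact (sub_eq_zero.mp hv).symm

lemma mem_spectrum_of_eigvec {μ : ℝ} {v : Fin N → ℝ} (hv0 : v ≠ 0) (hv : A *ᵥ v = μ • v) :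
    μ ∈ spectrum ℝ A := by
  rw [spectrum.mem_iff, Matrix.isUnit_iff_isUnit_det, isUnit_iff_ne_zero, not_not,
    ← Matrix.exists_mulVec_eq_zero_iff]
  exact ⟨v, hv0, by rw [Matrix.sub_mulVec, algmap_mulVec, hv, sub_self]⟩

lemma le_sSup_spec {μ : ℝ} (h : μ ∈ spectrum ℝ A) : μ ≤ sSup (spectrum ℝ A) :=
  le_csSup (spec_bddAbove A) h

lemma posSemidef_sSup_smul_sub (hA : A.IsHermitian) (hN : 0 < N) :
    Matrix.PosSemidef (sSup (spectrum ℝ A) • (1 : Matrix (Fin N) (Fin N) ℝ) - A) := by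
  set q := sSup (spectrum ℝ A) with hq
  have hB : (q • (1 : Matrix (Fin N) (Fin N) ℝ) - A).IsHermitian := by
    unfold Matrix.IsHermitian
    rw [Matrix.conjTranspose_sub, Matrix.conjTranspose_smul, Matrix.conjTranspose_one, hA]
    simp
  refine hB.posSemidef_iff_eigenvalues_nonneg.mpr (fun i => ?_)
  set μ := hB.eigenvalues i
  have hvec := hB.mulVec_eigenvectorBasis i
  set v : Fin N → ℝ := ⇑(hB.eigenvectorBasis i) with hv
  have hv0 : v ≠ 0 := by
    rw [hv, Ne, WithLp.ofLp_eq_zero]; exact hB.eigenvectorBasis.orthonormal.ne_zero i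
  have hAv : A *ᵥ v = (q - μ) • v := by
    have : (q • (1 : Matrix (Fin N) (Fin N) ℝ) - A) *ᵥ v = μ • v := hvec
    rw [Matrix.sub_mulVec, Matrix.smul_mulVec, Matrix.one_mulVec] at this
    have h2 : A *ᵥ v = q • v - μ • v := by rw [← this]; abel
    rw [sub_smul]; exact h2
  have : q - μ ≤ q := le_sSup_spec (mem_spectrum_of_eigvec hv0 hAv)
  change (0:ℝ) ≤ μ
  linarith

lemma rayleigh_le (hA : A.IsHermitian) (hN : 0 < N) (x : Fin N → ℝ) :
    x ⬝ᵥ (A *ᵥ x) ≤ sSup (spectrum ℝ A) * (x ⬝ᵥ x) := by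
  have h := (posSemidef_sSup_smul_sub hA hN).dotProduct_mulVec_nonneg x
  rw [star_trivial, Matrix.sub_mulVec, Matrix.smul_mulVec, Matrix.one_mulVec,
    dotProduct_sub, dotProduct_smul] at h
  simp only [smul_eq_mul] at h
  linarith

end SymSpec

section NonnegEig

variable {A : Matrix (Fin N) (Fin N) ℝ}

lemma qf_abs_ge (hnn : ∀ i j, 0 ≤ A i j) (x : Fin N → ℝ) :
    x ⬝ᵥ (A *ᵥ x) ≤ (fun i => |x i|) ⬝ᵥ (A *ᵥ fun i => |x i|) := by
  simp only [dotProduct, Matrix.mulVec]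
  refine Finset.sum_le_sum (fun i _ => ?_)
  rw [Finset.mul_sum, Finset.mul_sum]
  refine Finset.sum_le_sum (fun j _ => ?_)
  calc x i * (A i j * x j) = A i j * (x i * x j) := by ring
    _ ≤ A i j * (|x i| * |x j|) := by
        refine mul_le_mul_of_nonneg_left ?_ (hnn i j)
        calc x i * x j ≤ |x i * x j| := le_abs_self _
          _ = |x i| * |x j| := abs_mul _ _
    _ = |x i| * (A i j * |x j|) := by ring

lemma dotProduct_self_nonneg (x : Fin N → ℝ) : 0 ≤ x ⬝ᵥ x :=
  Finset.sum_nonneg (fun i _ => mul_self_nonneg _)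

lemma dotProduct_self_pos {x : Fin N → ℝ} (hx : x ≠ 0) : 0 < x ⬝ᵥ x := by
  rcases Function.ne_iff.mp hx with ⟨i, hi⟩
  have hi' : 0 < x i * x i := mul_self_pos.mpr hi
  have : ∑ j, x j * x j ≥ x i * x i :=
    Finset.single_le_sum (f := fun j => x j * x j) (fun j _ => mul_self_nonneg _)
      (Finset.mem_univ i)
  calc (0:ℝ) < x i * x i := hi'
    _ ≤ x ⬝ᵥ x := this

lemma exists_nonneg_eigvec (hA : A.IsHermitian) (hN : 0 < N) (hnn : ∀ i j, 0 ≤ A i j) :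
    ∃ y : Fin N → ℝ, y ≠ 0 ∧ (∀ i, 0 ≤ y i) ∧
      A *ᵥ y = sSup (spectrum ℝ A) • y := by
  set q := sSup (spectrum ℝ A) with hq
  obtain ⟨x, hx0, hx⟩ := eigvec_of_mem_spectrum (sSup_spec_mem hA hN)
  set y : Fin N → ℝ := fun i => |x i| with hy
  have hy0 : y ≠ 0 := by
    rcases Function.ne_iff.mp hx0 with ⟨i, hi⟩
    exact Function.ne_iff.mpr ⟨i, by simpa [hy] using hi⟩
  have hyy : y ⬝ᵥ y = x ⬝ᵥ x := by
    simp only [dotProduct, hy, abs_mul_abs_self]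
  have hqx : x ⬝ᵥ (A *ᵥ x) = q * (x ⬝ᵥ x) := by
    rw [hx, dotProduct_smul, smul_eq_mul]
  have h1 : q * (x ⬝ᵥ x) ≤ y ⬝ᵥ (A *ᵥ y) := hqx ▸ qf_abs_ge hnn x
  have h2 : y ⬝ᵥ (A *ᵥ y) ≤ q * (y ⬝ᵥ y) := rayleigh_le hA hN y
  have heq : y ⬝ᵥ (A *ᵥ y) = q * (y ⬝ᵥ y) := le_antisymm h2 (hyy ▸ h1)
  have hzero : y ⬝ᵥ ((q • (1 : Matrix (Fin N) (Fin N) ℝ) - A) *ᵥ y) = 0 := by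
    rw [Matrix.sub_mulVec, Matrix.smul_mulVec, Matrix.one_mulVec,
      dotProduct_sub, dotProduct_smul, heq, smul_eq_mul, sub_self]
  have := ((posSemidef_sSup_smul_sub hA hN).dotProduct_mulVec_zero_iff y).mp
    (by rw [star_trivial]; exact hzero)
  rw [Matrix.sub_mulVec, Matrix.smul_mulVec, Matrix.one_mulVec, sub_eq_zero] at this
  exact ⟨y, hy0, fun i => abs_nonneg _, this.symm⟩

end NonnegEig

section GraphQF

variable (G : SimpleGraph (Fin N)) [DecidableRel G.Adj]

lemma sL_isHermitian : (signlessLaplacian G).IsHermitian := by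
  unfold signlessLaplacian Matrix.IsHermitian
  rw [Matrix.conjTranspose_add]
  congr 1
  · simp [Matrix.diagonal_conjTranspose]
  · rw [Matrix.conjTranspose_eq_transpose_of_trivial]
    exact SimpleGraph.transpose_adjMatrix G

lemma sL_nonneg : ∀ i j, 0 ≤ signlessLaplacian G i j := by
  intro i j
  unfold signlessLaplacian
  rw [Matrix.add_apply]
  refine add_nonneg ?_ ?_
  · by_cases h : i = j <;> simp [Matrix.diagonal_apply, h]
  · rw [SimpleGraph.adjMatrix_apply]
    by_cases h : G.Adj i j <;> simp [h]

lemma degree_eq_sum (v : Fin N) :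
    (G.degree v : ℝ) = ∑ u, (if G.Adj v u then (1:ℝ) else 0) := by
  rw [Finset.sum_boole]
  simp [SimpleGraph.degree, SimpleGraph.neighborFinset_eq_filter]

lemma qf_expand (x : Fin N → ℝ) :
    2 * (x ⬝ᵥ (signlessLaplacian G *ᵥ x)) =
      ∑ a, ∑ b, (if G.Adj a b then (x a + x b)^2 else 0) := by
  have key : ∀ a b, (if G.Adj a b then (x a + x b)^2 else 0)
      = (if G.Adj a b then (1:ℝ) else 0) * (x a)^2
        + (if G.Adj b a then (1:ℝ) else 0) * (x b)^2
        + 2 * (if G.Adj a b then (1:ℝ) else 0) * (x a * x b) := by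
    intro a b
    by_cases h : G.Adj a b
    · rw [if_pos h, if_pos h, if_pos h.symm]; ring
    · rw [if_neg h, if_neg h, if_neg (fun hh => h hh.symm)]; ring
  unfold signlessLaplacian
  rw [Matrix.add_mulVec, dotProduct_add]
  simp only [key, Finset.sum_add_distrib]
  rw [mul_add]
  congr 1
  · have hd : x ⬝ᵥ (Matrix.diagonal (fun i => (G.degree i : ℝ)) *ᵥ x)
        = ∑ a, (G.degree a : ℝ) * (x a)^2 := by
      simp [Matrix.mulVec_diagonal, dotProduct]
      exact Finset.sum_congr rfl (fun a _ => by ring)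
    rw [hd]
    have h1 : ∀ a, ∑ b, (if G.Adj a b then (1:ℝ) else 0) * (x a)^2
        = (G.degree a : ℝ) * (x a)^2 := by
      intro a
      rw [← Finset.sum_mul, ← degree_eq_sum]
    have h2 : ∑ a, ∑ b, (if G.Adj b a then (1:ℝ) else 0) * (x b)^2
        = ∑ a, (G.degree a : ℝ) * (x a)^2 := by
      rw [Finset.sum_comm]
      exact Finset.sum_congr rfl (fun a _ => by
        rw [← Finset.sum_mul, ← degree_eq_sum])
    simp only [h1, h2]
    ring
  · have : x ⬝ᵥ (G.adjMatrix ℝ *ᵥ x)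
        = ∑ a, ∑ b, (if G.Adj a b then (1:ℝ) else 0) * (x a * x b) := by
      simp only [dotProduct, Matrix.mulVec, Finset.mul_sum]
      refine Finset.sum_congr rfl (fun a _ => Finset.sum_congr rfl (fun b _ => ?_))
      rw [SimpleGraph.adjMatrix_apply]
      by_cases h : G.Adj a b <;> simp [h]
    rw [this, Finset.mul_sum]
    refine Finset.sum_congr rfl (fun a _ => ?_)
    rw [Finset.mul_sum]
    refine Finset.sum_congr rfl (fun b _ => by ring)

end GraphQF

section MoreGeneric

variable {A B : Matrix (Fin N) (Fin N) ℝ}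

lemma qf_le_entrywise (hAB : ∀ i j, A i j ≤ B i j) {x : Fin N → ℝ} (hx : ∀ i, 0 ≤ x i) :
    x ⬝ᵥ (A *ᵥ x) ≤ x ⬝ᵥ (B *ᵥ x) := by
  simp only [dotProduct, Matrix.mulVec]
  refine Finset.sum_le_sum (fun i _ => ?_)
  refine mul_le_mul_of_nonneg_left (Finset.sum_le_sum (fun j _ => ?_)) (hx i)
  exact mul_le_mul_of_nonneg_right (hAB i j) (hx j)

lemma sSup_ge_diag (hA : A.IsHermitian) (hN : 0 < N) (i : Fin N) :
    A i i ≤ sSup (spectrum ℝ A) := by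
  have h := rayleigh_le hA hN (fun a => if a = i then 1 else 0)
  have h1 : (fun a => if a = i then (1:ℝ) else 0) ⬝ᵥ (fun a => if a = i then (1:ℝ) else 0)
      = 1 := by simp [dotProduct]
  have h2 : (fun a => if a = i then (1:ℝ) else 0) ⬝ᵥ
      (A *ᵥ (fun a => if a = i then (1:ℝ) else 0)) = A i i := by
    simp [dotProduct, Matrix.mulVec]
  rw [h1, h2, mul_one] at h
  exact h

variable (G H : SimpleGraph (Fin N)) [DecidableRel G.Adj] [DecidableRel H.Adj]

lemma sL_entrywise_mono (hGH : ∀ a b, G.Adj a b → H.Adj a b) :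
    ∀ i j, signlessLaplacian G i j ≤ signlessLaplacian H i j := by
  intro i j
  unfold signlessLaplacian
  rw [Matrix.add_apply, Matrix.add_apply]
  refine add_le_add ?_ ?_
  · by_cases h : i = j
    · subst h
      simp only [Matrix.diagonal_apply_eq, Nat.cast_le, SimpleGraph.degree]
      refine Finset.card_le_card (fun v hv => ?_)
      rw [SimpleGraph.mem_neighborFinset] at hv ⊢
      exact hGH _ _ hv
    · simp [Matrix.diagonal_apply_ne _ h]
  · rw [SimpleGraph.adjMatrix_apply, SimpleGraph.adjMatrix_apply]
    by_cases h : G.Adj i j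
    · simp [h, hGH _ _ h]
    · simp [h]
      positivity

lemma qsup_mono (hGH : ∀ a b, G.Adj a b → H.Adj a b) (hN : 0 < N) :
    sSup (spectrum ℝ (signlessLaplacian G)) ≤ sSup (spectrum ℝ (signlessLaplacian H)) := by
  obtain ⟨x, hx0, hx⟩ := eigvec_of_mem_spectrum (sSup_spec_mem (sL_isHermitian G) hN)
  set qG := sSup (spectrum ℝ (signlessLaplacian G))
  have h1 : x ⬝ᵥ (signlessLaplacian G *ᵥ x) = qG * (x ⬝ᵥ x) := by
    rw [hx, dotProduct_smul, smul_eq_mul]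
  have h2 := qf_abs_ge (sL_nonneg G) x
  have h3 := qf_le_entrywise (sL_entrywise_mono G H hGH) (x := fun i => |x i|)
    (fun i => abs_nonneg _)
  have h4 := rayleigh_le (sL_isHermitian H) hN (fun i => |x i|)
  have habs : (fun i => |x i|) ⬝ᵥ (fun i => |x i|) = x ⬝ᵥ x := by
    simp only [dotProduct, abs_mul_abs_self]
  rw [habs] at h4
  have hpos := dotProduct_self_pos hx0
  have := h1 ▸ (h2.trans (h3.trans h4))
  exact le_of_mul_le_mul_right (by linarith) hpos

end MoreGeneric

section PermLemma

lemma card_filter_val_lt {m s : ℕ} (h : s ≤ m) :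
    ((Finset.univ : Finset (Fin m)).filter (fun v => v.val < s)).card = s := by
  have : (Finset.univ : Finset (Fin m)).filter (fun v => v.val < s)
      = (Finset.univ : Finset (Fin s)).map (Fin.castLEEmb h) := by
    ext v
    simp only [Finset.mem_filter, Finset.mem_univ, true_and, Finset.mem_map]
    constructor
    · intro hv
      exact ⟨⟨v.val, hv⟩, Fin.ext (by simp)⟩
    · rintro ⟨u, rfl⟩
      simpa using u.2
  rw [this, Finset.card_map, Finset.card_univ, Fintype.card_fin]

lemma exists_perm_finset {n k : ℕ} (C : Finset (Fin n)) (hC : C.card = k) :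
    ∃ σ : Equiv.Perm (Fin n), ∀ a, (a ∈ C ↔ (σ a).val < k) := by
  have hkn : k ≤ n := by
    rw [← hC]
    simpa using Finset.card_le_card (Finset.subset_univ C)
  have hc1 : Fintype.card {x // x ∈ C} = Fintype.card {x : Fin n // x.val < k} := by
    rw [Fintype.card_coe, hC, Fintype.card_subtype]
    exact (card_filter_val_lt hkn).symm
  have hc2 : Fintype.card {x // ¬ x ∈ C} = Fintype.card {x : Fin n // ¬ x.val < k} := by
    rw [Fintype.card_subtype_compl, Fintype.card_subtype_compl, hc1]
  obtain ⟨e⟩ := Fintype.card_eq.mp hc1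
  obtain ⟨f⟩ := Fintype.card_eq.mp hc2
  refine ⟨Equiv.subtypeCongr e f, fun a => ?_⟩
  by_cases h : a ∈ C
  · simp only [h, true_iff]
    have : Equiv.subtypeCongr e f a = (e ⟨a, h⟩ : Fin n) := by
      simp [Equiv.subtypeCongr, h]
    rw [this]
    exact (e ⟨a, h⟩).2
  · simp only [h, false_iff]
    have : Equiv.subtypeCongr e f a = (f ⟨a, h⟩ : Fin n) := by
      simp [Equiv.subtypeCongr, h]
    rw [this]
    exact (f ⟨a, h⟩).2

end PermLemma

section Augment

variable {n : ℕ}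

/-- The graph `G` together with all edges from `w`. -/
def augment (G : SimpleGraph (Fin n)) (w : Fin n) : SimpleGraph (Fin n) where
  Adj a b := a ≠ b ∧ (a = w ∨ b = w ∨ G.Adj a b)
  symm := ⟨by
    intro a b h
    refine ⟨h.1.symm, ?_⟩
    rcases h.2 with h' | h' | h'
    · exact Or.inr (Or.inl h')
    · exact Or.inl h'
    · exact Or.inr (Or.inr h'.symm)⟩
  loopless := ⟨fun a h => h.1 rfl⟩

instance augmentDec (G : SimpleGraph (Fin n)) [DecidableRel G.Adj] (w : Fin n) :
    DecidableRel (augment G w).Adj := fun a b =>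
  inferInstanceAs (Decidable (a ≠ b ∧ (a = w ∨ b = w ∨ G.Adj a b)))

lemma augment_adj {G : SimpleGraph (Fin n)} {w a b : Fin n} :
    (augment G w).Adj a b ↔ a ≠ b ∧ (a = w ∨ b = w ∨ G.Adj a b) := Iff.rfl

lemma adj_augment {G : SimpleGraph (Fin n)} {w a b : Fin n} (h : G.Adj a b) :
    (augment G w).Adj a b := ⟨h.ne, Or.inr (Or.inr h)⟩

lemma augment_degree_w (G : SimpleGraph (Fin n)) [DecidableRel G.Adj] (w : Fin n) :
    (augment G w).degree w = n - 1 := by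
  have : (augment G w).neighborFinset w = Finset.univ.erase w := by
    ext b
    rw [SimpleGraph.mem_neighborFinset, augment_adj, Finset.mem_erase]
    constructor
    · rintro ⟨h1, -⟩
      exact ⟨fun hb => h1 hb.symm, Finset.mem_univ _⟩
    · rintro ⟨h1, -⟩
      exact ⟨fun hb => h1 hb.symm, Or.inl rfl⟩
  rw [SimpleGraph.degree, this, Finset.card_erase_of_mem (Finset.mem_univ _),
    Finset.card_univ, Fintype.card_fin]

end Augment

end Stmt10Aux

set_option maxHeartbeats 4000000 in
open Stmt10Aux in
theorem stmt10 {n k t : ℕ} (hk : 3 ≤ k) (ht : 2 ≤ t) (G : SimpleGraph (Fin n))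
    [DecidableRel G.Adj] (w : Fin n) (P : Fin t → Finset (Fin n))
    (hdisj : ∀ i j, i ≠ j → Disjoint (P i) (P j))
    (hcover : Finset.univ.biUnion P = Finset.univ.erase w)
    (hsep : ∀ i j, i ≠ j → ∀ a ∈ P i, ∀ b ∈ P j, ¬ G.Adj a b)
    (hcard : ∀ i, k - 1 ≤ (P i).card)
    (hiso : ∀ i, Nonempty ((G.induce ↑(P i)) ≃g Snk (P i).card (k - 1))) :
    qIndex G < qIndex (Snk n k) := by
  classical
  have hn0 : 0 < n := w.pos
  set s := k - 1 with hs_def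
  have hs2 : 2 ≤ s := by omega
  have hks : k = s + 1 := by omega
  -- basic part facts
  have hPw : ∀ i, w ∉ P i := by
    intro i hw
    have : w ∈ Finset.univ.biUnion P := Finset.mem_biUnion.mpr ⟨i, Finset.mem_univ _, hw⟩
    rw [hcover, Finset.mem_erase] at this
    exact this.1 rfl
  have hPne : ∀ i a, a ∈ P i → a ≠ w := fun i a ha h => hPw i (h ▸ ha)
  have hPmem : ∀ a, a ≠ w → ∃ i, a ∈ P i := by
    intro a ha
    have : a ∈ Finset.univ.biUnion P := by
      rw [hcover, Finset.mem_erase]; exact ⟨ha, Finset.mem_univ _⟩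
    obtain ⟨i, -, hi⟩ := Finset.mem_biUnion.mp this
    exact ⟨i, hi⟩
  have hdiff : ∀ {i j : Fin t} {a b : Fin n}, i ≠ j → a ∈ P i → b ∈ P j → a ≠ b := by
    intro i j a b hij ha hb h
    exact (Finset.disjoint_left.mp (hdisj _ _ hij) ha) (h ▸ hb)
  -- dominating sets
  have e : ∀ i, (G.induce ↑(P i)) ≃g Snk (P i).card s := fun i => (hiso i).some
  set D : Fin t → Finset (Fin n) := fun i =>
    ((P i).attach.filter (fun a => ((e i) ⟨a.1, Finset.mem_coe.mpr a.2⟩).val < s)).image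
      Subtype.val with hD_def
  have hDsub : ∀ i, D i ⊆ P i := by
    intro i a ha
    rw [hD_def] at ha
    simp only [Finset.mem_image, Finset.mem_filter, Finset.mem_attach, true_and] at ha
    obtain ⟨x, -, rfl⟩ := ha
    exact x.2
  have hDmem : ∀ i a (ha : a ∈ P i),
      (a ∈ D i ↔ ((e i) ⟨a, Finset.mem_coe.mpr ha⟩).val < s) := by
    intro i a ha
    rw [hD_def]
    simp only [Finset.mem_image, Finset.mem_filter, Finset.mem_attach, true_and]
    constructor
    · rintro ⟨x, hx, rfl⟩
      convert hx using 3
    · intro h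
      exact ⟨⟨a, ha⟩, h, rfl⟩
  have hDcard : ∀ i, (D i).card = s := by
    intro i
    rw [hD_def]
    rw [Finset.card_image_of_injective _ Subtype.val_injective]
    have hinj : Function.Injective (fun a : {x // x ∈ P i} =>
        (e i) ⟨a.1, Finset.mem_coe.mpr a.2⟩) := by
      intro x y hxy
      have := (e i).toEquiv.injective hxy
      exact Subtype.ext (congrArg Subtype.val this)
    have himg : ((P i).attach.filter
        (fun a => ((e i) ⟨a.1, Finset.mem_coe.mpr a.2⟩).val < s)).image
          (fun a => (e i) ⟨a.1, Finset.mem_coe.mpr a.2⟩)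
        = (Finset.univ : Finset (Fin (P i).card)).filter (fun v => v.val < s) := by
      ext v
      simp only [Finset.mem_image, Finset.mem_filter, Finset.mem_attach, true_and,
        Finset.mem_univ]
      constructor
      · rintro ⟨x, hx, rfl⟩
        exact hx
      · intro hv
        set x := (e i).symm v with hx_def
        refine ⟨⟨x.1, x.2⟩, ?_, ?_⟩ <;>
        · have hxx : (⟨x.1, Finset.mem_coe.mpr x.2⟩ : ↑(↑(P i) : Set (Fin n))) = x :=
            Subtype.ext rfl
          rw [hxx, hx_def]
          simp [hv]
    calc ((P i).attach.filter _).card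
        = (((P i).attach.filter _).image
            (fun a => (e i) ⟨a.1, Finset.mem_coe.mpr a.2⟩)).card := by
          rw [Finset.card_image_of_injective _ hinj]
      _ = s := by rw [himg]; exact card_filter_val_lt (hcard i)
  have hchar : ∀ i a b, a ∈ P i → b ∈ P i →
      (G.Adj a b ↔ (a ≠ b ∧ (a ∈ D i ∨ b ∈ D i))) := by
    intro i a b ha hb
    have hind : (G.induce ↑(P i)).Adj ⟨a, Finset.mem_coe.mpr ha⟩ ⟨b, Finset.mem_coe.mpr hb⟩
        ↔ G.Adj a b := Iff.rfl
    rw [← hind, ← (e i).map_adj_iff]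
    have hSnk : ∀ (x y : Fin (P i).card), (Snk (P i).card s).Adj x y ↔
        (x ≠ y ∧ (x.val < s ∨ y.val < s)) := fun x y => Iff.rfl
    rw [hSnk]
    rw [hDmem i a ha, hDmem i b hb]
    constructor
    · rintro ⟨hne, h⟩
      refine ⟨fun hab => hne (by congr 1; exact Subtype.ext hab), h⟩
    · rintro ⟨hne, h⟩
      refine ⟨fun hxy => hne ?_, h⟩
      have := (e i).toEquiv.injective hxy
      exact congrArg Subtype.val this
  have hwD : ∀ i, w ∉ D i := fun i hw => hPw i (hDsub i hw)
  have hDne : ∀ i, (D i).Nonempty := by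
    intro i
    rw [← Finset.card_pos, hDcard i]; omega
  -- cardinality bounds
  have hsum : ∑ i, (P i).card = n - 1 := by
    rw [← Finset.card_biUnion (fun i _ j _ hij => hdisj i j hij), hcover,
      Finset.card_erase_of_mem (Finset.mem_univ _), Finset.card_univ, Fintype.card_fin]
  have hmle : ∀ j, (P j).card + 3 ≤ n := by
    intro j
    obtain ⟨j', hj'⟩ := Fintype.exists_ne_of_one_lt_card (by simp; omega) j
    have hsub : ({j, j'} : Finset (Fin t)) ⊆ Finset.univ := Finset.subset_univ _
    have hpair : ∑ i ∈ ({j, j'} : Finset (Fin t)), (P i).card ≤ ∑ i, (P i).card :=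
      Finset.sum_le_sum_of_subset hsub
    rw [Finset.sum_pair (fun h => hj' h.symm)] at hpair
    have := hcard j'
    omega
  -- the augmented graph and its top eigenvector
  set G' := augment G w with hG'_def
  set A' := signlessLaplacian G' with hA'_def
  have hherm : A'.IsHermitian := sL_isHermitian G'
  have hnn : ∀ i j, 0 ≤ A' i j := sL_nonneg G'
  set q' := sSup (spectrum ℝ A') with hq'_def
  obtain ⟨y, hy0, hynn, hyeig⟩ := exists_nonneg_eigvec hherm hn0 hnn
  have hq'n : (n:ℝ) - 1 ≤ q' := by
    have h := sSup_ge_diag hherm hn0 w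
    have : A' w w = ((n:ℝ) - 1) := by
      rw [hA'_def]
      unfold signlessLaplacian
      rw [Matrix.add_apply, Matrix.diagonal_apply_eq, SimpleGraph.adjMatrix_apply,
        if_neg (G'.irrefl (v := w)), augment_degree_w]
      push_cast [Nat.cast_sub (by omega : 1 ≤ n)]
      ring
    rw [this] at h
    exact h
  -- neighborhoods of dominating vertices in G'
  have hneigh : ∀ j, ∀ u ∈ D j, G'.neighborFinset u = insert w ((P j).erase u) := by
    intro j u hu
    have huP : u ∈ P j := hDsub j hu
    ext b
    rw [SimpleGraph.mem_neighborFinset, Finset.mem_insert, Finset.mem_erase]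
    constructor
    · rintro ⟨hne, h | h | h⟩
      · exact absurd h (hPne j u huP)
      · exact Or.inl h
      · by_cases hbw : b = w
        · exact Or.inl hbw
        · obtain ⟨j', hj'⟩ := hPmem b hbw
          right
          have hjj : j' = j := by
            by_contra hjj
            exact hsep j j' (fun hh => hjj hh.symm) u huP b hj' h
          exact ⟨fun hb => hne hb.symm, hjj ▸ hj'⟩
    · rintro (rfl | ⟨hbu, hbP⟩)
      · exact ⟨hPne j u huP, Or.inr (Or.inl rfl)⟩
      · have : G.Adj u b := (hchar j u b huP hbP).mpr ⟨fun h => hbu h.symm, Or.inl hu⟩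
        exact ⟨this.ne, Or.inr (Or.inr this)⟩
  have hdegu : ∀ j, ∀ u ∈ D j, G'.degree u = (P j).card := by
    intro j u hu
    rw [SimpleGraph.degree, hneigh j u hu,
      Finset.card_insert_of_notMem (fun hw => hPw j (Finset.mem_of_mem_erase hw)),
      Finset.card_erase_of_mem (hDsub j hu)]
    have : 1 ≤ (P j).card := le_trans (by omega) (hcard j)
    omega
  -- eigen-equation at dominating vertices
  have hrow : ∀ j, ∀ u ∈ D j,
      (q' - (P j).card + 1) * y u = y w + ∑ v ∈ P j, y v := by
    intro j u hu
    have huP : u ∈ P j := hDsub j hu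
    have h := congrFun hyeig u
    rw [← hq'_def, hA'_def] at h
    unfold signlessLaplacian at h
    rw [Matrix.add_mulVec, Pi.add_apply, Matrix.mulVec_diagonal,
      SimpleGraph.adjMatrix_mulVec_apply, hneigh j u hu,
      Finset.sum_insert (fun hw => hPw j (Finset.mem_of_mem_erase hw)),
      Finset.sum_erase_eq_sub huP, hdegu j u hu, Pi.smul_apply, smul_eq_mul] at h
    linarith [h]
  have hdenpos : ∀ j, (0:ℝ) < q' - (P j).card + 1 := by
    intro j
    have h3 := hmle j
    have : ((P j).card : ℝ) + 3 ≤ (n : ℝ) := by exact_mod_cast h3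
    linarith
  set d : Fin t → ℝ := fun j => (y w + ∑ v ∈ P j, y v) / (q' - (P j).card + 1) with hd_def
  have hyd : ∀ j, ∀ u ∈ D j, y u = d j := by
    intro j u hu
    rw [hd_def]
    rw [eq_div_iff (ne_of_gt (hdenpos j))]
    rw [mul_comm]
    exact hrow j u hu
  have hd0 : ∀ j, 0 ≤ d j := by
    intro j
    apply div_nonneg _ (le_of_lt (hdenpos j))
    exact add_nonneg (hynn w) (Finset.sum_nonneg (fun v _ => hynn v))
  obtain ⟨i₁, -, hmax⟩ := Finset.exists_max_image (Finset.univ : Finset (Fin t)) d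
    ⟨⟨0, by omega⟩, Finset.mem_univ _⟩
  have hmax' : ∀ j, d j ≤ d i₁ := fun j => hmax j (Finset.mem_univ _)
  have hd1 : 0 < d i₁ := by
    by_contra h
    push_neg at h
    have hall : ∀ j, d j = 0 := fun j => le_antisymm (le_trans (hmax' j) h) (hd0 j)
    have hcj : ∀ j, y w + ∑ v ∈ P j, y v = 0 := by
      intro j
      obtain ⟨u, hu⟩ := hDne j
      rw [← hrow j u hu, hyd j u hu, hall j, mul_zero]
    have hyw : y w = 0 := by
      have h1 := hcj i₁
      have h2 : 0 ≤ ∑ v ∈ P i₁, y v := Finset.sum_nonneg (fun v _ => hynn v)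
      linarith [hynn w]
    have hyP : ∀ j, ∀ v ∈ P j, y v = 0 := by
      intro j v hv
      have h1 := hcj j
      rw [hyw, zero_add] at h1
      exact (Finset.sum_eq_zero_iff_of_nonneg (fun v _ => hynn v)).mp h1 v hv
    apply hy0
    funext v
    by_cases hv : v = w
    · rw [hv]; exact hyw
    · obtain ⟨j, hj⟩ := hPmem v hv
      exact hyP j v hj
  -- the clique and the permutation
  set C : Finset (Fin n) := insert w (D i₁) with hC_def
  have hCcard : C.card = k := by
    rw [hC_def, Finset.card_insert_of_notMem (hwD i₁), hDcard i₁]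
    omega
  obtain ⟨σ, hσ⟩ := exists_perm_finset C hCcard
  set SA : Fin n → Fin n → Prop := fun a b => a ≠ b ∧ (a ∈ C ∨ b ∈ C) with hSA_def
  -- the difference function
  set g : Fin n → Fin n → ℝ := fun a b =>
    (if SA a b then (y a + y b)^2 else 0) - (if G'.Adj a b then (y a + y b)^2 else 0)
    with hg_def
  -- symmetry of g
  have hgsymm : ∀ a b, g a b = g b a := by
    intro a b
    have h1 : SA a b ↔ SA b a := by
      simp only [hSA_def]
      constructor <;> rintro ⟨h1, h2⟩ <;> exact ⟨h1.symm, h2.symm⟩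
    have h2 : G'.Adj a b ↔ G'.Adj b a := ⟨SimpleGraph.Adj.symm, SimpleGraph.Adj.symm⟩
    have h3 : (y a + y b)^2 = (y b + y a)^2 := by ring
    simp only [hg_def]
    rw [if_congr h1 h3 rfl, if_congr h2 h3 rfl]
  have hwC : w ∈ C := by rw [hC_def]; exact Finset.mem_insert_self _ _
  have hmemC : ∀ a, a ∈ C ↔ (a = w ∨ a ∈ D i₁) := by
    intro a; rw [hC_def]; exact Finset.mem_insert
  have hgw : ∀ a b : Fin n, a = w ∨ b = w → g a b = 0 := by
    intro a b hab
    have hiff : SA a b ↔ G'.Adj a b := by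
      simp only [hSA_def, hG'_def, augment_adj]
      constructor
      · rintro ⟨h1, -⟩
        rcases hab with rfl | rfl
        · exact ⟨h1, Or.inl rfl⟩
        · exact ⟨h1, Or.inr (Or.inl rfl)⟩
      · rintro ⟨h1, -⟩
        rcases hab with rfl | rfl
        · exact ⟨h1, Or.inl hwC⟩
        · exact ⟨h1, Or.inr hwC⟩
    simp only [hg_def]
    rw [if_congr hiff rfl rfl, sub_self]
  -- same-part adjacency in G'
  have hadj_same : ∀ i, ∀ a ∈ P i, ∀ b ∈ P i,
      (G'.Adj a b ↔ (a ≠ b ∧ (a ∈ D i ∨ b ∈ D i))) := by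
    intro i a ha b hb
    simp only [hG'_def, augment_adj]
    constructor
    · rintro ⟨h1, rfl | h' | h'⟩
      · exact absurd rfl (hPne i a ha)
      · exact absurd h' (hPne i b hb)
      · exact ⟨h1, ((hchar i a b ha hb).mp h').2⟩
    · rintro ⟨h1, h2⟩
      exact ⟨h1, Or.inr (Or.inr ((hchar i a b ha hb).mpr ⟨h1, h2⟩))⟩
  -- the part-pair sums
  set T : Fin t → Fin t → ℝ := fun i j => ∑ a ∈ P i, ∑ b ∈ P j, g a b with hT_def
  have hTsymm : ∀ i j, T i j = T j i := by
    intro i j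
    simp only [hT_def]
    rw [Finset.sum_comm]
    exact Finset.sum_congr rfl fun a _ => Finset.sum_congr rfl fun b _ => hgsymm _ _
  have hsum_eq : ∑ a, ∑ b, g a b = ∑ i, ∑ j, T i j := by
    have hpd : ∀ x ∈ (Finset.univ : Finset (Fin t)), ∀ y ∈ (Finset.univ : Finset (Fin t)),
        x ≠ y → Disjoint (P x) (P y) := fun x _ y _ hxy => hdisj x y hxy
    have hinner : ∀ a, ∑ b, g a b = ∑ j, ∑ b ∈ P j, g a b := by
      intro a
      have h1 : ∑ b, g a b = ∑ b ∈ Finset.univ.erase w, g a b := by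
        rw [← Finset.sum_erase_add Finset.univ _ (Finset.mem_univ w),
          hgw a w (Or.inr rfl), add_zero]
      rw [h1, ← hcover, Finset.sum_biUnion hpd]
    have houter : ∑ a, (∑ j, ∑ b ∈ P j, g a b)
        = ∑ i, ∑ a ∈ P i, ∑ j, ∑ b ∈ P j, g a b := by
      have h1 : ∑ a, (∑ j, ∑ b ∈ P j, g a b)
          = ∑ a ∈ Finset.univ.erase w, ∑ j, ∑ b ∈ P j, g a b := by
        rw [← Finset.sum_erase_add Finset.univ _ (Finset.mem_univ w)]
        have : ∑ j, ∑ b ∈ P j, g w b = 0 :=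
          Finset.sum_eq_zero fun j _ => Finset.sum_eq_zero fun b _ => hgw w b (Or.inl rfl)
        rw [this, add_zero]
      rw [h1, ← hcover, Finset.sum_biUnion hpd]
    calc ∑ a, ∑ b, g a b = ∑ a, (∑ j, ∑ b ∈ P j, g a b) :=
          Finset.sum_congr rfl fun a _ => hinner a
      _ = ∑ i, ∑ a ∈ P i, ∑ j, ∑ b ∈ P j, g a b := houter
      _ = ∑ i, ∑ j, T i j := by
          refine Finset.sum_congr rfl fun i _ => ?_
          rw [Finset.sum_comm]
  -- vanishing blocks
  have hcross0 : ∀ i j, i ≠ i₁ → j ≠ i₁ → i ≠ j → T i j = 0 := by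
    intro i j hi hj hij
    simp only [hT_def]
    refine Finset.sum_eq_zero fun a ha => Finset.sum_eq_zero fun b hb => ?_
    have hSA : ¬ SA a b := by
      rintro ⟨-, h | h⟩
      · rcases (hmemC a).mp h with rfl | hD
        · exact hPne i a ha rfl
        · exact (Finset.disjoint_left.mp (hdisj i i₁ hi) ha) (hDsub i₁ hD)
      · rcases (hmemC b).mp h with rfl | hD
        · exact hPne j b hb rfl
        · exact (Finset.disjoint_left.mp (hdisj j i₁ hj) hb) (hDsub i₁ hD)
    have hG'n : ¬ G'.Adj a b := by
      rintro ⟨-, h | h | h⟩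
      · exact hPne i a ha h
      · exact hPne j b hb h
      · exact hsep i j hij a ha b hb h
    simp [hg_def, hSA, hG'n]
  have hself : T i₁ i₁ = 0 := by
    simp only [hT_def]
    refine Finset.sum_eq_zero fun a ha => Finset.sum_eq_zero fun b hb => ?_
    have hiff : SA a b ↔ G'.Adj a b := by
      rw [hadj_same i₁ a ha b hb]
      simp only [hSA_def, hmemC]
      constructor
      · rintro ⟨h1, h2⟩
        refine ⟨h1, ?_⟩
        rcases h2 with (rfl | hD) | (rfl | hD)
        · exact absurd rfl (hPne i₁ a ha)
        · exact Or.inl hD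
        · exact absurd rfl (hPne i₁ b hb)
        · exact Or.inr hD
      · rintro ⟨h1, h2⟩
        exact ⟨h1, h2.imp (fun h => Or.inr h) (fun h => Or.inr h)⟩
    simp only [hg_def]
    rw [if_congr hiff rfl rfl, sub_self]
  -- the added edges
  have hTadd : ∀ j, j ≠ i₁ → T i₁ j = (s:ℝ) * ∑ b ∈ P j, (d i₁ + y b)^2 := by
    intro j hj
    have hterm : ∀ a ∈ P i₁, ∀ b ∈ P j,
        g a b = if a ∈ D i₁ then (y a + y b)^2 else 0 := by
      intro a ha b hb
      have hij : i₁ ≠ j := fun h => hj h.symm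
      have hne : a ≠ b := hdiff hij ha hb
      have hnG' : ¬ G'.Adj a b := by
        rintro ⟨-, h' | h' | h'⟩
        · exact hPne i₁ a ha h'
        · exact hPne j b hb h'
        · exact hsep i₁ j hij a ha b hb h'
      have hSAiff : SA a b ↔ a ∈ D i₁ := by
        simp only [hSA_def, hmemC]
        constructor
        · rintro ⟨-, (rfl | hD) | (rfl | hD)⟩
          · exact absurd rfl (hPne i₁ a ha)
          · exact hD
          · exact absurd rfl (hPne j b hb)
          · exact absurd (hDsub i₁ hD) (Finset.disjoint_left.mp (hdisj j i₁ hj) hb)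
        · intro h
          exact ⟨hne, Or.inl (Or.inr h)⟩
      simp only [hg_def]
      rw [if_neg hnG', sub_zero, if_congr hSAiff rfl rfl]
    simp only [hT_def]
    calc ∑ a ∈ P i₁, ∑ b ∈ P j, g a b
        = ∑ a ∈ P i₁, ∑ b ∈ P j, (if a ∈ D i₁ then (y a + y b)^2 else 0) :=
          Finset.sum_congr rfl fun a ha => Finset.sum_congr rfl fun b hb => hterm a ha b hb
      _ = ∑ a ∈ P i₁, (if a ∈ D i₁ then ∑ b ∈ P j, (y a + y b)^2 else 0) := by
          refine Finset.sum_congr rfl fun a _ => ?_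
          split_ifs <;> simp
      _ = ∑ a ∈ D i₁, ∑ b ∈ P j, (y a + y b)^2 := by
          rw [Finset.sum_ite_mem, Finset.inter_eq_right.mpr (hDsub i₁)]
      _ = ∑ a ∈ D i₁, ∑ b ∈ P j, (d i₁ + y b)^2 :=
          Finset.sum_congr rfl fun a ha => by rw [hyd i₁ a ha]
      _ = (s:ℝ) * ∑ b ∈ P j, (d i₁ + y b)^2 := by
          rw [Finset.sum_const, hDcard, nsmul_eq_mul]
  -- the removed edges
  have hTjj : ∀ j, j ≠ i₁ →
      T j j = -(2*(s:ℝ)*(∑ b ∈ P j, (d j + y b)^2) - 4*(s:ℝ)*((s:ℝ)+1)*(d j)^2) := by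
    intro j hj
    have hterm : ∀ a ∈ P j, ∀ b ∈ P j,
        g a b = -((if a ∈ D j then (if a = b then 0 else (y a + y b)^2) else 0)
          + (if b ∈ D j then (if a = b then 0 else (y a + y b)^2) else 0)
          - (if a ∈ D j then (if b ∈ D j then (if a = b then 0 else (y a + y b)^2) else 0)
              else 0)) := by
      intro a ha b hb
      have hSA : ¬ SA a b := by
        rintro ⟨-, h | h⟩
        · rcases (hmemC a).mp h with rfl | hD
          · exact hPne j a ha rfl
          · exact (Finset.disjoint_left.mp (hdisj j i₁ hj) ha) (hDsub i₁ hD)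
        · rcases (hmemC b).mp h with rfl | hD
          · exact hPne j b hb rfl
          · exact (Finset.disjoint_left.mp (hdisj j i₁ hj) hb) (hDsub i₁ hD)
      have hGA : G'.Adj a b ↔ (a ≠ b ∧ (a ∈ D j ∨ b ∈ D j)) := hadj_same j a ha b hb
      simp only [hg_def]
      rw [if_neg hSA, zero_sub, if_congr hGA rfl rfl]
      by_cases h1 : a ∈ D j <;> by_cases h2 : b ∈ D j <;> by_cases h3 : a = b <;>
        simp [h1, h2, h3] <;> ring
    have inner_sub : ∀ (a : Fin n), a ∈ P j →
        ∑ b ∈ P j, (if a = b then (0:ℝ) else (y a + y b)^2)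
          = (∑ b ∈ P j, (y a + y b)^2) - (y a + y a)^2 := by
      intro a ha
      have : ∀ b, (if a = b then (0:ℝ) else (y a + y b)^2)
          = (y a + y b)^2 - (if a = b then (y a + y b)^2 else 0) := by
        intro b; split_ifs <;> simp
      rw [Finset.sum_congr rfl (fun b _ => this b), Finset.sum_sub_distrib,
        Finset.sum_ite_eq, if_pos ha]
    have innerD_sub : ∀ (a : Fin n), a ∈ D j →
        ∑ b ∈ D j, (if a = b then (0:ℝ) else (y a + y b)^2)
          = ((s:ℝ) - 1) * (2 * d j)^2 := by
      intro a ha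
      have h1 : ∀ b ∈ D j, (if a = b then (0:ℝ) else (y a + y b)^2)
          = (if a = b then (0:ℝ) else (2 * d j)^2) := by
        intro b hb
        by_cases h : a = b
        · simp [h]
        · rw [if_neg h, if_neg h, hyd j a ha, hyd j b hb]; ring
      rw [Finset.sum_congr rfl h1]
      have : ∀ b, (if a = b then (0:ℝ) else (2*d j)^2)
          = (2*d j)^2 - (if a = b then (2*d j)^2 else 0) := by
        intro b; split_ifs <;> simp
      rw [Finset.sum_congr rfl (fun b _ => this b), Finset.sum_sub_distrib,
        Finset.sum_ite_eq, if_pos ha, Finset.sum_const, hDcard, nsmul_eq_mul]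
      have : (1:ℝ) ≤ (s:ℝ) := by exact_mod_cast (by omega : 1 ≤ s)
      ring
    have hS1 : ∑ a ∈ P j, ∑ b ∈ P j,
        (if a ∈ D j then (if a = b then (0:ℝ) else (y a + y b)^2) else 0)
        = (s:ℝ) * ((∑ b ∈ P j, (d j + y b)^2) - (2 * d j)^2) := by
      calc ∑ a ∈ P j, ∑ b ∈ P j,
          (if a ∈ D j then (if a = b then (0:ℝ) else (y a + y b)^2) else 0)
          = ∑ a ∈ P j, (if a ∈ D j then
              ∑ b ∈ P j, (if a = b then (0:ℝ) else (y a + y b)^2) else 0) := by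
            refine Finset.sum_congr rfl fun a _ => ?_
            split_ifs <;> simp
        _ = ∑ a ∈ D j, ∑ b ∈ P j, (if a = b then (0:ℝ) else (y a + y b)^2) := by
            rw [Finset.sum_ite_mem, Finset.inter_eq_right.mpr (hDsub j)]
        _ = ∑ a ∈ D j, ((∑ b ∈ P j, (y a + y b)^2) - (y a + y a)^2) :=
            Finset.sum_congr rfl fun a ha => inner_sub a (hDsub j ha)
        _ = ∑ a ∈ D j, ((∑ b ∈ P j, (d j + y b)^2) - (2 * d j)^2) := by
            refine Finset.sum_congr rfl fun a ha => ?_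
            rw [hyd j a ha]
            congr 1
            ring
        _ = (s:ℝ) * ((∑ b ∈ P j, (d j + y b)^2) - (2 * d j)^2) := by
            rw [Finset.sum_const, hDcard, nsmul_eq_mul]
    have hS2 : ∑ a ∈ P j, ∑ b ∈ P j,
        (if b ∈ D j then (if a = b then (0:ℝ) else (y a + y b)^2) else 0)
        = (s:ℝ) * ((∑ b ∈ P j, (d j + y b)^2) - (2 * d j)^2) := by
      rw [Finset.sum_comm]
      have : ∀ b ∈ P j, ∀ a ∈ P j,
          (if b ∈ D j then (if a = b then (0:ℝ) else (y a + y b)^2) else 0)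
          = (if b ∈ D j then (if b = a then (0:ℝ) else (y b + y a)^2) else 0) := by
        intro b _ a _
        refine if_congr Iff.rfl ?_ rfl
        refine if_congr ⟨fun h => h.symm, fun h => h.symm⟩ rfl (by ring)
      rw [Finset.sum_congr rfl (fun b hb => Finset.sum_congr rfl (fun a ha =>
        this b hb a ha))]
      calc ∑ b ∈ P j, ∑ a ∈ P j,
          (if b ∈ D j then (if b = a then (0:ℝ) else (y b + y a)^2) else 0)
          = ∑ b ∈ P j, (if b ∈ D j then
              ∑ a ∈ P j, (if b = a then (0:ℝ) else (y b + y a)^2) else 0) := by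
            refine Finset.sum_congr rfl fun b _ => ?_
            split_ifs <;> simp
        _ = ∑ b ∈ D j, ∑ a ∈ P j, (if b = a then (0:ℝ) else (y b + y a)^2) := by
            rw [Finset.sum_ite_mem, Finset.inter_eq_right.mpr (hDsub j)]
        _ = ∑ b ∈ D j, ((∑ a ∈ P j, (y b + y a)^2) - (y b + y b)^2) :=
            Finset.sum_congr rfl fun b hb => inner_sub b (hDsub j hb)
        _ = ∑ b ∈ D j, ((∑ a ∈ P j, (d j + y a)^2) - (2 * d j)^2) := by
            refine Finset.sum_congr rfl fun b hb => ?_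
            rw [hyd j b hb]
            congr 1
            ring
        _ = (s:ℝ) * ((∑ b ∈ P j, (d j + y b)^2) - (2 * d j)^2) := by
            rw [Finset.sum_const, hDcard, nsmul_eq_mul]
    have hS3 : ∑ a ∈ P j, ∑ b ∈ P j,
        (if a ∈ D j then (if b ∈ D j then (if a = b then (0:ℝ) else (y a + y b)^2) else 0)
          else 0)
        = (s:ℝ) * (((s:ℝ) - 1) * (2 * d j)^2) := by
      calc ∑ a ∈ P j, ∑ b ∈ P j,
          (if a ∈ D j then (if b ∈ D j then (if a = b then (0:ℝ) else (y a + y b)^2) else 0)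
            else 0)
          = ∑ a ∈ P j, (if a ∈ D j then
              ∑ b ∈ P j, (if b ∈ D j then (if a = b then (0:ℝ) else (y a + y b)^2) else 0)
              else 0) := by
            refine Finset.sum_congr rfl fun a _ => ?_
            split_ifs <;> simp
        _ = ∑ a ∈ D j, ∑ b ∈ P j,
              (if b ∈ D j then (if a = b then (0:ℝ) else (y a + y b)^2) else 0) := by
            rw [Finset.sum_ite_mem, Finset.inter_eq_right.mpr (hDsub j)]
        _ = ∑ a ∈ D j, ∑ b ∈ D j, (if a = b then (0:ℝ) else (y a + y b)^2) := by
            refine Finset.sum_congr rfl fun a _ => ?_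
            rw [Finset.sum_ite_mem, Finset.inter_eq_right.mpr (hDsub j)]
        _ = ∑ a ∈ D j, ((s:ℝ) - 1) * (2 * d j)^2 :=
            Finset.sum_congr rfl fun a ha => innerD_sub a ha
        _ = (s:ℝ) * (((s:ℝ) - 1) * (2 * d j)^2) := by
            rw [Finset.sum_const, hDcard, nsmul_eq_mul]
    simp only [hT_def]
    rw [Finset.sum_congr rfl (fun a ha => Finset.sum_congr rfl (fun b hb =>
      hterm a ha b hb))]
    have hsplit3 : ∑ a ∈ P j, ∑ b ∈ P j,
        (-((if a ∈ D j then (if a = b then (0:ℝ) else (y a + y b)^2) else 0)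
          + (if b ∈ D j then (if a = b then (0:ℝ) else (y a + y b)^2) else 0)
          - (if a ∈ D j then (if b ∈ D j then (if a = b then (0:ℝ) else (y a + y b)^2) else 0)
              else 0)))
        = -((∑ a ∈ P j, ∑ b ∈ P j,
            (if a ∈ D j then (if a = b then (0:ℝ) else (y a + y b)^2) else 0))
          + (∑ a ∈ P j, ∑ b ∈ P j,
            (if b ∈ D j then (if a = b then (0:ℝ) else (y a + y b)^2) else 0))
          - (∑ a ∈ P j, ∑ b ∈ P j,
            (if a ∈ D j then (if b ∈ D j then (if a = b then (0:ℝ) else (y a + y b)^2) else 0)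
              else 0))) := by
      simp only [Finset.sum_add_distrib, Finset.sum_sub_distrib, Finset.sum_neg_distrib]
    rw [hsplit3, hS1, hS2, hS3]
    ring
  -- decomposition of the double sum
  have hdecomp : (∑ i, ∑ j, T i j) = ∑ j ∈ Finset.univ.erase i₁, (T i₁ j + T j i₁ + T j j) := by
    have hrow_i : ∀ i, ∑ j, T i j = T i i₁ + ∑ j ∈ Finset.univ.erase i₁, T i j := by
      intro i
      rw [← Finset.sum_erase_add Finset.univ _ (Finset.mem_univ i₁)]
      ring
    have hcol : ∑ i, T i i₁ = ∑ i ∈ Finset.univ.erase i₁, T i i₁ := by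
      rw [← Finset.sum_erase_add Finset.univ _ (Finset.mem_univ i₁), hself, add_zero]
    have hblock : ∀ i ∈ Finset.univ.erase i₁, ∑ j ∈ Finset.univ.erase i₁, T i j = T i i := by
      intro i hi
      refine Finset.sum_eq_single_of_mem i hi (fun j hj hji => ?_)
      exact hcross0 i j (Finset.ne_of_mem_erase hi) (Finset.ne_of_mem_erase hj)
        (fun h => hji h.symm)
    calc ∑ i, ∑ j, T i j
        = ∑ i, (T i i₁ + ∑ j ∈ Finset.univ.erase i₁, T i j) :=
          Finset.sum_congr rfl fun i _ => hrow_i i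
      _ = (∑ i, T i i₁) + ∑ i, ∑ j ∈ Finset.univ.erase i₁, T i j := by
          rw [Finset.sum_add_distrib]
      _ = (∑ i ∈ Finset.univ.erase i₁, T i i₁)
            + ((∑ j ∈ Finset.univ.erase i₁, T i₁ j)
              + ∑ i ∈ Finset.univ.erase i₁, ∑ j ∈ Finset.univ.erase i₁, T i j) := by
          rw [hcol, ← Finset.sum_erase_add Finset.univ
            (fun i => ∑ j ∈ Finset.univ.erase i₁, T i j) (Finset.mem_univ i₁)]
          ring
      _ = (∑ i ∈ Finset.univ.erase i₁, T i i₁)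
            + ((∑ j ∈ Finset.univ.erase i₁, T i₁ j)
              + ∑ i ∈ Finset.univ.erase i₁, T i i) := by
          rw [Finset.sum_congr rfl hblock]
      _ = ∑ j ∈ Finset.univ.erase i₁, (T i₁ j + T j i₁ + T j j) := by
          rw [Finset.sum_add_distrib, Finset.sum_add_distrib]
          ring
  -- positivity of each block
  have hpart : ∀ j ∈ Finset.univ.erase i₁, 0 < T i₁ j + T j i₁ + T j j := by
    intro j hj
    have hjne : j ≠ i₁ := Finset.ne_of_mem_erase hj
    rw [hTsymm j i₁, hTadd j hjne, hTjj j hjne]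
    set X1 := ∑ b ∈ P j, (d i₁ + y b)^2 with hX1
    set X2 := ∑ b ∈ P j, (d j + y b)^2 with hX2
    have hscast : (2:ℝ) ≤ (s:ℝ) := by exact_mod_cast hs2
    have hX12 : X2 ≤ X1 := by
      refine Finset.sum_le_sum fun b _ => ?_
      have h1 : 0 ≤ d j + y b := add_nonneg (hd0 j) (hynn b)
      have h2 : d j + y b ≤ d i₁ + y b := add_le_add_left (hmax' j) _
      exact pow_le_pow_left₀ h1 h2 2
    rcases (hd0 j).eq_or_lt with hdj | hdj
    · -- d j = 0
      have hbig : X2 + ((P j).card : ℝ) * (d i₁)^2 ≤ X1 := by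
        have hterm : ∀ b ∈ P j, (d j + y b)^2 + (d i₁)^2 ≤ (d i₁ + y b)^2 := by
          intro b _
          have := hynn b
          nlinarith [hd1, hdj.symm ▸ (le_refl (d j))]
        have h := Finset.sum_le_sum hterm
        rw [Finset.sum_add_distrib, Finset.sum_const, nsmul_eq_mul] at h
        rw [hX1, hX2]
        linarith [h]
      have hcard1 : (1:ℝ) ≤ ((P j).card : ℝ) := by
        have : 1 ≤ (P j).card := le_trans (by omega) (hcard j)
        exact_mod_cast this
      rw [← hdj]
      have hd1sq : 0 < (d i₁)^2 := pow_pos hd1 2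
      nlinarith [hbig, hcard1, hd1sq, hscast]
    · -- 0 < d j
      have hs0 : (0:ℝ) < (s:ℝ) := by linarith
      have h1 : 0 ≤ (s:ℝ) * (X1 - X2) := mul_nonneg (le_of_lt hs0) (by linarith)
      have h2 : 0 < (s:ℝ) * (((s:ℝ)+1) * (d j)^2) :=
        mul_pos hs0 (mul_pos (by linarith) (pow_pos hdj 2))
      nlinarith [h1, h2]
  -- main estimate
  have hTotal : 0 < ∑ a, ∑ b, g a b := by
    rw [hsum_eq, hdecomp]
    refine Finset.sum_pos hpart ?_
    obtain ⟨j', hj'⟩ := Fintype.exists_ne_of_one_lt_card (by simp; omega) i₁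
    exact ⟨j', Finset.mem_erase.mpr ⟨hj', Finset.mem_univ _⟩⟩
  -- transfer to Snk n k
  set z : Fin n → ℝ := fun i => y (σ.symm i) with hz_def
  have hzz : dotProduct z z = dotProduct y y :=
    Equiv.sum_comp σ.symm (fun i => y i * y i)
  have hadjiff : ∀ a b, (Snk n k).Adj (σ a) (σ b) ↔ SA a b := by
    intro a b
    constructor
    · rintro ⟨h1, h2⟩
      refine ⟨fun hab => h1 (by rw [hab]), ?_⟩
      rcases h2 with h | h
      · exact Or.inl ((hσ a).mpr h)
      · exact Or.inr ((hσ b).mpr h)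
    · rintro ⟨h1, h2⟩
      refine ⟨fun hab => h1 (σ.injective hab), ?_⟩
      rcases h2 with h | h
      · exact Or.inl ((hσ a).mp h)
      · exact Or.inr ((hσ b).mp h)
  have hFz : ∑ a, ∑ b, (if SA a b then (y a + y b)^2 else 0)
      = ∑ a, ∑ b, (if (Snk n k).Adj a b then (z a + z b)^2 else 0) := by
    refine Finset.sum_equiv σ (by simp) (fun a _ => ?_)
    refine Finset.sum_equiv σ (by simp) (fun b _ => ?_)
    have hza : z (σ a) = y a := by simp [hz_def]
    have hzb : z (σ b) = y b := by simp [hz_def]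
    rw [hza, hzb, if_congr (hadjiff a b).symm rfl rfl]
  have hsplit : ∑ a, ∑ b, g a b
      = (∑ a, ∑ b, (if SA a b then (y a + y b)^2 else 0))
        - (∑ a, ∑ b, (if G'.Adj a b then (y a + y b)^2 else 0)) := by
    simp only [hg_def, Finset.sum_sub_distrib]
  have hGexp := qf_expand G' y
  have hSexp := qf_expand (Snk n k) z
  have hyy_pos : 0 < dotProduct y y := dotProduct_self_pos hy0
  have hQyy : dotProduct y (A'.mulVec y) = q' * dotProduct y y := by
    rw [hyeig, ← hq'_def, dotProduct_smul, smul_eq_mul]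
  -- conclude
  have hkey : 2 * (q' * dotProduct y y)
      < 2 * (dotProduct z ((signlessLaplacian (Snk n k)).mulVec z)) := by
    have h1 : 2 * (dotProduct y (A'.mulVec y))
        = ∑ a, ∑ b, (if G'.Adj a b then (y a + y b)^2 else 0) := by
      rw [hA'_def]; exact hGexp
    calc 2 * (q' * dotProduct y y)
        = 2 * (dotProduct y (A'.mulVec y)) := by rw [hQyy]
      _ = ∑ a, ∑ b, (if G'.Adj a b then (y a + y b)^2 else 0) := h1
      _ < ∑ a, ∑ b, (if SA a b then (y a + y b)^2 else 0) := by
          have := hTotal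
          rw [hsplit] at this
          linarith
      _ = ∑ a, ∑ b, (if (Snk n k).Adj a b then (z a + z b)^2 else 0) := hFz
      _ = 2 * (dotProduct z ((signlessLaplacian (Snk n k)).mulVec z)) := hSexp.symm
  have hray := rayleigh_le (sL_isHermitian (Snk n k)) hn0 z
  have hq'lt : q' < sSup (spectrum ℝ (signlessLaplacian (Snk n k))) := by
    have h2 : dotProduct z ((signlessLaplacian (Snk n k)).mulVec z)
        ≤ sSup (spectrum ℝ (signlessLaplacian (Snk n k))) * dotProduct y y := by
      rw [← hzz]; exact hray
    have h3 : q' * dotProduct y y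
        < sSup (spectrum ℝ (signlessLaplacian (Snk n k))) * dotProduct y y := by
      linarith
    exact lt_of_mul_lt_mul_right h3 (le_of_lt hyy_pos)
  have hGle : qIndex G ≤ q' :=
    qsup_mono G (augment G w) (fun a b h => adj_augment h) hn0
  calc qIndex G ≤ q' := hGle
    _ < sSup (spectrum ℝ (signlessLaplacian (Snk n k))) := hq'lt
    _ = qIndex (Snk n k) := rfl
end

section
/- Let G be a graph of order n with e(G) ≥ (k−1)n − (k² − k − 1). If G contains no path P_{2k}, then G has an induced subgraph H with minimum degree δ(H) ≥ k − 1 and at least n − (k² − k − 1) vertices. -/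
open Finset

variable {V : Type*}

def Gr (G : SimpleGraph V) (s : Finset V) : SimpleGraph V where
  Adj a b := G.Adj a b ∧ a ∈ s ∧ b ∈ s
  symm := ⟨fun a b ⟨h, ha, hb⟩ => ⟨h.symm, hb, ha⟩⟩
  loopless := ⟨fun a h => G.loopless.irrefl a h.1⟩

lemma Gr_le (G : SimpleGraph V) (s : Finset V) : Gr G s ≤ G := fun _ _ h => h.1

instance GrDec (G : SimpleGraph V) [DecidableRel G.Adj] [DecidableEq V] (s : Finset V) :
    DecidableRel (Gr G s).Adj :=
  fun a b => inferInstanceAs (Decidable (G.Adj a b ∧ a ∈ s ∧ b ∈ s))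

lemma hasPathOn_mono_s11 {G H : SimpleGraph V} (hle : G ≤ H) {m : ℕ} :
    HasPathOn G m → HasPathOn H m := by
  rintro ⟨f, hinj, hadj⟩
  exact ⟨f, hinj, fun i h => hle (hadj i h)⟩

lemma hasPathOn_anti {G : SimpleGraph V} {m m' : ℕ} (h : m' ≤ m) :
    HasPathOn G m → HasPathOn G m' := by
  rintro ⟨f, hinj, hadj⟩
  refine ⟨fun i => f ⟨i.val, lt_of_lt_of_le i.isLt h⟩, fun a b hab => ?_, fun i hi => ?_⟩
  · have := congrArg Fin.val (hinj hab)
    exact Fin.ext this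
  · exact hadj i (lt_of_lt_of_le hi h)

lemma hasPathOn_card_le [Fintype V] {G : SimpleGraph V} {m : ℕ} :
    HasPathOn G m → m ≤ Fintype.card V := by
  rintro ⟨f, hinj, -⟩
  simpa using Fintype.card_le_of_injective f hinj

/-- degree within `s` -/
def degs (G : SimpleGraph V) [DecidableRel G.Adj] (s : Finset V) (v : V) : ℕ :=
  (s.filter (fun w => G.Adj v w)).card

variable (G : SimpleGraph V) [DecidableRel G.Adj] [DecidableEq V]

lemma degs_erase (v : V) (s : Finset V) (u : V) (hu : u ≠ v) :
    degs G s u = degs G (s.erase v) u + (if G.Adj u v ∧ v ∈ s then 1 else 0) := by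
  unfold degs
  by_cases hv : v ∈ s
  · by_cases ha : G.Adj u v
    · simp only [ha, hv, and_self, if_true]
      have : s.filter (fun w => G.Adj u w) = insert v ((s.erase v).filter (fun w => G.Adj u w)) := by
        ext w
        simp only [mem_filter, mem_insert, mem_erase]
        constructor
        · rintro ⟨hw, haw⟩
          by_cases hwv : w = v
          · exact Or.inl hwv
          · exact Or.inr ⟨⟨hwv, hw⟩, haw⟩
        · rintro (rfl | ⟨⟨-, hw⟩, haw⟩)
          · exact ⟨hv, ha⟩
          · exact ⟨hw, haw⟩
      rw [this, card_insert_of_notMem (by simp)]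
    · simp only [ha, false_and, if_false, add_zero]
      congr 1
      ext w
      simp only [mem_filter, mem_erase]
      constructor
      · rintro ⟨hw, haw⟩
        exact ⟨⟨fun hwv => ha (hwv ▸ haw), hw⟩, haw⟩
      · rintro ⟨⟨-, hw⟩, haw⟩; exact ⟨hw, haw⟩
  · simp [hv, erase_eq_of_notMem hv]

lemma degs_self_erase (v : V) (s : Finset V) :
    degs G s v = degs G (s.erase v) v := by
  unfold degs
  congr 1
  ext w
  simp only [mem_filter, mem_erase]
  constructor
  · rintro ⟨hw, haw⟩; exact ⟨⟨fun h => G.loopless.irrefl v (h ▸ haw), hw⟩, haw⟩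
  · rintro ⟨⟨-, hw⟩, haw⟩; exact ⟨hw, haw⟩

lemma sum_degs_erase {v : V} {s : Finset V} (hv : v ∈ s) :
    ∑ u ∈ s, degs G s u = (∑ u ∈ s.erase v, degs G (s.erase v) u) + 2 * degs G s v := by
  rw [← Finset.add_sum_erase s _ hv]
  have h1 : ∑ u ∈ s.erase v, degs G s u
      = ∑ u ∈ s.erase v, (degs G (s.erase v) u + (if G.Adj u v ∧ v ∈ s then 1 else 0)) := by
    apply Finset.sum_congr rfl
    intro u hu
    exact degs_erase G v s u (Finset.ne_of_mem_erase hu)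
  rw [h1, Finset.sum_add_distrib]
  have h2 : ∑ u ∈ s.erase v, (if G.Adj u v ∧ v ∈ s then 1 else 0) = degs G (s.erase v) v := by
    unfold degs
    rw [Finset.card_filter]
    apply Finset.sum_congr rfl
    intro u hu
    have : (G.Adj u v ∧ v ∈ s) ↔ G.Adj v u := by
      rw [G.adj_comm]; simp [hv]
    simp [this]
  rw [h2, degs_self_erase G v s]
  ring

example : True := trivial

lemma extend_front {G' : SimpleGraph V} {m : ℕ} (hm : 0 < m) (f : Fin m → V)
    (hinj : Function.Injective f)
    (hadj : ∀ (i : ℕ) (h : i + 1 < m), G'.Adj (f ⟨i, by omega⟩) (f ⟨i + 1, h⟩))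
    {w : V} (hw : w ∉ Set.range f) (haw : G'.Adj w (f ⟨0, hm⟩)) :
    HasPathOn G' (m + 1) := by
  refine ⟨fun j => if h : j.val = 0 then w else f ⟨j.val - 1, by omega⟩, ?_, ?_⟩
  · intro a b hab
    by_cases ha : a.val = 0 <;> by_cases hb : b.val = 0 <;>
      simp only [ha, hb, dif_pos, dif_neg, dite_eq_ite, if_true, if_false] at hab
    · exact Fin.ext (ha.trans hb.symm)
    · exact absurd ⟨_, hab.symm⟩ hw
    · exact absurd ⟨_, hab⟩ hw
    · have := congrArg Fin.val (hinj hab)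
      simp only at this
      exact Fin.ext (by omega)
  · intro a ha
    dsimp only
    by_cases h0 : a = 0
    · subst h0
      rw [dif_pos rfl, dif_neg (by omega : ¬ (0+1 = 0))]
      exact haw
    · rw [dif_neg h0, dif_neg (by omega : ¬ (a+1 = 0))]
      have key := hadj (a - 1) (by omega)
      have e1 : (⟨a - 1 + 1, by omega⟩ : Fin m) = ⟨a + 1 - 1, by omega⟩ := by apply Fin.ext; simp only [Fin.val_mk]; omega
      rw [e1] at key
      exact key

lemma extend_back {G' : SimpleGraph V} {m : ℕ} (hm : 0 < m) (f : Fin m → V)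
    (hinj : Function.Injective f)
    (hadj : ∀ (i : ℕ) (h : i + 1 < m), G'.Adj (f ⟨i, by omega⟩) (f ⟨i + 1, h⟩))
    {w : V} (hw : w ∉ Set.range f) (haw : G'.Adj (f ⟨m - 1, by omega⟩) w) :
    HasPathOn G' (m + 1) := by
  refine ⟨fun j => if h : j.val < m then f ⟨j.val, h⟩ else w, ?_, ?_⟩
  · intro a b hab
    by_cases ha : a.val < m <;> by_cases hb : b.val < m <;>
      simp only [ha, hb, dif_pos, dif_neg] at hab
    · have := congrArg Fin.val (hinj hab)
      simp only [Fin.val_mk] at this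
      exact Fin.ext this
    · exact absurd ⟨_, hab⟩ hw
    · exact absurd ⟨_, hab.symm⟩ hw
    · apply Fin.ext
      have := a.isLt; have := b.isLt
      omega
  · intro a ha
    dsimp only
    by_cases h1 : a + 1 < m
    · rw [dif_pos (by omega : a < m), dif_pos h1]
      exact hadj a h1
    · have ham : a = m - 1 := by omega
      rw [dif_pos (by omega : a < m), dif_neg (by omega : ¬ (a + 1 < m))]
      have e1 : (⟨a, by omega⟩ : Fin m) = ⟨m - 1, by omega⟩ := by
        apply Fin.ext; simp only [Fin.val_mk]; omega
      rw [e1]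
      exact haw

lemma walk_crossing {G' : SimpleGraph V} {R : Set V} :
    ∀ {u v : V}, G'.Walk u v → u ∉ R → v ∈ R → ∃ x y, G'.Adj x y ∧ x ∉ R ∧ y ∈ R := by
  intro u v w
  induction w with
  | nil => intro h1 h2; exact absurd h2 h1
  | @cons a b c h p ih =>
    intro h1 h2
    by_cases hb : b ∈ R
    · exact ⟨a, b, h, h1, hb⟩
    · exact ih hb h2

def cyc {m : ℕ} (i : ℕ) (f : Fin m → V) : Fin m → V := fun j =>
  if h : j.val ≤ i then f j else f ⟨m + i - j.val, by have := j.isLt; omega⟩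

lemma cyc_inj {m : ℕ} {i : ℕ} (hi : i + 1 < m) {f : Fin m → V}
    (hinj : Function.Injective f) : Function.Injective (cyc i f) := by
  intro a b hab
  unfold cyc at hab
  have hal := a.isLt; have hbl := b.isLt
  by_cases ha : a.val ≤ i <;> by_cases hb : b.val ≤ i <;>
    simp only [ha, hb, dif_pos, dif_neg] at hab <;>
    have := congrArg Fin.val (hinj hab) <;>
    (try simp only [Fin.val_mk] at this) <;>
    · apply Fin.ext; omega

lemma cyc_range {m : ℕ} {i : ℕ} (hi : i + 1 < m) (f : Fin m → V) :
    Set.range (cyc i f) = Set.range f := by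
  apply Set.Subset.antisymm
  · rintro _ ⟨j, rfl⟩
    unfold cyc
    by_cases h : j.val ≤ i
    · rw [dif_pos h]; exact ⟨j, rfl⟩
    · rw [dif_neg h]; exact ⟨_, rfl⟩
  · rintro _ ⟨j, rfl⟩
    by_cases h : j.val ≤ i
    · exact ⟨j, by unfold cyc; rw [dif_pos h]⟩
    · have hjl := j.isLt
      refine ⟨⟨m + i - j.val, by omega⟩, ?_⟩
      unfold cyc
      rw [dif_neg (by simp only [Fin.val_mk]; omega)]
      apply congrArg
      apply Fin.ext; simp only [Fin.val_mk]; omega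

lemma cyc_eq_lo {m i a : ℕ} (f : Fin m → V) (ha : a < m) (h : a ≤ i) :
    cyc i f ⟨a, ha⟩ = f ⟨a, ha⟩ := by
  unfold cyc; rw [dif_pos h]

lemma cyc_eq_hi {m i a : ℕ} (f : Fin m → V) (ha : a < m) (h : ¬ a ≤ i) :
    cyc i f ⟨a, ha⟩ = f ⟨m + i - a, by omega⟩ := by
  unfold cyc; rw [dif_neg h]

lemma fin_mk_eq {m : ℕ} {x y : ℕ} (hx : x < m) (hy : y < m) (h : x = y) :
    (⟨x, hx⟩ : Fin m) = ⟨y, hy⟩ := by subst h; rfl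

lemma cyc_adj {G' : SimpleGraph V} {m : ℕ} {i : ℕ} (hi : i + 1 < m) (f : Fin m → V)
    (hadj : ∀ (j : ℕ) (h : j + 1 < m), G'.Adj (f ⟨j, by omega⟩) (f ⟨j + 1, h⟩))
    (hA : G'.Adj (f ⟨0, by omega⟩) (f ⟨i + 1, hi⟩))
    (hB : G'.Adj (f ⟨m - 1, by omega⟩) (f ⟨i, by omega⟩)) :
    ∀ (a : ℕ) (ha : a < m),
      G'.Adj (cyc i f ⟨a, ha⟩) (cyc i f ⟨(a + 1) % m, Nat.mod_lt _ (by omega)⟩) := by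
  intro a ha
  by_cases hml : a = m - 1
  · have e2 : (⟨(a + 1) % m, Nat.mod_lt _ (by omega)⟩ : Fin m) = ⟨0, by omega⟩ :=
      fin_mk_eq _ _ (by subst hml; rw [(show m - 1 + 1 = m by omega), Nat.mod_self])
    rw [e2, cyc_eq_hi f ha (by omega), cyc_eq_lo f (by omega) (by omega)]
    have e1 : (⟨m + i - a, by omega⟩ : Fin m) = ⟨i + 1, hi⟩ := fin_mk_eq _ _ (by omega)
    rw [e1]
    exact hA.symm
  · have e2 : (⟨(a + 1) % m, Nat.mod_lt _ (by omega)⟩ : Fin m) = ⟨a + 1, by omega⟩ :=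
      fin_mk_eq _ _ (Nat.mod_eq_of_lt (by omega))
    rw [e2]
    rcases lt_trichotomy a i with h | h | h
    · rw [cyc_eq_lo f ha (by omega), cyc_eq_lo f (by omega) (by omega)]
      exact hadj a (by omega)
    · rw [cyc_eq_lo f ha (by omega), cyc_eq_hi f (by omega) (by omega)]
      have e1 : (⟨m + i - (a + 1), by omega⟩ : Fin m) = ⟨m - 1, by omega⟩ :=
        fin_mk_eq _ _ (by omega)
      rw [e1]
      have e3 : (⟨a, ha⟩ : Fin m) = ⟨i, by omega⟩ := fin_mk_eq _ _ h
      rw [e3]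
      exact hB.symm
    · rw [cyc_eq_hi f ha (by omega), cyc_eq_hi f (by omega) (by omega)]
      have e1 : (⟨m + i - a, by omega⟩ : Fin m) = ⟨(m + i - (a + 1)) + 1, by omega⟩ :=
        fin_mk_eq _ _ (by omega)
      rw [e1]
      exact (hadj (m + i - (a + 1)) (by omega)).symm

set_option maxHeartbeats 2000000 in
lemma key_rotation [Fintype V] [DecidableEq V] {G' : SimpleGraph V} [DecidableRel G'.Adj]
    {m k : ℕ} (hk : 1 ≤ k) (hm : 2 ≤ m) (hmk : m ≤ 2 * k - 1)
    (f : Fin m → V) (hinj : Function.Injective f)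
    (hadj : ∀ (i : ℕ) (h : i + 1 < m), G'.Adj (f ⟨i, by omega⟩) (f ⟨i + 1, h⟩))
    (hmax : ¬ HasPathOn G' (m + 1))
    (hdeg0 : k ≤ (univ.filter (fun w => G'.Adj (f ⟨0, by omega⟩) w)).card)
    (hdegl : k ≤ (univ.filter (fun w => G'.Adj (f ⟨m - 1, by omega⟩) w)).card)
    (hW : ∃ w, w ∉ Set.range f ∧ G'.Reachable w (f ⟨0, by omega⟩)) : False := by
  -- all neighbors of the endpoints lie on the path
  have h0 : ∀ w, G'.Adj (f ⟨0, by omega⟩) w → w ∈ Set.range f := by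
    intro w hw
    by_contra hns
    exact hmax (extend_front (by omega) f hinj hadj hns hw.symm)
  have hl : ∀ w, G'.Adj (f ⟨m - 1, by omega⟩) w → w ∈ Set.range f := by
    intro w hw
    by_contra hns
    exact hmax (extend_back (by omega) f hinj hadj hns hw)
  obtain ⟨A, hA⟩ : ∃ A : Finset (Fin m),
      A = univ.filter (fun j : Fin m => j.val ≠ 0 ∧ G'.Adj (f ⟨0, by omega⟩) (f j)) := ⟨_, rfl⟩
  obtain ⟨B, hB⟩ : ∃ B : Finset (Fin m),
      B = univ.filter (fun j : Fin m => j.val ≠ m - 1 ∧ G'.Adj (f ⟨m - 1, by omega⟩) (f j)) := ⟨_, rfl⟩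
  have hAcard : k ≤ A.card := by
    have hsub : (univ.filter (fun w => G'.Adj (f ⟨0, by omega⟩) w)) ⊆ A.image f := by
      intro w hw
      rw [mem_filter] at hw
      obtain ⟨j, rfl⟩ := h0 w hw.2
      refine Finset.mem_image_of_mem f ?_
      rw [hA, mem_filter]
      refine ⟨mem_univ _, fun hj => ?_, hw.2⟩
      · have : j = ⟨0, by omega⟩ := Fin.ext hj
        rw [this] at hw
        exact G'.loopless.irrefl _ hw.2
    calc k ≤ _ := hdeg0
      _ ≤ (A.image f).card := card_le_card hsub
      _ ≤ A.card := card_image_le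
  have hBcard : k ≤ B.card := by
    have hsub : (univ.filter (fun w => G'.Adj (f ⟨m - 1, by omega⟩) w)) ⊆ B.image f := by
      intro w hw
      rw [mem_filter] at hw
      obtain ⟨j, rfl⟩ := hl w hw.2
      refine Finset.mem_image_of_mem f ?_
      rw [hB, mem_filter]
      refine ⟨mem_univ _, fun hj => ?_, hw.2⟩
      · have : j = ⟨m - 1, by omega⟩ := Fin.ext hj
        rw [this] at hw
        exact G'.loopless.irrefl _ hw.2
    calc k ≤ _ := hdegl
      _ ≤ (B.image f).card := card_le_card hsub
      _ ≤ B.card := card_image_le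
  obtain ⟨A', hA'⟩ : ∃ X : Finset ℕ, X = A.image (fun j => j.val - 1) := ⟨_, rfl⟩
  obtain ⟨B', hB'⟩ : ∃ X : Finset ℕ, X = B.image (fun j => j.val) := ⟨_, rfl⟩
  have hA'card : A'.card = A.card := by
    rw [hA']
    apply Finset.card_image_of_injOn
    intro a ha b hb h
    simp only [Finset.mem_coe, hA, mem_filter] at ha hb
    simp only at h
    apply Fin.ext
    have ha0 := ha.2.1; have hb0 := hb.2.1
    omega
  have hB'card : B'.card = B.card := by
    rw [hB']
    exact Finset.card_image_of_injOn (fun a _ b _ h => Fin.ext h)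
  have hA'sub : A' ⊆ Finset.range (m - 1) := by
    intro x hx
    rw [hA', Finset.mem_image] at hx
    obtain ⟨j, hj, rfl⟩ := hx
    rw [hA, mem_filter] at hj
    have := j.isLt
    rw [Finset.mem_range]
    omega
  have hB'sub : B' ⊆ Finset.range (m - 1) := by
    intro x hx
    rw [hB', Finset.mem_image] at hx
    obtain ⟨j, hj, rfl⟩ := hx
    rw [hB, mem_filter] at hj
    have := j.isLt
    rw [Finset.mem_range]
    omega
  have hinter : (A' ∩ B').Nonempty := by
    rw [Finset.nonempty_iff_ne_empty]
    intro hemp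
    have h1 : (A' ∪ B').card ≤ m - 1 := by
      calc (A' ∪ B').card ≤ (Finset.range (m - 1)).card :=
            card_le_card (Finset.union_subset hA'sub hB'sub)
        _ = m - 1 := Finset.card_range _
    have h2 := Finset.card_union_add_card_inter A' B'
    rw [hemp, Finset.card_empty] at h2
    omega
  obtain ⟨i, hi⟩ := hinter
  rw [Finset.mem_inter] at hi
  obtain ⟨hiA, hiB⟩ := hi
  rw [hA', Finset.mem_image] at hiA
  obtain ⟨j, hjA, hji⟩ := hiA
  rw [hA, mem_filter] at hjA
  have hjlt := j.isLt
  have hi1 : i + 1 < m := by omega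
  have hA2 : G'.Adj (f ⟨0, by omega⟩) (f ⟨i + 1, hi1⟩) := by
    have : j = ⟨i + 1, hi1⟩ := by apply Fin.ext; simp only [Fin.val_mk]; omega
    rw [← this]
    exact hjA.2.2
  rw [hB', Finset.mem_image] at hiB
  obtain ⟨j', hj'B, hj'i⟩ := hiB
  rw [hB, mem_filter] at hj'B
  have hB2 : G'.Adj (f ⟨m - 1, by omega⟩) (f ⟨i, by omega⟩) := by
    have : j' = ⟨i, by omega⟩ := by apply Fin.ext; simp only [Fin.val_mk]; omega
    rw [← this]
    exact hj'B.2.2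
  -- the cycle
  have cinj := cyc_inj hi1 hinj
  have hcadj := cyc_adj hi1 f hadj hA2 hB2
  -- crossing edge
  obtain ⟨w, hwR, hreach⟩ := hW
  obtain ⟨x, y, hxy, hxR, hyR⟩ := walk_crossing hreach.some hwR ⟨⟨0, by omega⟩, rfl⟩
  rw [← cyc_range hi1 f] at hyR
  obtain ⟨t, ht⟩ := hyR
  have htlt := t.isLt
  -- the longer path
  apply hmax
  refine ⟨fun j => if h : j.val = 0 then x
    else cyc i f ⟨(t.val + (j.val - 1)) % m, Nat.mod_lt _ (by omega)⟩, ?_, ?_⟩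
  · intro a b hab
    by_cases ha : a.val = 0 <;> by_cases hb : b.val = 0 <;>
      simp only [ha, hb, dif_pos, dif_neg] at hab
    · exact Fin.ext (ha.trans hb.symm)
    · exact absurd (hab ▸ Set.mem_range_self _ : x ∈ Set.range (cyc i f))
        (by rw [cyc_range hi1 f]; exact hxR)
    · exact absurd (hab ▸ Set.mem_range_self _ : x ∈ Set.range (cyc i f))
        (by rw [cyc_range hi1 f]; exact hxR)
    · have hval := congrArg Fin.val (cinj hab)
      simp only [Fin.val_mk] at hval
      have hmod : (a.val - 1) % m = (b.val - 1) % m :=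
        Nat.ModEq.add_left_cancel' t.val hval
      have hal := a.isLt; have hbl := b.isLt
      rw [Nat.mod_eq_of_lt (by omega), Nat.mod_eq_of_lt (by omega)] at hmod
      exact Fin.ext (by omega)
  · intro a halt
    dsimp only
    by_cases h0' : a = 0
    · subst h0'
      rw [dif_pos rfl, dif_neg (by omega : ¬ (0 + 1 = 0))]
      have e1 : (⟨(t.val + (0 + 1 - 1)) % m, Nat.mod_lt _ (by omega)⟩ : Fin m) = t := by
        apply Fin.ext
        simp only [Fin.val_mk]
        simp [Nat.mod_eq_of_lt htlt]
      rw [e1, ht]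
      exact hxy
    · rw [dif_neg h0', dif_neg (by omega : ¬ (a + 1 = 0))]
      have key := hcadj ((t.val + (a - 1)) % m) (Nat.mod_lt _ (by omega))
      have e2 : (⟨((t.val + (a - 1)) % m + 1) % m, Nat.mod_lt _ (by omega)⟩ : Fin m)
          = ⟨(t.val + (a + 1 - 1)) % m, Nat.mod_lt _ (by omega)⟩ := by
        apply Fin.ext
        simp only [Fin.val_mk]
        rw [Nat.mod_add_mod]
        congr 1
        omega
      rw [e2] at key
      exact key

lemma degs_filter_univ [Fintype V] (G : SimpleGraph V) [DecidableRel G.Adj] [DecidableEq V]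
    {s : Finset V} {v : V} (hv : v ∈ s) :
    (univ.filter (fun w => (Gr G s).Adj v w)).card = degs G s v := by
  unfold degs
  congr 1
  ext w
  simp only [mem_filter, mem_univ, true_and]
  constructor
  · rintro ⟨h, -, hw⟩; exact ⟨hw, h⟩
  · rintro ⟨hw, h⟩; exact ⟨h, hv, hw⟩

lemma exists_max_path [Fintype V] (G' : SimpleGraph V) (hne : HasPathOn G' 2) :
    ∃ m, 2 ≤ m ∧ HasPathOn G' m ∧ ¬ HasPathOn G' (m + 1) := by
  by_contra hcon
  push_neg at hcon
  have hall : ∀ j : ℕ, HasPathOn G' (2 + j) := by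
    intro j
    induction j with
    | zero => exact hne
    | succ j ih => exact hcon (2 + j) (by omega) ih
  have := hasPathOn_card_le (hall (Fintype.card V))
  omega

lemma degs_le_card_sub_one [DecidableEq V] (G : SimpleGraph V) [DecidableRel G.Adj]
    {s : Finset V} {v : V} (hv : v ∈ s) : degs G s v ≤ s.card - 1 := by
  unfold degs
  have hsub : s.filter (fun w => G.Adj v w) ⊆ s.erase v := by
    intro w hw
    rw [mem_filter] at hw
    rw [mem_erase]
    exact ⟨fun h => G.loopless.irrefl v (h ▸ hw.2), hw.1⟩
  calc (s.filter (fun w => G.Adj v w)).card ≤ (s.erase v).card := card_le_card hsub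
    _ = s.card - 1 := card_erase_of_mem hv

lemma EG [Fintype V] [DecidableEq V] (G : SimpleGraph V) [DecidableRel G.Adj] {k : ℕ}
    (hk : 1 ≤ k) (hP : ¬ HasPathOn G (2 * k)) :
    ∀ s : Finset V, ∑ v ∈ s, degs G s v ≤ (2 * k - 2) * s.card := by
  intro s
  induction s using Finset.strongInduction with
  | _ s ih =>
  by_cases hlow : ∃ v ∈ s, degs G s v ≤ k - 1
  · obtain ⟨v, hv, hdv⟩ := hlow
    have hrec := ih (s.erase v) (Finset.erase_ssubset hv)
    have hsum := sum_degs_erase G hv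
    have hc : (s.erase v).card = s.card - 1 := card_erase_of_mem hv
    have hc1 : 1 ≤ s.card := Finset.card_pos.mpr ⟨v, hv⟩
    have h2d : 2 * degs G s v ≤ 2 * k - 2 := by omega
    calc ∑ u ∈ s, degs G s u
        = (∑ u ∈ s.erase v, degs G (s.erase v) u) + 2 * degs G s v := hsum
      _ ≤ (2 * k - 2) * (s.card - 1) + (2 * k - 2) := by
          have := hc ▸ hrec
          omega
      _ = (2 * k - 2) * (s.card - 1 + 1) := by ring
      _ = (2 * k - 2) * s.card := by rw [Nat.sub_add_cancel hc1]
  · push_neg at hlow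
    rcases s.eq_empty_or_nonempty with rfl | ⟨v0, hv0⟩
    · simp
    have hdeg_all : ∀ v ∈ s, k ≤ degs G s v := by
      intro v hv
      have := hlow v hv
      omega
    -- a first edge
    have hedge : ∃ w0, w0 ∈ s ∧ G.Adj v0 w0 := by
      have h1 : 1 ≤ degs G s v0 := le_trans hk (hdeg_all v0 hv0)
      have : (s.filter (fun w => G.Adj v0 w)).Nonempty := Finset.card_pos.mp h1
      obtain ⟨w0, hw0⟩ := this
      rw [mem_filter] at hw0
      exact ⟨w0, hw0.1, hw0.2⟩
    obtain ⟨w0, hw0s, hw0a⟩ := hedge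
    have hpath2 : HasPathOn (Gr G s) 2 := by
      refine ⟨fun j => if j.val = 0 then v0 else w0, ?_, ?_⟩
      · intro a b hab
        have hne : v0 ≠ w0 := G.ne_of_adj hw0a
        by_cases ha : a.val = 0 <;> by_cases hb : b.val = 0 <;>
          simp only [ha, hb, if_pos, if_neg, if_true, if_false] at hab <;>
          first
            | (apply Fin.ext; omega)
            | exact absurd hab hne
            | exact absurd hab.symm hne
      · intro i hi
        have hi0 : i = 0 := by omega
        subst hi0
        simp only [if_pos rfl, if_neg (by omega : ¬ (0 + 1 = 0))]
        exact ⟨hw0a, hv0, hw0s⟩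
    obtain ⟨m, hm2, hpm, hmax⟩ := exists_max_path (Gr G s) hpath2
    obtain ⟨f, hfinj, hfadj⟩ := hpm
    have hrange_s : ∀ j : Fin m, f j ∈ s := by
      intro j
      have hjl := j.isLt
      by_cases hj : j.val + 1 < m
      · have := (hfadj j.val hj).2.1
        have he : (⟨j.val, by omega⟩ : Fin m) = j := by apply Fin.ext; rfl
        rwa [he] at this
      · have hm1 : j.val = m - 1 := by omega
        have h2 : m - 2 + 1 < m := by omega
        have := (hfadj (m - 2) h2).2.2
        have he : (⟨m - 2 + 1, h2⟩ : Fin m) = j := by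
          apply Fin.ext; simp only [Fin.val_mk]; omega
        rwa [he] at this
    by_cases hms : 2 * k ≤ m
    · exact absurd (hasPathOn_mono_s11 (Gr_le G s) (hasPathOn_anti hms ⟨f, hfinj, hfadj⟩)) hP
    · by_cases hss : s.card ≤ m
      · -- small s : crude bound
        have hb : ∀ v ∈ s, degs G s v ≤ 2 * k - 2 := by
          intro v hv
          have := degs_le_card_sub_one G hv
          omega
        calc ∑ v ∈ s, degs G s v ≤ ∑ _v ∈ s, (2 * k - 2) := Finset.sum_le_sum hb
          _ = s.card * (2 * k - 2) := by rw [Finset.sum_const, smul_eq_mul]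
          _ = (2 * k - 2) * s.card := by ring
      · by_cases hconn : ∀ u ∈ s, ∀ v ∈ s, (Gr G s).Reachable u v
        · -- connected case: rotation argument gives a contradiction
          exfalso
          have himg : (Finset.image f univ).card = m := by
            rw [Finset.card_image_of_injective _ hfinj, card_univ, Fintype.card_fin]
          have himgsub : Finset.image f univ ⊆ s := by
            intro x hx
            rw [Finset.mem_image] at hx
            obtain ⟨j, -, rfl⟩ := hx
            exact hrange_s j
          have hex : (s \ Finset.image f univ).Nonempty := by
            rw [← Finset.card_pos]
            have := Finset.card_sdiff_add_card_eq_card himgsub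
            omega
          obtain ⟨w, hw⟩ := hex
          rw [Finset.mem_sdiff] at hw
          have hwnr : w ∉ Set.range f := by
            rintro ⟨j, rfl⟩
            exact hw.2 (Finset.mem_image_of_mem f (mem_univ j))
          apply key_rotation hk hm2 (by omega) f hfinj hfadj hmax ?_ ?_ ?_
          · rw [degs_filter_univ G (hrange_s ⟨0, by omega⟩)]
            exact hdeg_all _ (hrange_s _)
          · rw [degs_filter_univ G (hrange_s ⟨m - 1, by omega⟩)]
            exact hdeg_all _ (hrange_s _)
          · exact ⟨w, hwnr, hconn w hw.1 _ (hrange_s ⟨0, by omega⟩)⟩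
        · -- disconnected case: split
          push_neg at hconn
          obtain ⟨u, hu, v, hv, hnr⟩ := hconn
          classical
          have hclose : ∀ x y, (Gr G s).Reachable u x → (Gr G s).Adj x y →
              (Gr G s).Reachable u y := fun x y hr ha => hr.trans ha.reachable
          obtain ⟨t, hts⟩ : ∃ t : Finset V,
              t = s.filter (fun x => (Gr G s).Reachable u x) := ⟨_, rfl⟩
          have htsub : t ⊆ s := by rw [hts]; exact Finset.filter_subset _ _
          have hut : u ∈ t := by rw [hts, mem_filter]; exact ⟨hu, SimpleGraph.Reachable.refl u⟩
          have hvt : v ∉ t := by rw [hts, mem_filter]; exact fun h => hnr h.2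
          have htss : t ⊂ s := ⟨htsub, fun h => hvt (h hv)⟩
          have hstss : s \ t ⊂ s :=
            ⟨Finset.sdiff_subset, fun h => (Finset.mem_sdiff.mp (h hu)).2 hut⟩
          -- degrees agree on the two parts
          have hdt : ∀ x ∈ t, degs G t x = degs G s x := by
            intro x hx
            unfold degs
            congr 1
            ext w
            simp only [mem_filter]
            constructor
            · rintro ⟨hw, ha⟩; exact ⟨htsub hw, ha⟩
            · rintro ⟨hw, ha⟩
              rw [hts, mem_filter] at hx ⊢
              exact ⟨⟨hw, hclose x w hx.2 ⟨ha, hx.1, hw⟩⟩, ha⟩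
          have hdst : ∀ x ∈ s \ t, degs G (s \ t) x = degs G s x := by
            intro x hx
            rw [Finset.mem_sdiff] at hx
            unfold degs
            congr 1
            ext w
            simp only [mem_filter, Finset.mem_sdiff]
            constructor
            · rintro ⟨⟨hw, -⟩, ha⟩; exact ⟨hw, ha⟩
            · rintro ⟨hw, ha⟩
              refine ⟨⟨hw, fun hwt => ?_⟩, ha⟩
              apply hx.2
              rw [hts, mem_filter] at hwt ⊢
              exact ⟨hx.1, hclose w x hwt.2 ⟨ha.symm, hwt.1, hx.1⟩⟩
          have hsplit : ∑ x ∈ s, degs G s x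
              = (∑ x ∈ t, degs G t x) + ∑ x ∈ s \ t, degs G (s \ t) x := by
            rw [Finset.sum_congr rfl hdt, Finset.sum_congr rfl hdst,
              ← Finset.sum_sdiff htsub]
            ring
          have hct := Finset.card_sdiff_add_card_eq_card htsub
          calc ∑ x ∈ s, degs G s x
              = (∑ x ∈ t, degs G t x) + ∑ x ∈ s \ t, degs G (s \ t) x := hsplit
            _ ≤ (2 * k - 2) * t.card + (2 * k - 2) * (s \ t).card :=
                Nat.add_le_add (ih t htss) (ih (s \ t) hstss)
            _ = (2 * k - 2) * (t.card + (s \ t).card) := by ring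
            _ = (2 * k - 2) * s.card := by rw [(by omega : t.card + (s \ t).card = s.card)]

lemma core [Fintype V] [DecidableEq V] (G : SimpleGraph V) [DecidableRel G.Adj] (k : ℕ) :
    ∀ s : Finset V, ∃ t, t ⊆ s ∧ (∀ v ∈ t, k - 1 ≤ degs G t v) ∧
      (∑ v ∈ s, degs G s v) + 2 * (k - 2) * t.card
        ≤ (∑ v ∈ t, degs G t v) + 2 * (k - 2) * s.card := by
  intro s
  induction s using Finset.strongInduction with
  | _ s ih =>
  by_cases h : ∀ v ∈ s, k - 1 ≤ degs G s v
  · exact ⟨s, subset_rfl, h, le_rfl⟩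
  · push_neg at h
    obtain ⟨v, hv, hdv⟩ := h
    obtain ⟨t, hts, hdeg, hle⟩ := ih (s.erase v) (Finset.erase_ssubset hv)
    refine ⟨t, hts.trans (Finset.erase_subset v s), hdeg, ?_⟩
    have hsum := sum_degs_erase G hv
    have hc : (s.erase v).card + 1 = s.card := by
      rw [card_erase_of_mem hv]
      have : 1 ≤ s.card := Finset.card_pos.mpr ⟨v, hv⟩
      omega
    have hmul : 2 * (k - 2) * (s.erase v).card + 2 * (k - 2) = 2 * (k - 2) * s.card := by
      rw [← hc]; ring
    have hd : 2 * degs G s v ≤ 2 * (k - 2) := by omega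
    omega

lemma degs_le_induce_degree {n : ℕ} (G : SimpleGraph (Fin n)) [DecidableRel G.Adj]
    (s : Finset (Fin n)) (v : ↑(s : Set (Fin n))) :
    degs G s v.val ≤ (G.induce (s : Set (Fin n))).degree v := by
  classical
  rw [SimpleGraph.degree]
  apply Finset.card_le_card_of_injOn (fun w => if h : w ∈ s then ⟨w, h⟩ else v)
  · intro w hw
    rw [Finset.mem_coe, mem_filter] at hw
    simp only
    rw [dif_pos hw.1, Finset.mem_coe, SimpleGraph.mem_neighborFinset]
    exact hw.2
  · intro a ha b hb hab
    simp only at hab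
    rw [Finset.mem_coe, mem_filter] at ha hb
    rw [dif_pos ha.1, dif_pos hb.1] at hab
    exact congrArg Subtype.val hab


theorem stmt11 {n k : ℕ} (G : SimpleGraph (Fin n)) [DecidableRel G.Adj]
    (he : ((k : ℝ) - 1) * n - ((k : ℝ) ^ 2 - k - 1) ≤ (G.edgeFinset.card : ℝ))
    (hP : ¬ HasPathOn G (2 * k)) :
    ∃ s : Finset (Fin n), (n : ℝ) - ((k : ℝ) ^ 2 - k - 1) ≤ (s.card : ℝ) ∧
      ∀ v : ↑(s : Set (Fin n)), (k : ℝ) - 1 ≤ ((G.induce (s : Set (Fin n))).degree v : ℝ) := by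
  classical
  rcases k with _ | _ | m
  · -- k = 0 : there is trivially a path on 0 vertices
    exact absurd ⟨fun i => i.elim0, fun a => a.elim0, fun i h => absurd h (by omega)⟩ hP
  · -- k = 1 : there is an edge, giving a path on 2 vertices
    exfalso
    have hE : (1 : ℝ) ≤ (G.edgeFinset.card : ℝ) := by push_cast at he ⊢; linarith
    have hE' : 0 < G.edgeFinset.card := by
      have : 1 ≤ G.edgeFinset.card := by exact_mod_cast hE
      omega
    obtain ⟨e, hem⟩ := Finset.card_pos.mp hE'
    induction e using Sym2.ind with
    | _ u v =>
      rw [SimpleGraph.mem_edgeFinset] at hem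
      have hadj : G.Adj u v := hem
      apply hP
      refine ⟨fun j => if j.val = 0 then u else v, ?_, ?_⟩
      · intro a b hab
        have hne : u ≠ v := G.ne_of_adj hadj
        by_cases ha : a.val = 0 <;> by_cases hb : b.val = 0 <;>
          simp only [ha, hb, if_pos, if_neg, if_true, if_false] at hab <;>
          first
            | (apply Fin.ext; omega)
            | exact absurd hab hne
            | exact absurd hab.symm hne
      · intro i hi
        have hi0 : i = 0 := by omega
        subst hi0
        simp only [if_pos rfl, if_neg (by omega : ¬ (0 + 1 = 0))]
        exact hadj
  · -- k = m + 2
    obtain ⟨t, -, hdeg, hle⟩ := core G (m + 2) (univ : Finset (Fin n))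
    have hEG := EG G (by omega : 1 ≤ m + 2) hP t
    have hsumuniv : ∑ v ∈ (univ : Finset (Fin n)), degs G univ v = 2 * G.edgeFinset.card := by
      have h1 : ∀ v, degs G univ v = G.degree v := by
        intro v
        unfold degs
        rw [SimpleGraph.degree, SimpleGraph.neighborFinset_eq_filter]
      rw [Finset.sum_congr rfl (fun v _ => h1 v)]
      exact SimpleGraph.sum_degrees_eq_twice_card_edges G
    have hcu : (univ : Finset (Fin n)).card = n := by rw [card_univ, Fintype.card_fin]
    rw [hsumuniv, hcu, (by omega : m + 2 - 2 = m)] at hle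
    rw [(by omega : 2 * (m + 2) - 2 = 2 * m + 2)] at hEG
    have hler : (2 * (G.edgeFinset.card : ℝ) + 2 * m * t.card : ℝ)
        ≤ ((∑ v ∈ t, degs G t v : ℕ) : ℝ) + 2 * m * n := by exact_mod_cast hle
    have hEGr : ((∑ v ∈ t, degs G t v : ℕ) : ℝ) ≤ (2 * m + 2) * t.card := by
      exact_mod_cast hEG
    refine ⟨t, ?_, ?_⟩
    · push_cast at he ⊢
      nlinarith [hler, hEGr, he]
    · intro v
      have h1 : m + 2 - 1 ≤ degs G t v.val := hdeg v.val v.property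
      have h2 := degs_le_induce_degree G t v
      have h3 : ((m + 1 : ℕ) : ℝ) ≤ ((G.induce (t : Set (Fin n))).degree v : ℝ) := by
        exact_mod_cast le_trans (by omega : m + 1 ≤ m + 2 - 1) (le_trans h1 h2)
      push_cast at h3 ⊢
      linarith
end

section
/- Let G be a graph of order n with a dominating vertex w, and let x be a unit eigenvector of Q(G) for q(G). If q(G) > n + 2k − 3 with k ≥ 2, then the entry x_w satisfies x_w² ≤ (n−1)/((q(G) − n + 1)² + n − 1) ≤ (n−1)/(n − 1 + 4(k−1)²). -/
open Finset

theorem stmt16 {n k : ℕ} (hk : 2 ≤ k) (G : SimpleGraph (Fin n)) [DecidableRel G.Adj]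
    (w : Fin n) (hdom : ∀ v, v ≠ w → G.Adj w v) (x : Fin n → ℝ)
    (hunit : ∑ i, x i ^ 2 = 1)
    (heig : (signlessLaplacian G).mulVec x = qIndex G • x)
    (hq : (n : ℝ) + 2 * k - 3 < qIndex G) :
    x w ^ 2 ≤ ((n : ℝ) - 1) / ((qIndex G - n + 1) ^ 2 + ((n : ℝ) - 1)) ∧
      ((n : ℝ) - 1) / ((qIndex G - n + 1) ^ 2 + ((n : ℝ) - 1)) ≤
        ((n : ℝ) - 1) / ((n : ℝ) - 1 + 4 * ((k : ℝ) - 1) ^ 2) := by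
  have hn : 1 ≤ n := w.pos
  set q := qIndex G with hqdef
  -- neighborFinset of w is univ.erase w
  have hnbr : G.neighborFinset w = Finset.univ.erase w := by
    ext v
    simp only [SimpleGraph.mem_neighborFinset, Finset.mem_erase, Finset.mem_univ, and_true]
    constructor
    · intro h; exact (G.ne_of_adj h).symm
    · intro h; exact hdom v h
  have hdeg : (G.degree w : ℝ) = (n : ℝ) - 1 := by
    have : G.degree w = n - 1 := by
      rw [← SimpleGraph.card_neighborFinset_eq_degree, hnbr, Finset.card_erase_of_mem (Finset.mem_univ w), Finset.card_univ, Fintype.card_fin]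
    rw [this, Nat.cast_sub hn, Nat.cast_one]
  -- eigen equation at w
  have heigw := congrFun heig w
  have hmv : (signlessLaplacian G).mulVec x w
      = (G.degree w : ℝ) * x w + ∑ j ∈ Finset.univ.erase w, x j := by
    rw [signlessLaplacian, Matrix.add_mulVec, Pi.add_apply, Matrix.mulVec_diagonal,
      SimpleGraph.adjMatrix_mulVec_apply, hnbr]
  have h1 : (q - ((n : ℝ) - 1)) * x w = ∑ j ∈ Finset.univ.erase w, x j := by
    have : (G.degree w : ℝ) * x w + ∑ j ∈ Finset.univ.erase w, x j = q * x w := by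
      rw [← hmv, heigw]; simp
    rw [hdeg] at this; linarith
  -- Cauchy-Schwarz
  have hcs : (∑ j ∈ Finset.univ.erase w, x j) ^ 2
      ≤ ((n : ℝ) - 1) * ∑ j ∈ Finset.univ.erase w, x j ^ 2 := by
    have := sq_sum_le_card_mul_sum_sq (s := Finset.univ.erase w) (f := x)
    have hcard : ((Finset.univ.erase w).card : ℝ) = (n : ℝ) - 1 := by
      rw [Finset.card_erase_of_mem (Finset.mem_univ w), Finset.card_univ, Fintype.card_fin,
        Nat.cast_sub hn, Nat.cast_one]
    calc (∑ j ∈ Finset.univ.erase w, x j) ^ 2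
        ≤ ((Finset.univ.erase w).card : ℝ) * ∑ j ∈ Finset.univ.erase w, x j ^ 2 := this
      _ = ((n : ℝ) - 1) * ∑ j ∈ Finset.univ.erase w, x j ^ 2 := by rw [hcard]
  have hsplit : x w ^ 2 + ∑ j ∈ Finset.univ.erase w, x j ^ 2 = 1 := by
    rw [← hunit]; exact Finset.add_sum_erase _ (fun i => x i ^ 2) (Finset.mem_univ w)
  have hkey : (q - (n : ℝ) + 1) ^ 2 * x w ^ 2 ≤ ((n : ℝ) - 1) * (1 - x w ^ 2) := by
    have h2 : ((q - ((n : ℝ) - 1)) * x w) ^ 2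
        ≤ ((n : ℝ) - 1) * ∑ j ∈ Finset.univ.erase w, x j ^ 2 := by rw [h1]; exact hcs
    nlinarith [h2, hsplit]
  have hq' : 2 * ((k : ℝ) - 1) < q - (n : ℝ) + 1 := by push_cast; linarith
  have hk' : (2 : ℝ) ≤ (k : ℝ) := by exact_mod_cast hk
  have hn' : (0 : ℝ) ≤ (n : ℝ) - 1 := by
    have : (1 : ℝ) ≤ (n : ℝ) := by exact_mod_cast hn
    linarith
  have hD : 0 < (q - (n : ℝ) + 1) ^ 2 + ((n : ℝ) - 1) := by nlinarith
  have hD2 : 0 < (n : ℝ) - 1 + 4 * ((k : ℝ) - 1) ^ 2 := by nlinarith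
  constructor
  · rw [le_div_iff₀ hD]; nlinarith [hkey]
  · apply div_le_div_of_nonneg_left hn' hD2
    nlinarith
end
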